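/- arXiv:1904.10215 — 6 statements merged into one kernel-verified Lean document; each statement's English description precedes it below -/
import Mathlib

section
/- There exists a sequence S_0, S_1, …, S_n of feasible subsets of 𝒯 such that for every i ∈ {0, 1, …, n}: (1) S_i \ 𝒯_i ⊆ OPT; (2) |OPT| − |S_i| ≤ (M − 1)·|ALG_i|; and (3) S_i ∩ 𝒯_i = ALG_i. (In particular, conditions (1) and (3) together imply S_i \ ALG_i ⊆ OPT.) -/
/-!
Setting: `G` is a finite tree rooted at `r`. A family `S : Fin n → Finset V` of
vertex sets of subtrees (connected subgraphs) of `G` is given; since connected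
subgraphs of a tree are induced, a subtree is faithfully represented by its
vertex set. An *object* of the tree is a vertex or an edge. Capacities are
given by `k`, loads count the subtrees containing an object, feasibility means
no object is overloaded. The subtrees are indexed so that their roots appear
in nondecreasing order along some post-order (bottom-up) traversal of the tree,
which is encoded by an injective numbering `pos` of the vertices such that
descendants of any vertex `v` appear (contiguously) before `v`.
-/

open Finset

attribute [local instance] Classical.propDecidable

/-- An *object* of a graph on vertex type `V`: a vertex or a (potential) edge. -/
abbrev Object (V : Type) := V ⊕ Sym2 V

/-- The subtree of `G` with vertex set `s` contains the object `o`. -/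
def ContainsObj {V : Type} (G : SimpleGraph V) (s : Finset V) : Object V → Prop
  | Sum.inl v => v ∈ s
  | Sum.inr e => e ∈ G.edgeSet ∧ ∀ x ∈ e, x ∈ s

/-- The load induced by the subfamily `U` on the object `o`. -/
noncomputable def load {V : Type} {n : ℕ} (G : SimpleGraph V) (S : Fin n → Finset V)
    (U : Finset (Fin n)) (o : Object V) : ℕ :=
  (U.filter fun i => ContainsObj G (S i) o).card

/-- A subfamily of subtrees is feasible if it does not overload any object. -/
def Feasible {V : Type} {n : ℕ} (G : SimpleGraph V) (S : Fin n → Finset V)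
    (k : Object V → ℕ) (U : Finset (Fin n)) : Prop :=
  ∀ o : Object V, load G S U o ≤ k o

/-- The index set `𝒯_i` of the first `i` subtrees. -/
noncomputable def firstIdx (n i : ℕ) : Finset (Fin n) :=
  univ.filter fun j => (j : ℕ) < i

/-- `ALG_i`: the greedy solution after the first `i` subtrees have been considered. -/
noncomputable def greedy {V : Type} {n : ℕ} (G : SimpleGraph V) (S : Fin n → Finset V)
    (k : Object V → ℕ) : ℕ → Finset (Fin n)
  | 0 => ∅
  | m + 1 =>
    if h : m < n then
      if Feasible G S k (insert ⟨m, h⟩ (greedy G S k m)) then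
        insert ⟨m, h⟩ (greedy G S k m)
      else greedy G S k m
    else greedy G S k m

/-- `v` is an ancestor of `u` in the tree `G` rooted at `r`
(i.e. `v` lies on the unique `r`–`u` path). -/
def IsAnc {V : Type} (G : SimpleGraph V) (r v u : V) : Prop :=
  G.dist r u = G.dist r v + G.dist v u

/-- The number of leaves of the subtree with vertex set `s` that differ from its root `rt`. -/
noncomputable def leavesCnt {V : Type} [DecidableEq V] (G : SimpleGraph V)
    (s : Finset V) (rt : V) : ℕ :=
  (s.filter fun v => v ≠ rt ∧ (s.filter fun u => G.Adj v u).card ≤ 1).card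

set_option linter.unusedSectionVars false
set_option linter.unusedVariables false

namespace TreeAux

variable {V : Type} {G : SimpleGraph V}

lemma isPath_append {a c d : V} {p : G.Walk a c} {q : G.Walk c d}
    (hp : p.IsPath) (hq : q.IsPath)
    (h : ∀ x, x ∈ p.support → x ∈ q.support → x = c) : (p.append q).IsPath := by
  rw [SimpleGraph.Walk.isPath_def, SimpleGraph.Walk.support_append]
  apply List.Nodup.append hp.support_nodup hq.support_nodup.tail
  intro x hx hx'
  have hxq : x ∈ q.support := List.mem_of_mem_tail hx'
  have := h x hx hxq
  subst this
  have hcons : q.support = x :: q.support.tail := SimpleGraph.Walk.support_eq_cons q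
  have hnd := hq.support_nodup
  rw [hcons] at hnd
  exact (List.nodup_cons.mp hnd).1 hx'


/-- `w` lies between `u` and `v`. -/
def Btw (G : SimpleGraph V) (u w v : V) : Prop :=
  G.dist u w + G.dist w v = G.dist u v

section
variable (hT : G.IsTree)
include hT

lemma conn : G.Connected := hT.isConnected

lemma dist0 {a b : V} (h : G.dist a b = 0) : a = b :=
  (hT.isConnected.dist_eq_zero_iff).mp h

lemma path_length {u v : V} {p : G.Walk u v} (hp : p.IsPath) : p.length = G.dist u v := by
  obtain ⟨q, hq, hql⟩ := hT.isConnected.exists_path_of_dist u v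
  have : (⟨p, hp⟩ : G.Path u v) = ⟨q, hq⟩ := hT.IsAcyclic.path_unique _ _
  rw [show p = q from congrArg Subtype.val this, hql]

lemma btw_of_mem {u v w : V} {p : G.Walk u v} (hp : p.IsPath) (hw : w ∈ p.support) :
    Btw G u w v := by
  have hsplit := congrArg SimpleGraph.Walk.length (p.take_spec hw)
  rw [SimpleGraph.Walk.length_append] at hsplit
  have h1 := SimpleGraph.dist_le (p.takeUntil w hw)
  have h2 := SimpleGraph.dist_le (p.dropUntil w hw)
  have h3 := hT.isConnected.dist_triangle (u := u) (v := w) (w := v)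
  have h4 := path_length hT hp
  unfold Btw
  omega

lemma mem_of_btw {u v w : V} {p : G.Walk u v} (hp : p.IsPath) (h : Btw G u w v) :
    w ∈ p.support := by
  obtain ⟨a, ha, hal⟩ := hT.isConnected.exists_path_of_dist u w
  obtain ⟨b, hb, hbl⟩ := hT.isConnected.exists_path_of_dist w v
  have hlen : (a.append b).length = G.dist u v := by
    rw [SimpleGraph.Walk.length_append, hal, hbl]; exact h
  have hpath : (a.append b).IsPath := (a.append b).isPath_of_length_eq_dist hlen
  have : (⟨p, hp⟩ : G.Path u v) = ⟨a.append b, hpath⟩ := hT.IsAcyclic.path_unique _ _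
  rw [show p = a.append b from congrArg Subtype.val this]
  rw [SimpleGraph.Walk.mem_support_append_iff]
  exact Or.inl (SimpleGraph.Walk.end_mem_support a)

lemma btw_total {u a b x : V} (ha : Btw G u a x) (hb : Btw G u b x) :
    Btw G u a b ∨ Btw G u b a := by
  obtain ⟨p, hp, _⟩ := hT.isConnected.exists_path_of_dist u x
  have hma : a ∈ p.support := mem_of_btw hT hp ha
  have hmb : b ∈ p.support := mem_of_btw hT hp hb
  rw [← p.take_spec hmb, SimpleGraph.Walk.mem_support_append_iff] at hma
  rcases hma with hma | hma
  · exact Or.inl (btw_of_mem hT (hp.takeUntil hmb) hma)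
  · have h1 : Btw G b a x := btw_of_mem hT (hp.dropUntil hmb) hma
    have h2 := hT.isConnected.dist_triangle (u := u) (v := b) (w := a)
    unfold Btw at *
    right; omega

lemma meet (r u v : V) : ∃ w, Btw G u w v ∧ Btw G r w u ∧ Btw G r w v := by
  obtain ⟨p, hp, _⟩ := hT.isConnected.exists_path_of_dist u v
  have hne : p.support.toFinset.Nonempty :=
    ⟨u, List.mem_toFinset.mpr p.start_mem_support⟩
  obtain ⟨w, hw, hmin⟩ := p.support.toFinset.exists_min_image (G.dist r ·) hne
  rw [List.mem_toFinset] at hw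
  have hmin' : ∀ x ∈ p.support, G.dist r w ≤ G.dist r x := fun x hx =>
    hmin x (List.mem_toFinset.mpr hx)
  refine ⟨w, btw_of_mem hT hp hw, ?_, ?_⟩
  · -- Btw r w u
    obtain ⟨A, hA, hAl⟩ := hT.isConnected.exists_path_of_dist r w
    set B := (p.takeUntil w hw).reverse with hBdef
    have hB : B.IsPath := ((p.takeUntil w hw).isPath_reverse_iff).mpr (hp.takeUntil hw)
    have hpath : (A.append B).IsPath := by
      apply isPath_append hA hB
      intro x hxA hxB
      have h1 : Btw G r x w := btw_of_mem hT hA hxA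
      have h2 : x ∈ p.support := by
        have : x ∈ (p.takeUntil w hw).support := by
          rwa [hBdef, SimpleGraph.Walk.support_reverse, List.mem_reverse] at hxB
        exact p.support_takeUntil_subset hw this
      have h3 := hmin' x h2
      unfold Btw at h1
      apply dist0 hT
      omega
    have hlen := path_length hT hpath
    rw [SimpleGraph.Walk.length_append, hAl] at hlen
    have hBl : B.length = G.dist w u := by
      rw [hBdef, SimpleGraph.Walk.length_reverse]
      have := path_length hT (hp.takeUntil hw)
      rw [this, SimpleGraph.dist_comm]
    unfold Btw
    omega
  · -- Btw r w v
    obtain ⟨A, hA, hAl⟩ := hT.isConnected.exists_path_of_dist r w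
    set B := p.dropUntil w hw with hBdef
    have hB : B.IsPath := hp.dropUntil hw
    have hpath : (A.append B).IsPath := by
      apply isPath_append hA hB
      intro x hxA hxB
      have h1 : Btw G r x w := btw_of_mem hT hA hxA
      have h2 : x ∈ p.support := p.support_dropUntil_subset hw hxB
      have h3 := hmin' x h2
      unfold Btw at h1
      apply dist0 hT
      omega
    have hlen := path_length hT hpath
    rw [SimpleGraph.Walk.length_append, hAl] at hlen
    have hBl : B.length = G.dist w v := path_length hT hB
    unfold Btw
    omega

lemma adj_btw (r : V) {x y : V} (h : G.Adj x y) : Btw G r x y ∨ Btw G r y x := by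
  obtain ⟨w, h1, h2, h3⟩ := meet hT r x y
  have hd : G.dist x y = 1 := SimpleGraph.dist_eq_one_iff_adj.mpr h
  unfold Btw at h1
  rcases Nat.eq_zero_or_pos (G.dist x w) with h0 | hpos
  · have : x = w := dist0 hT h0
    subst this; exact Or.inl h3
  · have h0 : G.dist w y = 0 := by omega
    have : w = y := dist0 hT h0
    subst this; exact Or.inr h2

lemma convex {s : Finset V} (hs : (G.induce (s : Set V)).Connected)
    {u v w : V} (hu : u ∈ s) (hv : v ∈ s) (h : Btw G u w v) : w ∈ s := by
  have hr : (G.induce (s : Set V)).Reachable ⟨u, hu⟩ ⟨v, hv⟩ := hs _ _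
  obtain ⟨W₀⟩ := hr
  let W : G.Walk u v := W₀.map (SimpleGraph.Embedding.induce (s : Set V)).toHom
  have hsup : ∀ x ∈ W.support, x ∈ s := by
    intro x hx
    change x ∈ (W₀.map (SimpleGraph.Embedding.induce (s : Set V)).toHom).support at hx
    rw [SimpleGraph.Walk.support_map, List.mem_map] at hx
    obtain ⟨⟨y, hy⟩, _, rfl⟩ := hx
    exact hy
  have hw : w ∈ W.bypass.support := mem_of_btw hT W.bypass_isPath h
  exact hsup w (W.support_bypass_subset hw)

end
end TreeAux

namespace TreeAux

section Infra
variable {V : Type} {n : ℕ} {G : SimpleGraph V} {S : Fin n → Finset V} {k : Object V → ℕ}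

lemma load_mono {U W : Finset (Fin n)} (h : U ⊆ W) (o : Object V) :
    load G S U o ≤ load G S W o :=
  Finset.card_le_card (Finset.filter_subset_filter _ h)

lemma feasible_subset {U W : Finset (Fin n)} (hW : Feasible G S k W) (h : U ⊆ W) :
    Feasible G S k U := fun o => le_trans (load_mono h o) (hW o)

lemma load_insert_le {t : Fin n} {U : Finset (Fin n)} (o : Object V) :
    load G S (insert t U) o ≤ load G S U o + 1 := by
  unfold load
  rw [Finset.filter_insert]
  split_ifs
  · exact Finset.card_insert_le _ _
  · omega

lemma load_insert_of_not {t : Fin n} {U : Finset (Fin n)} {o : Object V}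
    (h : ¬ ContainsObj G (S t) o) : load G S (insert t U) o = load G S U o := by
  unfold load
  rw [Finset.filter_insert, if_neg h]

lemma load_insert_of_mem {t : Fin n} {U : Finset (Fin n)} {o : Object V}
    (h : ContainsObj G (S t) o) (ht : t ∉ U) :
    load G S (insert t U) o = load G S U o + 1 := by
  unfold load
  rw [Finset.filter_insert, if_pos h]
  exact Finset.card_insert_of_notMem (fun hc => ht (Finset.mem_filter.mp hc).1)

lemma mem_first {i : ℕ} {j : Fin n} : j ∈ firstIdx n i ↔ (j : ℕ) < i := by
  simp [firstIdx]

lemma first_zero : firstIdx n 0 = ∅ := by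
  ext j; simp [firstIdx]

lemma first_succ {i : ℕ} (hi : i < n) :
    firstIdx n (i+1) = insert (⟨i, hi⟩ : Fin n) (firstIdx n i) := by
  ext j
  simp only [mem_first, Finset.mem_insert, Fin.ext_iff]
  omega

lemma first_mono {i i' : ℕ} (h : i ≤ i') : firstIdx n i ⊆ firstIdx n i' := by
  intro j hj; rw [mem_first] at *; omega

lemma greedy_zero (G : SimpleGraph V) (S : Fin n → Finset V) (k : Object V → ℕ) :
    greedy G S k 0 = ∅ := by rw [greedy]

lemma greedy_succ (G : SimpleGraph V) (S : Fin n → Finset V) (k : Object V → ℕ) (m : ℕ) :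
    greedy G S k (m+1) = if h : m < n then
      (if Feasible G S k (insert ⟨m, h⟩ (greedy G S k m)) then
        insert ⟨m, h⟩ (greedy G S k m) else greedy G S k m)
    else greedy G S k m := by
  rw [greedy]

lemma greedy_sub (G : SimpleGraph V) (S : Fin n → Finset V) (k : Object V → ℕ) (i : ℕ) :
    greedy G S k i ⊆ firstIdx n i := by
  induction i with
  | zero => rw [first_zero]; intro j hj; simp [greedy] at hj
  | succ m ih =>
    rw [greedy_succ]
    split_ifs with h1 h2
    · intro j hj
      rcases Finset.mem_insert.mp hj with rfl | hj
      · rw [mem_first]; simp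
      · exact first_mono (Nat.le_succ m) (ih hj)
    · exact fun j hj => first_mono (Nat.le_succ m) (ih hj)
    · exact fun j hj => first_mono (Nat.le_succ m) (ih hj)

end Infra
end TreeAux

namespace TreeAux
section Geo

variable {V : Type} [Fintype V] [DecidableEq V] {G : SimpleGraph V}
  (hT : G.IsTree) (r : V) {n : ℕ} (S : Fin n → Finset V)
  (hsub : ∀ i, (G.induce (S i : Set V)).Connected)
  (rt : Fin n → V) (hrtmem : ∀ i, rt i ∈ S i)
  (hrtmin : ∀ i, ∀ v ∈ S i, G.dist r (rt i) ≤ G.dist r v)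

include hT hsub hrtmem hrtmin in
lemma rootanc (i : Fin n) {v : V} (hv : v ∈ S i) : Btw G r (rt i) v := by
  obtain ⟨w, h1, h2, h3⟩ := meet hT r (rt i) v
  have hw : w ∈ S i := convex hT (hsub i) (hrtmem i) hv h1
  have hmin := hrtmin i w hw
  unfold Btw at *
  have hwrt : w = rt i := dist0 hT (by omega)
  subst hwrt
  omega

variable (pos : V → ℕ) (hposinj : Function.Injective pos)
  (hpost : ∀ u v : V, IsAnc G r v u → pos u ≤ pos v)
  (hord : ∀ i j : Fin n, i ≤ j → pos (rt i) ≤ pos (rt j))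

include hT hsub hrtmem hrtmin hposinj hpost hord in
lemma claim1 {t j : Fin n} (htj : (t : ℕ) < (j : ℕ)) {x : V}
    (hxj : x ∈ S j) (hxt : x ∈ S t) : rt t ∈ S j := by
  have hx1 : Btw G r (rt j) x := rootanc hT r S hsub rt hrtmem hrtmin j hxj
  have hx2 : Btw G r (rt t) x := rootanc hT r S hsub rt hrtmem hrtmin t hxt
  have hle : pos (rt t) ≤ pos (rt j) := hord t j (by omega)
  rcases btw_total hT hx1 hx2 with h | h
  · -- rt j is an ancestor of rt t ; then rt t lies between rt j and x
    have hbtw : Btw G (rt j) (rt t) x := by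
      unfold Btw at *
      have htri := hT.isConnected.dist_triangle (u := rt j) (v := rt t) (w := x)
      have htri2 := hT.isConnected.dist_triangle (u := r) (v := rt j) (w := rt t)
      omega
    exact convex hT (hsub j) (hrtmem j) hxj hbtw
  · -- rt t is an ancestor of rt j; then pos equal, so rt t = rt j
    have hge : pos (rt j) ≤ pos (rt t) := hpost (rt j) (rt t) h.symm
    have : rt t = rt j := hposinj (le_antisymm hle hge)
    rw [this]; exact hrtmem j

include hT hsub hrtmem hrtmin in
lemma cover_vertex {t : Fin n} (hM1 : 1 ≤ leavesCnt G (S t) (rt t))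
    {v : V} (hv : v ∈ S t) :
    ∃ ℓ ∈ (S t).filter (fun x => x ≠ rt t ∧ ((S t).filter fun u => G.Adj x u).card ≤ 1),
      Btw G (rt t) v ℓ := by
  set Lset := (S t).filter (fun x => x ≠ rt t ∧ ((S t).filter fun u => G.Adj x u).card ≤ 1)
    with hLdef
  have hLne : Lset.Nonempty := by
    rw [← Finset.card_pos]
    have : leavesCnt G (S t) (rt t) = Lset.card := rfl
    omega
  by_cases hvrt : v = rt t
  · obtain ⟨ℓ, hℓ⟩ := hLne
    refine ⟨ℓ, hℓ, ?_⟩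
    unfold Btw
    subst hvrt
    simp
  · -- take a deepest descendant of `v` inside `S t`
    set Dv := (S t).filter (fun u => Btw G r v u) with hDdef
    have hvD : v ∈ Dv := by
      rw [hDdef, Finset.mem_filter]
      exact ⟨hv, by unfold Btw; simp⟩
    obtain ⟨ℓ, hℓD, hmax⟩ := Dv.exists_max_image (fun u => G.dist r u) ⟨v, hvD⟩
    rw [hDdef, Finset.mem_filter] at hℓD
    obtain ⟨hℓT, hvℓ⟩ := hℓD
    have hrtv : Btw G r (rt t) v := rootanc hT r S hsub rt hrtmem hrtmin t hv
    have hdvrt : G.dist (rt t) v ≠ 0 := fun h0 => hvrt (dist0 hT h0).symm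
    have hrv : G.dist r v ≤ G.dist r ℓ := hmax v hvD
    have hℓrt : ℓ ≠ rt t := by
      intro h; subst h
      unfold Btw at hrtv
      omega
    have hdeg : ((S t).filter fun u => G.Adj ℓ u).card ≤ 1 := by
      have hanc : ∀ u ∈ (S t).filter (fun u => G.Adj ℓ u), Btw G r u ℓ ∧ G.dist u ℓ = 1 := by
        intro u hu
        rw [Finset.mem_filter] at hu
        obtain ⟨huT, hadj⟩ := hu
        have hd1 : G.dist ℓ u = 1 := SimpleGraph.dist_eq_one_iff_adj.mpr hadj
        rcases adj_btw hT r hadj with h | h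
        · -- ℓ ancestor of u : contradiction with maximality
          exfalso
          have hvu : Btw G r v u := by
            unfold Btw at *
            have t1 := hT.isConnected.dist_triangle (u := v) (v := ℓ) (w := u)
            have t2 := hT.isConnected.dist_triangle (u := r) (v := v) (w := u)
            omega
          have : u ∈ Dv := by rw [hDdef, Finset.mem_filter]; exact ⟨huT, hvu⟩
          have := hmax u this
          unfold Btw at h
          omega
        · exact ⟨h, by rwa [SimpleGraph.dist_comm] at hd1⟩
      rw [Finset.card_le_one]
      intro a ha b hb
      obtain ⟨ha1, ha2⟩ := hanc a ha
      obtain ⟨hb1, hb2⟩ := hanc b hb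
      rcases btw_total hT ha1 hb1 with h | h
      · apply dist0 hT; unfold Btw at *; omega
      · exact (dist0 hT (by unfold Btw at *; omega)).symm
    refine ⟨ℓ, ?_, ?_⟩
    · rw [hLdef, Finset.mem_filter]; exact ⟨hℓT, hℓrt, hdeg⟩
    · unfold Btw at *
      have t1 := hT.isConnected.dist_triangle (u := rt t) (v := v) (w := ℓ)
      have t2 := hT.isConnected.dist_triangle (u := r) (v := rt t) (w := ℓ)
      omega


include hT hsub hrtmem hrtmin in
lemma bot_ex {t : Fin n} (o : Object V) (ho : ContainsObj G (S t) o) :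
    ∃ b : V, (∀ s : Finset V, ContainsObj G s o → b ∈ s) ∧
      (∀ s : Finset V, (G.induce (s : Set V)).Connected → rt t ∈ s → b ∈ s →
        ContainsObj G s o) := by
  have key : ∀ x y : V, G.Adj x y → x ∈ S t → y ∈ S t → Btw G r x y →
      ∃ b : V, (∀ s : Finset V, ContainsObj G s (Sum.inr s(x,y)) → b ∈ s) ∧
        (∀ s : Finset V, (G.induce (s : Set V)).Connected → rt t ∈ s → b ∈ s →
          ContainsObj G s (Sum.inr s(x,y))) := by
    intro x y hadj hx hy hbtw
    refine ⟨y, ?_, ?_⟩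
    · intro s hs
      exact hs.2 y (Sym2.mem_mk_right x y)
    · intro s hconn hrts hys
      have hrx : Btw G r (rt t) x := rootanc hT r S hsub rt hrtmem hrtmin t hx
      have hry : Btw G r (rt t) y := rootanc hT r S hsub rt hrtmem hrtmin t hy
      have hd1 : G.dist x y = 1 := SimpleGraph.dist_eq_one_iff_adj.mpr hadj
      have hbtw2 : Btw G (rt t) x y := by unfold Btw at *; omega
      have hxs : x ∈ s := convex hT hconn hrts hys hbtw2
      refine ⟨(SimpleGraph.mem_edgeSet G).mpr hadj, fun z hz => ?_⟩
      rcases Sym2.mem_iff.mp hz with rfl | rfl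
      exacts [hxs, hys]
  match o with
  | Sum.inl v =>
    exact ⟨v, fun s hs => hs, fun s _ _ hb => hb⟩
  | Sum.inr e =>
    induction e using Sym2.ind with
    | _ x y =>
      obtain ⟨he, hall⟩ := ho
      have hadj : G.Adj x y := (SimpleGraph.mem_edgeSet G).mp he
      have hx : x ∈ S t := hall x (Sym2.mem_mk_left x y)
      have hy : y ∈ S t := hall y (Sym2.mem_mk_right x y)
      rcases adj_btw hT r hadj with hbtw | hbtw
      · exact key x y hadj hx hy hbtw
      · have := key y x hadj.symm hy hx hbtw
        rw [show (s(y,x) : Sym2 V) = s(x,y) from Sym2.eq_swap] at this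
        exact this


include hT hsub hrtmem hrtmin hposinj hpost hord in
lemma step (k : Object V → ℕ) (M : ℕ)
    (hM1 : ∀ i : Fin n, 1 ≤ leavesCnt G (S i) (rt i))
    (hM : ∀ i : Fin n, leavesCnt G (S i) (rt i) ≤ M)
    (i : ℕ) (hi : i < n) (Si : Finset (Fin n))
    (hfeas : Feasible G S k Si) (hcap : Si ∩ firstIdx n i = greedy G S k i) :
    ∃ S' : Finset (Fin n), Feasible G S k S' ∧
      S' \ firstIdx n (i+1) ⊆ Si \ firstIdx n i ∧
      S' ∩ firstIdx n (i+1) = greedy G S k (i+1) ∧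
      Si.card + (M-1) * (greedy G S k i).card
        ≤ S'.card + (M-1) * (greedy G S k (i+1)).card := by
  set t : Fin n := ⟨i, hi⟩ with htdef
  set g := greedy G S k i with hgdef
  have htval : (t : ℕ) = i := rfl
  have hgsub : g ⊆ firstIdx n i := greedy_sub G S k i
  have hgSi : g ⊆ Si := by rw [← hcap]; exact Finset.inter_subset_left
  have htfirst : t ∉ firstIdx n i := by rw [mem_first]; omega
  have htfirst1 : t ∈ firstIdx n (i+1) := by rw [mem_first]; omega
  have htg : t ∉ g := fun h => htfirst (hgsub h)
  have hgsucc : greedy G S k (i+1) =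
      if Feasible G S k (insert t g) then insert t g else g := by
    rw [greedy_succ, dif_pos hi]
  by_cases hF : Feasible G S k (insert t g)
  · rw [if_pos hF] at hgsucc
    have hcard' : (insert t g).card = g.card + 1 := Finset.card_insert_of_notMem htg
    by_cases htSi : t ∈ Si
    · -- greedy accepts, and t already in Si : keep Si
      refine ⟨Si, hfeas, ?_, ?_, ?_⟩
      · intro x hx
        rw [Finset.mem_sdiff] at *
        exact ⟨hx.1, fun hc => hx.2 (first_mono (Nat.le_succ i) hc)⟩
      · rw [hgsucc]
        ext j
        rw [first_succ hi]
        simp only [Finset.mem_inter, Finset.mem_insert]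
        constructor
        · rintro ⟨hjS, rfl | hjf⟩
          · exact Or.inl rfl
          · right; rw [← hcap]; exact Finset.mem_inter.mpr ⟨hjS, hjf⟩
        · rintro (rfl | hjg)
          · exact ⟨htSi, Or.inl rfl⟩
          · rw [← hcap] at hjg
            exact ⟨(Finset.mem_inter.mp hjg).1, Or.inr (Finset.mem_inter.mp hjg).2⟩
      · rw [hgsucc, hcard']
        have : (M-1) * g.card ≤ (M-1) * (g.card + 1) :=
          Nat.mul_le_mul_left _ (Nat.le_succ _)
        omega
    · -- greedy accepts, t ∉ Si : exchange
      set R := Si \ firstIdx n i with hRdef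
      have hRidx : ∀ j ∈ R, (t : ℕ) < (j : ℕ) := by
        intro j hj
        rw [hRdef, Finset.mem_sdiff, mem_first] at hj
        have hne : (j : ℕ) ≠ i := fun h => htSi ((Fin.ext (h.trans htval.symm) : j = t) ▸ hj.1)
        omega
      -- bottoms of objects
      have hbot : ∀ o : Object V, ∃ b : V,
          ContainsObj G (S t) o →
          ((∀ s : Finset V, ContainsObj G s o → b ∈ s) ∧
           (∀ s : Finset V, (G.induce (s : Set V)).Connected → rt t ∈ s → b ∈ s →
             ContainsObj G s o)) := by
        intro o
        by_cases h : ContainsObj G (S t) o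
        · obtain ⟨b, hb⟩ := bot_ex hT r S hsub rt hrtmem hrtmin o h
          exact ⟨b, fun _ => hb⟩
        · exact ⟨rt t, fun hc => absurd hc h⟩
      choose b hb using hbot
      set Ovld := Finset.univ.filter (fun o : Object V =>
        ContainsObj G (S t) o ∧ k o < load G S (insert t Si) o) with hOdef
      have hOmem : ∀ o ∈ Ovld,
          ContainsObj G (S t) o ∧ k o < load G S (insert t Si) o :=
        fun o ho => (Finset.mem_filter.mp ho).2
      have hSiu : Si = g ∪ R := by
        rw [← hcap, hRdef]
        ext j; simp only [Finset.mem_union, Finset.mem_inter, Finset.mem_sdiff]; tauto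
      have hgRdisj : Disjoint g R := by
        rw [Finset.disjoint_left]
        intro j hjg hjR
        exact (Finset.mem_sdiff.mp hjR).2 (hgsub hjg)
      have hjR : ∀ o ∈ Ovld, ∃ j ∈ R, ContainsObj G (S j) o := by
        intro o ho
        obtain ⟨hoT, hoL⟩ := hOmem o ho
        have h1 : load G S (insert t Si) o ≤ load G S Si o + 1 := load_insert_le o
        have h2 : load G S (insert t g) o = load G S g o + 1 := load_insert_of_mem hoT htg
        have h3 : load G S (insert t g) o ≤ k o := hF o
        have h4 : load G S Si o = load G S g o + load G S R o := by
          unfold load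
          rw [hSiu, Finset.filter_union,
            Finset.card_union_of_disjoint (Finset.disjoint_filter_filter hgRdisj)]
        have h5 : 0 < load G S R o := by omega
        unfold load at h5
        obtain ⟨j, hj⟩ := Finset.card_pos.mp h5
        rw [Finset.mem_filter] at hj
        exact ⟨j, hj.1, hj.2⟩
      -- leaves
      set Lset := (S t).filter
        (fun x => x ≠ rt t ∧ ((S t).filter fun u => G.Adj x u).card ≤ 1) with hLdef
      have hLcard : Lset.card ≤ M := hM t
      have hcover : ∀ o ∈ Ovld, ∃ ℓ ∈ Lset, Btw G (rt t) (b o) ℓ := by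
        intro o ho
        have hoT := (hOmem o ho).1
        have hbT : b o ∈ S t := (hb o hoT).1 (S t) hoT
        exact cover_vertex hT r S hsub rt hrtmem hrtmin (hM1 t) hbT
      -- choice of removed trees
      have hch : ∀ ℓ : {x // x ∈ Lset}, ∃ j : Fin n,
          (∃ o ∈ Ovld, Btw G (rt t) (b o) ℓ.1) →
          (j ∈ R ∧ ∀ o ∈ Ovld, Btw G (rt t) (b o) ℓ.1 → ContainsObj G (S j) o) := by
        rintro ⟨ℓ, hℓ⟩
        by_cases hne : ∃ o ∈ Ovld, Btw G (rt t) (b o) ℓ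
        case neg => exact ⟨t, fun h => absurd h hne⟩
        obtain ⟨om, hom, hommax⟩ :=
          (Ovld.filter (fun o => Btw G (rt t) (b o) ℓ)).exists_max_image
            (fun o => G.dist (rt t) (b o))
            (by obtain ⟨o, ho1, ho2⟩ := hne
                exact ⟨o, Finset.mem_filter.mpr ⟨ho1, ho2⟩⟩)
        rw [Finset.mem_filter] at hom
        obtain ⟨homO, homB⟩ := hom
        obtain ⟨j, hjR', hjC⟩ := hjR om homO
        refine ⟨j, fun _ => ⟨hjR', ?_⟩⟩
        intro o hoO hoB
        have homT := (hOmem om homO).1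
        have hoT := (hOmem o hoO).1
        have hbmj : b om ∈ S j := (hb om homT).1 (S j) hjC
        have hbmt : b om ∈ S t := (hb om homT).1 (S t) homT
        have hrtj : rt t ∈ S j :=
          claim1 hT r S hsub rt hrtmem hrtmin pos hposinj hpost hord
            (hRidx j hjR') hbmj hbmt
        have hmax' : G.dist (rt t) (b o) ≤ G.dist (rt t) (b om) :=
          hommax o (Finset.mem_filter.mpr ⟨hoO, hoB⟩)
        have hbtw : Btw G (rt t) (b o) (b om) := by
          rcases btw_total hT hoB homB with h | h
          · exact h
          · have h0 : G.dist (b om) (b o) = 0 := by unfold Btw at *; omega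
            have heq : b om = b o := dist0 hT h0
            rw [heq]
            unfold Btw
            simp
        have hboj : b o ∈ S j := convex hT (hsub j) hrtj hbmj hbtw
        exact (hb o hoT).2 (S j) (hsub j) hrtj hboj
      choose f hf using hch
      set D := (Lset.attach.filter
        (fun ℓ => ∃ o ∈ Ovld, Btw G (rt t) (b o) ℓ.1)).image f with hDdef
      have hDR : D ⊆ R := by
        intro j hj
        rw [hDdef, Finset.mem_image] at hj
        obtain ⟨ℓ, hmem, rfl⟩ := hj
        exact (hf ℓ (Finset.mem_filter.mp hmem).2).1
      have hDSi : D ⊆ Si := fun j hj => (Finset.mem_sdiff.mp (hDR hj)).1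
      have hDcov : ∀ o ∈ Ovld, ∃ j ∈ D, ContainsObj G (S j) o := by
        intro o ho
        obtain ⟨ℓ, hℓL, hℓB⟩ := hcover o ho
        have hguard : ∃ o' ∈ Ovld, Btw G (rt t) (b o') ℓ := ⟨o, ho, hℓB⟩
        refine ⟨f ⟨ℓ, hℓL⟩, ?_, (hf ⟨ℓ, hℓL⟩ hguard).2 o ho hℓB⟩
        rw [hDdef, Finset.mem_image]
        exact ⟨⟨ℓ, hℓL⟩, Finset.mem_filter.mpr ⟨Finset.mem_attach _ _, hguard⟩, rfl⟩
      have hDcard : D.card ≤ M := by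
        have h1 : D.card ≤ Lset.attach.card :=
          le_trans Finset.card_image_le (Finset.card_le_card (Finset.filter_subset _ _))
        rw [Finset.card_attach] at h1
        exact le_trans h1 hLcard
      set S' := insert t (Si \ D) with hS'def
      have htnotin : t ∉ Si \ D := fun h => htSi (Finset.mem_sdiff.mp h).1
      refine ⟨S', ?_, ?_, ?_, ?_⟩
      · -- Feasible
        intro o
        by_cases ho : o ∈ Ovld
        · obtain ⟨j, hjD, hjC⟩ := hDcov o ho
          have hjSi : j ∈ Si := hDSi hjD
          have hjf : j ∈ Si.filter (fun j => ContainsObj G (S j) o) :=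
            Finset.mem_filter.mpr ⟨hjSi, hjC⟩
          have hsub2 : (Si \ D).filter (fun j => ContainsObj G (S j) o) ⊆
              (Si.filter (fun j => ContainsObj G (S j) o)).erase j := by
            intro x hx
            rw [Finset.mem_filter, Finset.mem_sdiff] at hx
            exact Finset.mem_erase.mpr
              ⟨fun hc => hx.1.2 (hc ▸ hjD), Finset.mem_filter.mpr ⟨hx.1.1, hx.2⟩⟩
          have h5 : load G S (Si \ D) o + 1 ≤ load G S Si o := by
            have hle := Finset.card_le_card hsub2
            rw [Finset.card_erase_of_mem hjf] at hle
            have hpos : 0 < (Si.filter (fun j => ContainsObj G (S j) o)).card :=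
              Finset.card_pos.mpr ⟨j, hjf⟩
            unfold load
            omega
          calc load G S S' o ≤ load G S (Si \ D) o + 1 := load_insert_le o
            _ ≤ load G S Si o := h5
            _ ≤ k o := hfeas o
        · rw [hOdef, Finset.mem_filter] at ho
          push_neg at ho
          by_cases hoT : ContainsObj G (S t) o
          · have hko : load G S (insert t Si) o ≤ k o := ho (Finset.mem_univ o) hoT
            calc load G S S' o ≤ load G S (insert t Si) o :=
                  load_mono (Finset.insert_subset_insert _ Finset.sdiff_subset) o
              _ ≤ k o := hko
          · calc load G S S' o = load G S (Si \ D) o := load_insert_of_not hoT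
              _ ≤ load G S Si o := load_mono Finset.sdiff_subset o
              _ ≤ k o := hfeas o
      · -- new minus firstIdx decreases
        intro x hx
        rw [Finset.mem_sdiff] at hx
        obtain ⟨hx1, hx2⟩ := hx
        rcases Finset.mem_insert.mp hx1 with rfl | hx1
        · exact absurd htfirst1 hx2
        · rw [Finset.mem_sdiff]
          exact ⟨(Finset.mem_sdiff.mp hx1).1,
            fun hc => hx2 (first_mono (Nat.le_succ i) hc)⟩
      · -- intersection with firstIdx
        rw [hgsucc]
        ext j
        rw [first_succ hi]
        simp only [hS'def, Finset.mem_inter, Finset.mem_insert, Finset.mem_sdiff]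
        constructor
        · rintro ⟨rfl | ⟨hjS, hjD⟩, h2⟩
          · exact Or.inl rfl
          · rcases h2 with rfl | hjf
            · exact Or.inl rfl
            · right; rw [← hcap]; exact Finset.mem_inter.mpr ⟨hjS, hjf⟩
        · rintro (rfl | hjg)
          · exact ⟨Or.inl rfl, Or.inl rfl⟩
          · refine ⟨Or.inr ⟨hgSi hjg, fun hc => ?_⟩, Or.inr (hgsub hjg)⟩
            exact (Finset.mem_sdiff.mp (hDR hc)).2 (hgsub hjg)
      · -- cardinality
        have h1 : S'.card = (Si \ D).card + 1 := Finset.card_insert_of_notMem htnotin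
        have h2 : (Si \ D).card = Si.card - D.card := Finset.card_sdiff_of_subset hDSi
        have h2' : D.card ≤ Si.card := Finset.card_le_card hDSi
        have hM1t : 1 ≤ M := le_trans (hM1 t) (hM t)
        rw [hgsucc, hcard']
        have h3 : (M-1) * (g.card + 1) = (M-1) * g.card + (M-1) := by ring
        omega
  · -- greedy rejects
    rw [if_neg hF] at hgsucc
    have htSi : t ∉ Si := by
      intro h
      apply hF
      apply feasible_subset hfeas
      intro x hx
      rcases Finset.mem_insert.mp hx with rfl | hx
      · exact h
      · exact hgSi hx
    refine ⟨Si, hfeas, ?_, ?_, ?_⟩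
    · intro x hx
      rw [Finset.mem_sdiff] at *
      exact ⟨hx.1, fun hc => hx.2 (first_mono (Nat.le_succ i) hc)⟩
    · rw [hgsucc]
      ext j
      rw [first_succ hi]
      simp only [Finset.mem_inter, Finset.mem_insert]
      constructor
      · rintro ⟨hjS, rfl | hjf⟩
        · exact absurd hjS htSi
        · rw [← hcap]; exact Finset.mem_inter.mpr ⟨hjS, hjf⟩
      · intro hjg
        rw [← hcap] at hjg
        exact ⟨(Finset.mem_inter.mp hjg).1, Or.inr (Finset.mem_inter.mp hjg).2⟩
    · rw [hgsucc]

end Geo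
end TreeAux


/-- **Lemma (sequence `S_0, …, S_n`).** There is a sequence of feasible subsets `Sq i`
with `Sq i \ 𝒯_i ⊆ OPT`, `|OPT| - |Sq i| ≤ (M-1)·|ALG_i|` and `Sq i ∩ 𝒯_i = ALG_i`. -/
theorem statement0
    {V : Type} [Fintype V] [DecidableEq V] (G : SimpleGraph V)
    (hTree : G.IsTree) (r : V)
    {n : ℕ} (S : Fin n → Finset V)
    -- each `S i` is (the vertex set of) a subtree, i.e. a connected subgraph of `G`
    (hsub : ∀ i, (G.induce (S i : Set V)).Connected)
    -- `rt i` is the vertex of the subtree `S i` closest to the root `r`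
    (rt : Fin n → V) (hrtmem : ∀ i, rt i ∈ S i)
    (hrtmin : ∀ i, ∀ v ∈ S i, G.dist r (rt i) ≤ G.dist r v)
    -- `pos` is a post-order (bottom-up) traversal of the tree ...
    (pos : V → ℕ) (hposinj : Function.Injective pos)
    (hpost : ∀ u v : V, IsAnc G r v u → pos u ≤ pos v)
    (hcontig : ∀ u x v : V, IsAnc G r v u → pos u ≤ pos x → pos x ≤ pos v → IsAnc G r v x)
    -- ... along which the roots of the subtrees appear in nondecreasing order
    (hord : ∀ i j : Fin n, i ≤ j → pos (rt i) ≤ pos (rt j))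
    (k : Object V → ℕ)
    -- every subtree has at least one leaf other than its root, and `M` bounds these numbers
    (M : ℕ) (hM1 : ∀ i, 1 ≤ leavesCnt G (S i) (rt i))
    (hM : ∀ i, leavesCnt G (S i) (rt i) ≤ M)
    -- `OPT` is a feasible subset of maximum cardinality
    (OPT : Finset (Fin n)) (hOPTfeas : Feasible G S k OPT)
    (hOPTmax : ∀ U : Finset (Fin n), Feasible G S k U → U.card ≤ OPT.card) :
    ∃ Sq : ℕ → Finset (Fin n),
      (∀ i ≤ n, Feasible G S k (Sq i)) ∧
      (∀ i ≤ n, Sq i \ firstIdx n i ⊆ OPT) ∧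
      (∀ i ≤ n, OPT.card - (Sq i).card ≤ (M - 1) * (greedy G S k i).card) ∧
      (∀ i ≤ n, Sq i ∩ firstIdx n i = greedy G S k i) := by
  have main : ∀ i, i ≤ n → ∃ s : Finset (Fin n),
      Feasible G S k s ∧ s \ firstIdx n i ⊆ OPT ∧
      OPT.card - s.card ≤ (M-1) * (greedy G S k i).card ∧
      s ∩ firstIdx n i = greedy G S k i := by
    intro i
    induction i with
    | zero =>
      intro _
      refine ⟨OPT, hOPTfeas, ?_, ?_, ?_⟩
      · rw [TreeAux.first_zero, Finset.sdiff_empty]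
      · rw [TreeAux.greedy_zero]
        simp
      · rw [TreeAux.first_zero, TreeAux.greedy_zero, Finset.inter_empty]
    | succ i ih =>
      intro hsn
      have hi : i < n := hsn
      obtain ⟨s, h1, h2, h3, h4⟩ := ih (Nat.le_of_succ_le hsn)
      obtain ⟨s', f1, f2, f3, f4⟩ :=
        TreeAux.step hTree r S hsub rt hrtmem hrtmin pos hposinj hpost hord
          k M hM1 hM i hi s h1 h4
      refine ⟨s', f1, fun x hx => h2 (f2 hx), ?_, f3⟩
      rw [Nat.sub_le_iff_le_add]
      calc OPT.card ≤ (M-1) * (greedy G S k i).card + s.card :=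
            Nat.sub_le_iff_le_add.mp h3
        _ = s.card + (M-1) * (greedy G S k i).card := Nat.add_comm _ _
        _ ≤ s'.card + (M-1) * (greedy G S k (i+1)).card := f4
        _ = (M-1) * (greedy G S k (i+1)).card + s'.card := Nat.add_comm _ _
  refine ⟨fun i => if h : i ≤ n then (main i h).choose else ∅, ?_, ?_, ?_, ?_⟩ <;>
    intro i hi <;> simp only [dif_pos hi]
  · exact (main i hi).choose_spec.1
  · exact (main i hi).choose_spec.2.1
  · exact (main i hi).choose_spec.2.2.1
  · exact (main i hi).choose_spec.2.2.2
end

section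
/- The greedy solution satisfies |OPT| ≤ M·|ALG|; that is, the bottom-up greedy algorithm is an M-approximation for the problem of finding a maximum-cardinality feasible subset of 𝒯. -/
/-!
Setting: `G` is a finite tree rooted at `r`. A family `S : Fin n → Finset V` of
vertex sets of subtrees (connected subgraphs) of `G` is given; since connected
subgraphs of a tree are induced, a subtree is faithfully represented by its
vertex set. An *object* of the tree is a vertex or an edge. Capacities are
given by `k`, loads count the subtrees containing an object, feasibility means
no object is overloaded. The subtrees are indexed so that their roots appear
in nondecreasing order along some post-order (bottom-up) traversal of the tree,
which is encoded by an injective numbering `pos` of the vertices such that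
descendants of any vertex `v` appear (contiguously) before `v`.
-/

open Finset

attribute [local instance] Classical.propDecidable

namespace Stmt1
open SimpleGraph
set_option linter.unusedSectionVars false
set_option linter.unusedVariables false
set_option linter.unreachableTactic false
set_option linter.unusedTactic false

variable {V : Type} [DecidableEq V] {G : SimpleGraph V} {r : V} {n : ℕ}
  {S : Fin n → Finset V} {k : Object V → ℕ}

lemma isPath_length_eq (hT : G.IsTree) {a b : V} {p : G.Walk a b} (hp : p.IsPath) :
    p.length = G.dist a b := by
  obtain ⟨q, hq, hlen⟩ := hT.isConnected.exists_path_of_dist a b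
  rw [(hT.existsUnique_path a b).unique hp hq, hlen]

lemma mem_path_iff (hT : G.IsTree) {a b : V} {p : G.Walk a b} (hp : p.IsPath) (x : V) :
    x ∈ p.support ↔ G.dist a b = G.dist a x + G.dist x b := by
  constructor
  · intro hx
    have hsp := p.take_spec hx
    have hlen : (p.takeUntil x hx).length + (p.dropUntil x hx).length = p.length := by
      conv_rhs => rw [← hsp]
      rw [SimpleGraph.Walk.length_append]
    have h1 := SimpleGraph.dist_le (p.takeUntil x hx)
    have h2 := SimpleGraph.dist_le (p.dropUntil x hx)
    have h3 := hT.isConnected.dist_triangle (u := a) (v := x) (w := b)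
    have h4 := isPath_length_eq hT hp
    omega
  · intro hd
    obtain ⟨w1, hw1⟩ := hT.isConnected.exists_walk_length_eq_dist a x
    obtain ⟨w2, hw2⟩ := hT.isConnected.exists_walk_length_eq_dist x b
    have hlen : (w1.append w2).length = G.dist a b := by
      rw [SimpleGraph.Walk.length_append, hw1, hw2, hd]
    have hq : (w1.append w2).IsPath := (w1.append w2).isPath_of_length_eq_dist hlen
    have := (hT.existsUnique_path a b).unique hp hq
    rw [this, SimpleGraph.Walk.mem_support_append_iff]
    exact Or.inl w1.end_mem_support

lemma anc_refl (v : V) : IsAnc G r v v := by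
  unfold IsAnc; rw [SimpleGraph.dist_self, Nat.add_zero]

lemma anc_dist (h : IsAnc G r v u) : G.dist r u = G.dist r v + G.dist v u := h

lemma anc_trans (hc : G.Connected) {w v u : V} (h1 : IsAnc G r v u) (h2 : IsAnc G r w v) :
    IsAnc G r w u := by
  have t1 := hc.dist_triangle (u := r) (v := w) (w := u)
  have t2 := hc.dist_triangle (u := w) (v := v) (w := u)
  have t3 := hc.dist_triangle (u := r) (v := v) (w := u)
  unfold IsAnc at *
  omega

lemma anc_antisymm (hc : G.Connected) {v u : V} (h1 : IsAnc G r v u) (h2 : IsAnc G r u v) :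
    u = v := by
  unfold IsAnc at *
  have hcomm : G.dist u v = G.dist v u := SimpleGraph.dist_comm
  have : G.dist v u = 0 := by omega
  exact (hc.dist_eq_zero_iff.mp this).symm

lemma anc_dist_le {v u : V} (h : IsAnc G r v u) : G.dist r v ≤ G.dist r u := by
  unfold IsAnc at h; omega

lemma anc_total (hT : G.IsTree) {v w u : V} (h1 : IsAnc G r v u) (h2 : IsAnc G r w u) :
    IsAnc G r v w ∨ IsAnc G r w v := by
  obtain ⟨p, hp, hlen⟩ := hT.isConnected.exists_path_of_dist r u
  have hv : v ∈ p.support := (mem_path_iff hT hp v).mpr h1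
  have hw : w ∈ p.support := (mem_path_iff hT hp w).mpr h2
  have hsp := p.take_spec hv
  have : w ∈ (p.takeUntil v hv).support ∨ w ∈ (p.dropUntil v hv).support := by
    rw [← SimpleGraph.Walk.mem_support_append_iff, hsp]; exact hw
  rcases this with h | h
  · right
    exact (mem_path_iff hT (hp.takeUntil hv) w).mp h
  · left
    have hd := (mem_path_iff hT (hp.dropUntil hv) w).mp h
    have t1 := hT.isConnected.dist_triangle (u := r) (v := v) (w := w)
    have t2 := hT.isConnected.dist_triangle (u := r) (v := w) (w := u)
    unfold IsAnc at *
    omega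

lemma anc_adj (hT : G.IsTree) {x y : V} (h : G.Adj x y) :
    IsAnc G r x y ∨ IsAnc G r y x := by
  obtain ⟨p, hp, hlen⟩ := hT.isConnected.exists_path_of_dist r x
  by_cases hy : y ∈ p.support
  · exact Or.inr ((mem_path_iff hT hp y).mp hy)
  · left
    have hq : (SimpleGraph.Walk.cons h.symm p.reverse).IsPath := by
      refine hp.reverse.cons ?_
      rwa [SimpleGraph.Walk.support_reverse, List.mem_reverse]
    have hq' : (SimpleGraph.Walk.cons h.symm p.reverse).reverse.IsPath := hq.reverse
    have hx : x ∈ (SimpleGraph.Walk.cons h.symm p.reverse).reverse.support := by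
      rw [SimpleGraph.Walk.support_reverse, List.mem_reverse]
      simp
    exact (mem_path_iff hT hq' x).mp hx

lemma anc_of_dist_le (hT : G.IsTree) {v w u : V} (h1 : IsAnc G r v u) (h2 : IsAnc G r w u)
    (hle : G.dist r v ≤ G.dist r w) : IsAnc G r v w := by
  rcases anc_total hT h1 h2 with h | h
  · exact h
  · have := anc_dist_le h
    have heq : G.dist r v = G.dist r w := le_antisymm hle this
    unfold IsAnc at *
    have : G.dist w v = 0 := by omega
    have := hT.isConnected.dist_eq_zero_iff.mp this
    subst this
    exact anc_refl _

lemma adj_dist_one {x y : V} (h : G.Adj x y) : G.dist x y = 1 :=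
  SimpleGraph.dist_eq_one_iff_adj.mpr h

lemma parent_unique (hT : G.IsTree) {w y1 y2 : V} (a1 : G.Adj y1 w) (a2 : G.Adj y2 w)
    (h1 : IsAnc G r y1 w) (h2 : IsAnc G r y2 w) : y1 = y2 := by
  have d1 : G.dist y1 w = 1 := adj_dist_one a1
  have d2 : G.dist y2 w = 1 := adj_dist_one a2
  rcases anc_total hT h1 h2 with h | h <;>
  · unfold IsAnc at *
    have hdc : G.dist y1 y2 = G.dist y2 y1 := SimpleGraph.dist_comm
    have : G.dist y1 y2 = 0 := by omega
    have := hT.isConnected.dist_eq_zero_iff.mp this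
    exact this


lemma walk_in {s : Finset V} (hcon : (G.induce (s : Set V)).Connected)
    {a b : V} (ha : a ∈ s) (hb : b ∈ s) :
    ∃ w : G.Walk a b, ∀ x ∈ w.support, x ∈ s := by
  obtain ⟨q⟩ := hcon ⟨a, by simpa using ha⟩ ⟨b, by simpa using hb⟩
  have key : ∀ {x y : (↑(s : Set V) : Type)} (_ : (G.induce (s : Set V)).Walk x y),
      ∃ w : G.Walk x.1 y.1, ∀ z ∈ w.support, z ∈ s := by
    intro x y q
    induction q with
    | nil =>
      rename_i u
      exact ⟨SimpleGraph.Walk.nil, by rintro z hz; simp at hz; subst hz; exact u.2⟩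
    | cons h q ih =>
      rename_i u v w
      obtain ⟨w', hw'⟩ := ih
      refine ⟨SimpleGraph.Walk.cons (show G.Adj u.1 v.1 from h) w', ?_⟩
      intro z hz
      rw [SimpleGraph.Walk.support_cons, List.mem_cons] at hz
      rcases hz with rfl | hz
      · exact u.2
      · exact hw' z hz
  exact key q

lemma path_subset (hT : G.IsTree) {s : Finset V} (hcon : (G.induce (s : Set V)).Connected)
    {a b : V} (ha : a ∈ s) (hb : b ∈ s) {p : G.Walk a b} (hp : p.IsPath) :
    ∀ x ∈ p.support, x ∈ s := by
  obtain ⟨w, hw⟩ := walk_in hcon ha hb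
  have : p = w.bypass := (hT.existsUnique_path a b).unique hp w.bypass_isPath
  rw [this]
  intro x hx
  exact hw x (w.support_bypass_subset hx)

lemma root_anc (hT : G.IsTree) {s : Finset V} (hcon : (G.induce (s : Set V)).Connected)
    {m : V} (hm : m ∈ s) (hmin : ∀ v ∈ s, G.dist r m ≤ G.dist r v)
    {v : V} (hv : v ∈ s) : IsAnc G r m v := by
  obtain ⟨q⟩ := hcon ⟨m, by simpa using hm⟩ ⟨v, by simpa using hv⟩
  have key : ∀ {x y : (↑(s : Set V) : Type)} (_ : (G.induce (s : Set V)).Walk x y),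
      IsAnc G r m x.1 → IsAnc G r m y.1 := by
    intro x y q
    induction q with
    | nil => exact id
    | cons h q ih =>
      rename_i u v' w'
      intro hu
      apply ih
      have hadj : G.Adj u.1 v'.1 := h
      rcases anc_adj (r := r) hT hadj with h1 | h1
      · exact anc_trans hT.isConnected h1 hu
      · exact anc_of_dist_le hT hu h1 (hmin v'.1 v'.2)
  exact key q (anc_refl m)

lemma between_mem (hT : G.IsTree) {s : Finset V} (hcon : (G.induce (s : Set V)).Connected)
    {B rt' x : V} (hB : B ∈ s) (hrt : rt' ∈ s)
    (h1 : IsAnc G r rt' x) (h2 : IsAnc G r x B) (h3 : IsAnc G r rt' B) : x ∈ s := by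
  obtain ⟨p, hp, _⟩ := hT.isConnected.exists_path_of_dist B rt'
  have hd : G.dist B rt' = G.dist B x + G.dist x rt' := by
    have c1 : G.dist x B = G.dist B x := SimpleGraph.dist_comm
    have c2 : G.dist rt' x = G.dist x rt' := SimpleGraph.dist_comm
    have c3 : G.dist rt' B = G.dist B rt' := SimpleGraph.dist_comm
    unfold IsAnc at *
    omega
  have hx : x ∈ p.support := (mem_path_iff hT hp x).mpr hd
  exact path_subset hT hcon hB hrt hp x hx


/-- equal ancestors at equal depth coincide -/
lemma anc_eq_of_dist_eq (hc : G.Connected) {v u : V} (h : IsAnc G r v u)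
    (hd : G.dist r v = G.dist r u) : v = u := by
  unfold IsAnc at h
  have : G.dist v u = 0 := by omega
  exact hc.dist_eq_zero_iff.mp this

lemma anc_dist_lt (hc : G.Connected) {v u : V} (h : IsAnc G r v u) (hne : v ≠ u) :
    G.dist r v < G.dist r u := by
  have hle := anc_dist_le h
  rcases lt_or_eq_of_le hle with h' | h'
  · exact h'
  · exact absurd (anc_eq_of_dist_eq hc h h') hne

noncomputable def botE (G : SimpleGraph V) (r : V) (e : Sym2 V) : V :=
  if G.dist r e.out.1 ≤ G.dist r e.out.2 then e.out.2 else e.out.1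

noncomputable def topE (G : SimpleGraph V) (r : V) (e : Sym2 V) : V :=
  if G.dist r e.out.1 ≤ G.dist r e.out.2 then e.out.1 else e.out.2

lemma e_out_mk (e : Sym2 V) : s(e.out.1, e.out.2) = e := by
  rw [Sym2.mk]
  exact e.out_eq

lemma mk_top_bot (e : Sym2 V) : s(topE G r e, botE G r e) = e := by
  unfold topE botE
  split
  · exact e_out_mk e
  · rw [Sym2.eq_swap]; exact e_out_mk e

lemma mem_e_iff {e : Sym2 V} {x : V} : x ∈ e ↔ x = topE G r e ∨ x = botE G r e := by
  conv_lhs => rw [← mk_top_bot (G := G) (r := r) e]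
  exact Sym2.mem_iff

lemma adj_top_bot {e : Sym2 V} (he : e ∈ G.edgeSet) : G.Adj (topE G r e) (botE G r e) := by
  rw [← mk_top_bot (G := G) (r := r) e] at he
  exact he

lemma dist_top_le_bot (e : Sym2 V) : G.dist r (topE G r e) ≤ G.dist r (botE G r e) := by
  unfold topE botE
  split
  · assumption
  · omega

lemma anc_top_bot (hT : G.IsTree) {e : Sym2 V} (he : e ∈ G.edgeSet) :
    IsAnc G r (topE G r e) (botE G r e) := by
  have hadj := adj_top_bot (r := r) he
  rcases anc_adj (r := r) hT hadj with h | h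
  · exact h
  · have h1 := anc_dist_le h
    have h2 := dist_top_le_bot (G := G) (r := r) e
    have := anc_eq_of_dist_eq hT.isConnected h (le_antisymm h1 h2)
    rw [this] at h ⊢
    exact anc_refl _

/-- the lower endpoint of an object -/
noncomputable def obot (G : SimpleGraph V) (r : V) : Object V → V
  | Sum.inl v => v
  | Sum.inr e => botE G r e

noncomputable def otop (G : SimpleGraph V) (r : V) : Object V → V
  | Sum.inl v => v
  | Sum.inr e => topE G r e

/-- well-formedness of an object -/
def OWf (G : SimpleGraph V) : Object V → Prop
  | Sum.inl _ => True
  | Sum.inr e => e ∈ G.edgeSet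

noncomputable def orank (G : SimpleGraph V) (r : V) : Object V → ℕ
  | Sum.inl v => 2 * G.dist r v + 1
  | Sum.inr e => 2 * G.dist r (botE G r e)

lemma containsObj_owf {s : Finset V} {o : Object V} (h : ContainsObj G s o) : OWf G o := by
  cases o with
  | inl v => trivial
  | inr e => exact h.1

lemma containsObj_bot_mem {s : Finset V} {o : Object V} (h : ContainsObj G s o) :
    obot G r o ∈ s := by
  cases o with
  | inl v => exact h
  | inr e => exact h.2 _ (mem_e_iff.mpr (Or.inr rfl))

lemma containsObj_top_mem {s : Finset V} {o : Object V} (h : ContainsObj G s o) :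
    otop G r o ∈ s := by
  cases o with
  | inl v => exact h
  | inr e => exact h.2 _ (mem_e_iff.mpr (Or.inl rfl))

lemma containsObj_of {s : Finset V} {o : Object V} (hw : OWf G o)
    (hb : obot G r o ∈ s) (ht : otop G r o ∈ s) : ContainsObj G s o := by
  cases o with
  | inl v => exact hb
  | inr e =>
    refine ⟨hw, fun x hx => ?_⟩
    rcases (mem_e_iff (G := G) (r := r)).mp hx with h | h
    · rw [h]; exact ht
    · rw [h]; exact hb

lemma anc_otop_obot (hT : G.IsTree) {o : Object V} (hw : OWf G o) :
    IsAnc G r (otop G r o) (obot G r o) := by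
  cases o with
  | inl v => exact anc_refl v
  | inr e => exact anc_top_bot hT hw

lemma orank_lb {o : Object V} : 2 * G.dist r (obot G r o) ≤ orank G r o := by
  cases o <;> simp [orank, obot] <;> omega

lemma orank_ub {o : Object V} : orank G r o ≤ 2 * G.dist r (obot G r o) + 1 := by
  cases o <;> simp [orank, obot]

/-- the deepest vertex of `s` below `v` -/
noncomputable def descendLeaf (G : SimpleGraph V) (r : V) (s : Finset V) (v : V) : V :=
  if h : (s.filter (fun w => IsAnc G r v w)).Nonempty then
    Classical.choose (Finset.exists_max_image _ (fun w => G.dist r w) h)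
  else r

lemma descendLeaf_spec (G : SimpleGraph V) (r : V) (s : Finset V) {v : V} (hv : v ∈ s) :
    descendLeaf G r s v ∈ s ∧ IsAnc G r v (descendLeaf G r s v) ∧
      ∀ w ∈ s, IsAnc G r v w → G.dist r w ≤ G.dist r (descendLeaf G r s v) := by
  have hne : (s.filter (fun w => IsAnc G r v w)).Nonempty :=
    ⟨v, Finset.mem_filter.mpr ⟨hv, anc_refl v⟩⟩
  rw [descendLeaf, dif_pos hne]
  obtain ⟨hmem, hmax⟩ :=
    Classical.choose_spec (Finset.exists_max_image _ (fun w => G.dist r w) hne)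
  rw [Finset.mem_filter] at hmem
  exact ⟨hmem.1, hmem.2, fun w hw haw => hmax w (Finset.mem_filter.mpr ⟨hw, haw⟩)⟩

/-- the descend-leaf is a genuine leaf distinct from the root -/
lemma descendLeaf_leaf (hT : G.IsTree) {s : Finset V} (hcon : (G.induce (s : Set V)).Connected)
    {rt0 : V} (hrtmem : rt0 ∈ s) (hrtmin : ∀ v ∈ s, G.dist r rt0 ≤ G.dist r v)
    {v : V} (hv : v ∈ s) (hex : ∃ x ∈ s, x ≠ rt0) :
    descendLeaf G r s v ≠ rt0 ∧ (s.filter (fun u => G.Adj (descendLeaf G r s v) u)).card ≤ 1 := by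
  obtain ⟨hLmem, hLanc, hLmax⟩ := descendLeaf_spec G r s hv
  set L := descendLeaf G r s v with hL
  constructor
  · -- L ≠ rt0 : show dist r L > dist r rt0
    obtain ⟨x, hxs, hxne⟩ := hex
    have hxanc : IsAnc G r rt0 x := root_anc hT hcon hrtmem hrtmin hxs
    have hxgt : G.dist r rt0 < G.dist r x := anc_dist_lt hT.isConnected hxanc (Ne.symm hxne)
    by_cases hveq : v = rt0
    · subst hveq
      have := hLmax x hxs hxanc
      intro hcon'
      rw [hcon'] at this
      omega
    · have hvanc : IsAnc G r rt0 v := root_anc hT hcon hrtmem hrtmin hv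
      have hvd : G.dist r rt0 < G.dist r v := anc_dist_lt hT.isConnected hvanc (fun h => hveq h.symm)
      have := anc_dist_le hLanc
      intro hcon'
      rw [hcon'] at this
      omega
  · rw [Finset.card_le_one]
    intro a ha b hb
    rw [Finset.mem_filter] at ha hb
    have key : ∀ c ∈ s, G.Adj L c → IsAnc G r c L := by
      intro c hcs hadj
      rcases anc_adj (r := r) hT hadj with h | h
      · -- L anc c : c strictly deeper descendant of v: contradicts maximality
        exfalso
        have hcne : L ≠ c := hadj.ne
        have h1 : G.dist r L < G.dist r c := anc_dist_lt hT.isConnected h hcne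
        have h2 : IsAnc G r v c := anc_trans hT.isConnected h hLanc
        have := hLmax c hcs h2
        omega
      · exact h
    exact parent_unique hT ha.2.symm hb.2.symm (key a ha.1 ha.2) (key b hb.1 hb.2)


lemma load_mono {U W : Finset (Fin n)} (h : U ⊆ W) (o : Object V) :
    load G S U o ≤ load G S W o :=
  Finset.card_le_card (Finset.filter_subset_filter _ h)

lemma load_insert_le (U : Finset (Fin n)) (i : Fin n) (o : Object V) :
    load G S (insert i U) o ≤ load G S U o + 1 := by
  unfold load
  rw [Finset.filter_insert]
  split
  · exact le_trans (Finset.card_insert_le _ _) (by omega)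
  · omega

lemma load_insert_not {U : Finset (Fin n)} {i : Fin n} {o : Object V}
    (h : ¬ ContainsObj G (S i) o) : load G S (insert i U) o = load G S U o := by
  unfold load
  rw [Finset.filter_insert, if_neg h]

lemma greedy_lt {m : ℕ} {j : Fin n} (h : j ∈ greedy G S k m) : (j : ℕ) < m := by
  induction m with
  | zero => simp [greedy] at h
  | succ m ih =>
    rw [greedy] at h
    split at h
    · split at h
      · rw [Finset.mem_insert] at h
        rcases h with rfl | h
        · exact Nat.lt_succ_self m
        · exact Nat.lt_succ_of_lt (ih h)
      · exact Nat.lt_succ_of_lt (ih h)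
    · exact Nat.lt_succ_of_lt (ih h)

lemma greedy_mono {m m' : ℕ} (h : m ≤ m') : greedy G S k m ⊆ greedy G S k m' := by
  induction m' with
  | zero => rw [Nat.le_zero.mp h]
  | succ m' ih =>
    rcases Nat.lt_or_ge m (m' + 1) with h' | h'
    · have hsub := ih (by omega)
      intro j hj
      rw [greedy]
      split
      · split
        · exact Finset.mem_insert_of_mem (hsub hj)
        · exact hsub hj
      · exact hsub hj
    · have : m = m' + 1 := by omega
      rw [this]

lemma greedy_mem_of_lt {m m' : ℕ} {j : Fin n} (hj : j ∈ greedy G S k m') (h : (j : ℕ) < m) :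
    j ∈ greedy G S k m := by
  rcases Nat.le_total m' m with hle | hle
  · exact greedy_mono hle hj
  · induction m' with
    | zero => simp [greedy] at hj
    | succ m'' ih =>
      rcases Nat.lt_or_ge (j : ℕ) m'' with h' | h'
      · rw [greedy] at hj
        have : j ∈ greedy G S k m'' := by
          split at hj
          · split at hj
            · rw [Finset.mem_insert] at hj
              rcases hj with rfl | hj
              · simp at h'
              · exact hj
            · exact hj
          · exact hj
        rcases Nat.le_total m'' m with a | a
        · exact greedy_mono a this
        · exact ih this a
      · -- j.1 ≥ m'' and j.1 < m ≤ m''+1 so j.1 = m'' and m = m''+1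
        have hm : m = m'' + 1 := by omega
        rw [hm]
        exact hj

lemma greedy_feasible (m : ℕ) : Feasible G S k (greedy G S k m) := by
  induction m with
  | zero =>
    intro o
    simp [greedy, load]
  | succ m ih =>
    rw [greedy]
    split
    · split
      · assumption
      · exact ih
    · exact ih

lemma greedy_reject {i : Fin n} (h : i ∉ greedy G S k n) :
    ∃ o : Object V, ContainsObj G (S i) o ∧ k o ≤ load G S (greedy G S k (i : ℕ)) o := by
  have hfi : ¬ Feasible G S k (insert ⟨(i : ℕ), i.isLt⟩ (greedy G S k (i : ℕ))) := by
    intro hf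
    apply h
    have : i ∈ greedy G S k ((i : ℕ) + 1) := by
      rw [greedy, dif_pos i.isLt, if_pos hf]
      exact Finset.mem_insert_self _ _
    exact greedy_mono i.isLt this
  rw [Feasible] at hfi
  push_neg at hfi
  obtain ⟨o, ho⟩ := hfi
  refine ⟨o, ?_, ?_⟩
  · by_contra hc
    rw [load_insert_not (by simpa using hc)] at ho
    exact absurd (greedy_feasible (G := G) (S := S) (k := k) (i : ℕ) o) (by omega)
  · have := load_insert_le (G := G) (S := S) (greedy G S k (i : ℕ)) ⟨(i : ℕ), i.isLt⟩ o
    omega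

/-- all greedy trees through a tight object come before the rejection time -/
lemma tight_lt {i : Fin n} {o : Object V} (ho : k o ≤ load G S (greedy G S k (i : ℕ)) o) :
    ∀ j ∈ greedy G S k n, ContainsObj G (S j) o → (j : ℕ) < (i : ℕ) := by
  intro j hj hjo
  set A := (greedy G S k (i : ℕ)).filter (fun j' => ContainsObj G (S j') o) with hA
  set B := (greedy G S k n).filter (fun j' => ContainsObj G (S j') o) with hB
  have hsub : A ⊆ B := Finset.filter_subset_filter _ (greedy_mono i.isLt.le)
  have hcard : B.card ≤ A.card := by
    have h1 : B.card ≤ k o := greedy_feasible (G := G) n o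
    exact le_trans h1 ho
  have heq : A = B := Finset.eq_of_subset_of_card_le hsub hcard
  have : j ∈ A := by
    rw [heq, hB]
    exact Finset.mem_filter.mpr ⟨hj, hjo⟩
  exact greedy_lt (Finset.mem_filter.mp this).1


section Main

variable (hTree : G.IsTree) (rt : Fin n → V)
  (hsub : ∀ i, (G.induce ((S i : Finset V) : Set V)).Connected)
  (hrtmem : ∀ i, rt i ∈ S i)
  (hrtmin : ∀ i, ∀ v ∈ S i, G.dist r (rt i) ≤ G.dist r v)
  (pos : V → ℕ) (hposinj : Function.Injective pos)
  (hpost : ∀ u v : V, IsAnc G r v u → pos u ≤ pos v)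
  (hord : ∀ i j : Fin n, i ≤ j → pos (rt i) ≤ pos (rt j))

include hTree rt hsub hrtmem hrtmin pos hposinj hpost hord

/-- an earlier tree cannot contain a strict ancestor of the root of a later tree -/
lemma gp {j i : Fin n} (hlt : (j : ℕ) < (i : ℕ)) {v : V} (hv : v ∈ S j)
    (hanc : IsAnc G r v (rt i)) (hne : v ≠ rt i) : False := by
  have h1 : IsAnc G r (rt j) v := root_anc hTree (hsub j) (hrtmem j) (hrtmin j) hv
  have h2 : IsAnc G r (rt j) (rt i) := anc_trans hTree.isConnected hanc h1
  have h3 : pos (rt i) ≤ pos (rt j) := hpost _ _ h2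
  have h4 : pos (rt j) ≤ pos (rt i) := hord j i (Fin.le_def.mpr hlt.le)
  have h5 : rt j = rt i := hposinj (le_antisymm h4 h3)
  rw [← h5] at hanc
  exact hne (by rw [← h5]; exact (anc_antisymm hTree.isConnected hanc h1).symm)

/-- roots of comparable earlier trees sharing a vertex -/
lemma rootcmp {j i : Fin n} (hlt : (j : ℕ) < (i : ℕ)) {b : V} (hbj : b ∈ S j) (hbi : b ∈ S i) :
    IsAnc G r (rt i) (rt j) := by
  have h1 : IsAnc G r (rt j) b := root_anc hTree (hsub j) (hrtmem j) (hrtmin j) hbj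
  have h2 : IsAnc G r (rt i) b := root_anc hTree (hsub i) (hrtmem i) (hrtmin i) hbi
  rcases anc_total hTree h2 h1 with h | h
  · exact h
  · have h3 : pos (rt i) ≤ pos (rt j) := hpost _ _ h
    have h4 : pos (rt j) ≤ pos (rt i) := hord j i (by omega)
    have h5 : rt j = rt i := hposinj (le_antisymm h4 h3)
    rw [h5]
    exact anc_refl _

variable (k)

/-- the collision analysis -/
lemma collision {i i'' j : Fin n} {o o'' : Object V}
    (hCo : ContainsObj G (S i) o) (hko : k o ≤ load G S (greedy G S k (i : ℕ)) o)
    (homin : ∀ o' : Object V, ContainsObj G (S i) o' →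
      k o' ≤ load G S (greedy G S k (i : ℕ)) o' → orank G r o ≤ orank G r o')
    (hCo'' : ContainsObj G (S i'') o'') (hko'' : k o'' ≤ load G S (greedy G S k ((i'' : ℕ))) o'')
    (homin'' : ∀ o' : Object V, ContainsObj G (S i'') o' →
      k o' ≤ load G S (greedy G S k ((i'' : ℕ))) o' → orank G r o'' ≤ orank G r o')
    (hlt : (i'' : ℕ) < (i : ℕ)) (hne : o ≠ o'')
    (hj : j ∈ greedy G S k n) (hjo : ContainsObj G (S j) o) (hjo'' : ContainsObj G (S j) o'')
    (hleaf : descendLeaf G r (S j) (obot G r o) = descendLeaf G r (S j) (obot G r o'')) :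
    ContainsObj G (S i'') o := by
  have hconn := hTree.isConnected
  have hb1j : obot G r o ∈ S j := containsObj_bot_mem hjo
  have hb2j : obot G r o'' ∈ S j := containsObj_bot_mem hjo''
  have ht1j : otop G r o ∈ S j := containsObj_top_mem hjo
  have ht2j : otop G r o'' ∈ S j := containsObj_top_mem hjo''
  have hwo : OWf G o := containsObj_owf hCo
  have hwo'' : OWf G o'' := containsObj_owf hCo''
  have anc1 : IsAnc G r (obot G r o) (descendLeaf G r (S j) (obot G r o)) :=
    (descendLeaf_spec G r (S j) hb1j).2.1
  have anc2 : IsAnc G r (obot G r o'') (descendLeaf G r (S j) (obot G r o)) := by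
    rw [hleaf]
    exact (descendLeaf_spec G r (S j) hb2j).2.1
  rcases anc_total hTree anc1 anc2 with hBB | hBB
  · -- Case B : obot o is an ancestor of obot o'' ⇒ o is contained in S i''
    have jlt'' : (j : ℕ) < (i'' : ℕ) := tight_lt hko'' j hj hjo''
    have hb2i : obot G r o'' ∈ S i'' := containsObj_bot_mem hCo''
    have hrtcmp : IsAnc G r (rt i'') (rt j) :=
      rootcmp hTree rt hsub hrtmem hrtmin pos hposinj hpost hord jlt'' hb2j hb2i
    have hmem : ∀ x ∈ S j, IsAnc G r x (obot G r o'') → x ∈ S i'' := by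
      intro x hxj hxanc
      have h1 : IsAnc G r (rt i'') x :=
        anc_trans hconn (root_anc hTree (hsub j) (hrtmem j) (hrtmin j) hxj) hrtcmp
      exact between_mem hTree (hsub i'') hb2i (hrtmem i'') h1 hxanc
        (root_anc hTree (hsub i'') (hrtmem i'') (hrtmin i'') hb2i)
    exact containsObj_of hwo (hmem _ hb1j hBB)
      (hmem _ ht1j (anc_trans hconn hBB (anc_otop_obot hTree hwo)))
  · -- Case A : obot o'' is an ancestor of obot o ⇒ contradiction
    exfalso
    have jlt : (j : ℕ) < (i : ℕ) := tight_lt hko j hj hjo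
    have hb1i : obot G r o ∈ S i := containsObj_bot_mem hCo
    have hrtcmp : IsAnc G r (rt i) (rt j) :=
      rootcmp hTree rt hsub hrtmem hrtmin pos hposinj hpost hord jlt hb1j hb1i
    have hmem : ∀ x ∈ S j, IsAnc G r x (obot G r o) → x ∈ S i := by
      intro x hxj hxanc
      have h1 : IsAnc G r (rt i) x :=
        anc_trans hconn (root_anc hTree (hsub j) (hrtmem j) (hrtmin j) hxj) hrtcmp
      exact between_mem hTree (hsub i) hb1i (hrtmem i) h1 hxanc
        (root_anc hTree (hsub i) (hrtmem i) (hrtmin i) hb1i)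
    have hCo''i : ContainsObj G (S i) o'' :=
      containsObj_of hwo'' (hmem _ hb2j hBB)
        (hmem _ ht2j (anc_trans hconn hBB (anc_otop_obot hTree hwo'')))
    have hko''i : k o'' ≤ load G S (greedy G S k (i : ℕ)) o'' :=
      le_trans hko'' (load_mono (greedy_mono hlt.le) o'')
    have hrank : orank G r o ≤ orank G r o'' := homin o'' hCo''i hko''i
    by_cases hbb : obot G r o'' = obot G r o
    · -- equal bottoms : shape analysis
      cases o with
      | inl v =>
        cases o'' with
        | inl v'' =>
          exact hne (by rw [show v = v'' from hbb.symm])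
        | inr e'' =>
          have h1 : orank G r (Sum.inl v : Object V) = 2 * G.dist r v + 1 := rfl
          have h2 : orank G r (Sum.inr e'' : Object V) = 2 * G.dist r (botE G r e'') := rfl
          have h3 : botE G r e'' = v := hbb
          rw [h1, h2, h3] at hrank
          omega
      | inr e =>
        cases o'' with
        | inl v'' =>
          -- special mixed case: o is an edge, o'' is its bottom vertex
          have hveq : v'' = botE G r e := hbb
          have hEedge : e ∈ G.edgeSet := hwo
          have hall : ∀ j' ∈ greedy G S k n, ContainsObj G (S j') (Sum.inr e : Object V) →
              (j' : ℕ) < (i'' : ℕ) := by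
            intro j' hj' hj'o
            have hbmem' : v'' ∈ S j' := by
              rw [hveq]
              exact containsObj_bot_mem hj'o
            exact tight_lt hko'' j' hj' hbmem'
          have hload : k (Sum.inr e : Object V) ≤
              load G S (greedy G S k ((i'' : ℕ))) (Sum.inr e : Object V) := by
            have hsubF : (greedy G S k n).filter
                  (fun j' => ContainsObj G (S j') (Sum.inr e : Object V)) ⊆
                (greedy G S k ((i'' : ℕ))).filter
                  (fun j' => ContainsObj G (S j') (Sum.inr e : Object V)) := by
              intro j' hj'
              rw [Finset.mem_filter] at hj' ⊢
              exact ⟨greedy_mem_of_lt hj'.1 (hall j' hj'.1 hj'.2), hj'.2⟩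
            have hc1 : load G S (greedy G S k n) (Sum.inr e : Object V) ≤
                load G S (greedy G S k ((i'' : ℕ))) (Sum.inr e : Object V) :=
              Finset.card_le_card hsubF
            have hc2 : load G S (greedy G S k ((i : ℕ))) (Sum.inr e : Object V) ≤
                load G S (greedy G S k n) (Sum.inr e : Object V) :=
              load_mono (greedy_mono i.isLt.le) _
            exact le_trans hko (le_trans hc2 hc1)
          have hbmem'' : v'' ∈ S i'' := hCo''
          have hpbanc : IsAnc G r (topE G r e) v'' := by
            rw [hveq]; exact anc_top_bot hTree hEedge
          have hpbadj : G.Adj (topE G r e) v'' := by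
            rw [hveq]; exact adj_top_bot hEedge
          by_cases hpb : topE G r e ∈ S i''
          · have hCei'' : ContainsObj G (S i'') (Sum.inr e : Object V) := by
              refine containsObj_of hwo ?_ hpb
              show botE G r e ∈ S i''
              rw [← hveq]; exact hbmem''
            have hqq := homin'' (Sum.inr e : Object V) hCei'' hload
            have h1 : orank G r (Sum.inl v'' : Object V) = 2 * G.dist r v'' + 1 := rfl
            have h2 : orank G r (Sum.inr e : Object V) = 2 * G.dist r (botE G r e) := rfl
            rw [h1, h2, ← hveq] at hqq
            omega
          · have hrtb : IsAnc G r (rt i'') v'' :=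
              root_anc hTree (hsub i'') (hrtmem i'') (hrtmin i'') hbmem''
            by_cases hbrt : v'' = rt i''
            · have jlt2 : (j : ℕ) < (i'' : ℕ) := hall j hj hjo
              have hTej : topE G r e ∈ S j := ht1j
              refine gp hTree rt hsub hrtmem hrtmin pos hposinj hpost hord jlt2 hTej ?_ ?_
              · rw [← hbrt]; exact hpbanc
              · rw [← hbrt]; exact hpbadj.ne
            · rcases anc_total hTree hpbanc hrtb with h | h
              · have hd1 : G.dist r v'' = G.dist r (topE G r e) + 1 := by
                  have hh := hpbanc
                  unfold IsAnc at hh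
                  rw [adj_dist_one hpbadj] at hh
                  exact hh
                have hd2 : G.dist r (topE G r e) ≤ G.dist r (rt i'') := anc_dist_le h
                have hd3 : G.dist r (rt i'') ≤ G.dist r v'' := anc_dist_le hrtb
                have hcases : G.dist r (rt i'') = G.dist r (topE G r e) ∨
                    G.dist r (rt i'') = G.dist r v'' := by omega
                rcases hcases with hd | hd
                · have : topE G r e = rt i'' := anc_eq_of_dist_eq hconn h hd.symm
                  rw [this] at hpb
                  exact hpb (hrtmem i'')
                · exact hbrt (anc_eq_of_dist_eq hconn hrtb hd).symm
              · exact hpb (between_mem hTree (hsub i'') hbmem'' (hrtmem i'') h hpbanc hrtb)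
        | inr e'' =>
          have hb : botE G r e = botE G r e'' := hbb.symm
          have ht : topE G r e = topE G r e'' := by
            refine parent_unique hTree (adj_top_bot hwo) ?_ (anc_top_bot hTree hwo) ?_
            · rw [hb]; exact adj_top_bot hwo''
            · rw [hb]; exact anc_top_bot hTree hwo''
          refine hne ?_
          have : e = e'' := by
            rw [← mk_top_bot (G := G) (r := r) e, ← mk_top_bot (G := G) (r := r) e'', ht, hb]
          rw [this]
    · -- strict ancestor: rank contradiction
      have hdlt : G.dist r (obot G r o'') < G.dist r (obot G r o) := anc_dist_lt hconn hBB hbb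
      have h1 := orank_ub (G := G) (r := r) (o := o'')
      have h2 := orank_lb (G := G) (r := r) (o := o)
      omega

end Main

end Stmt1

/-- **Theorem (M-approximation).** The bottom-up greedy algorithm satisfies
`|OPT| ≤ M · |ALG|`, i.e. it is an `M`-approximation for the problem of finding a
maximum-cardinality feasible subset of the given subtrees. -/
theorem statement1
    {V : Type} [Fintype V] [DecidableEq V] (G : SimpleGraph V)
    (hTree : G.IsTree) (r : V)
    {n : ℕ} (S : Fin n → Finset V)
    -- each `S i` is (the vertex set of) a subtree, i.e. a connected subgraph of `G`
    (hsub : ∀ i, (G.induce (S i : Set V)).Connected)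
    -- `rt i` is the vertex of the subtree `S i` closest to the root `r`
    (rt : Fin n → V) (hrtmem : ∀ i, rt i ∈ S i)
    (hrtmin : ∀ i, ∀ v ∈ S i, G.dist r (rt i) ≤ G.dist r v)
    -- `pos` is a post-order (bottom-up) traversal of the tree ...
    (pos : V → ℕ) (hposinj : Function.Injective pos)
    (hpost : ∀ u v : V, IsAnc G r v u → pos u ≤ pos v)
    (hcontig : ∀ u x v : V, IsAnc G r v u → pos u ≤ pos x → pos x ≤ pos v → IsAnc G r v x)
    -- ... along which the roots of the subtrees appear in nondecreasing order
    (hord : ∀ i j : Fin n, i ≤ j → pos (rt i) ≤ pos (rt j))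
    (k : Object V → ℕ)
    -- every subtree has at least one leaf other than its root, and `M` bounds these numbers
    (M : ℕ) (hM1 : ∀ i, 1 ≤ leavesCnt G (S i) (rt i))
    (hM : ∀ i, leavesCnt G (S i) (rt i) ≤ M)
    -- `OPT` is a feasible subset of maximum cardinality
    (OPT : Finset (Fin n)) (hOPTfeas : Feasible G S k OPT)
    (hOPTmax : ∀ U : Finset (Fin n), Feasible G S k U → U.card ≤ OPT.card) :
    OPT.card ≤ M * (greedy G S k n).card := by
  classical
  rcases Nat.eq_zero_or_pos n with hn0 | hn0
  · subst hn0
    have : OPT = ∅ := Finset.eq_empty_of_forall_notMem (fun x _ => (Nat.not_lt_zero _ x.isLt).elim)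
    simp [this]
  have hM0 : 1 ≤ M := le_trans (hM1 ⟨0, hn0⟩) (hM ⟨0, hn0⟩)
  set ALG := greedy G S k n with hALG
  have hALGfeas : Feasible G S k ALG := Stmt1.greedy_feasible n
  -- selection of a minimal-rank tight object for each rejected index
  have hsel : ∀ i : Fin n, ∃ o : Object V, i ∉ ALG →
      (ContainsObj G (S i) o ∧ k o ≤ load G S (greedy G S k (i : ℕ)) o) ∧
      (∀ o' : Object V, ContainsObj G (S i) o' → k o' ≤ load G S (greedy G S k (i : ℕ)) o' →
        Stmt1.orank G r o ≤ Stmt1.orank G r o') := by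
    intro i
    by_cases hi : i ∉ ALG
    · obtain ⟨o0, ho0⟩ := Stmt1.greedy_reject hi
      set TF : Finset (Object V) := Finset.univ.filter
        (fun o => ContainsObj G (S i) o ∧ k o ≤ load G S (greedy G S k (i : ℕ)) o) with hTF
      have hne : TF.Nonempty := ⟨o0, Finset.mem_filter.mpr ⟨Finset.mem_univ _, ho0⟩⟩
      obtain ⟨o, homem, homin⟩ := Finset.exists_min_image TF (Stmt1.orank G r) hne
      rw [hTF, Finset.mem_filter] at homem
      refine ⟨o, fun _ => ⟨homem.2, fun o' h1 h2 => ?_⟩⟩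
      exact homin o' (Finset.mem_filter.mpr ⟨Finset.mem_univ _, h1, h2⟩)
    · exact ⟨Sum.inl r, fun h => absurd h (by simpa using hi)⟩
  choose oSel hoSel using hsel
  set R := OPT \ ALG with hR
  -- the predicate describing a valid assigned pair
  set Pg : Fin n × V → Fin n → Prop := fun p T =>
    p.1 ∈ ALG ∧ p.1 ∉ OPT ∧ ContainsObj G (S p.1) (oSel T) ∧
      p.2 = Stmt1.descendLeaf G r (S p.1) (Stmt1.obot G r (oSel T)) with hPg
  have main : ∀ m : ℕ, ∃ g : Fin n → Fin n × V,
      Set.InjOn g (R.filter (fun j : Fin n => (j : ℕ) < m)) ∧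
      ∀ T ∈ R.filter (fun j : Fin n => (j : ℕ) < m), Pg (g T) T := by
    intro m
    induction m with
    | zero =>
      refine ⟨fun _ => (⟨0, hn0⟩, r), ?_, ?_⟩
      · have : R.filter (fun j : Fin n => (j : ℕ) < 0) = ∅ := by
          apply Finset.filter_false_of_mem; intro x _; omega
        rw [this]; simp [Set.InjOn]
      · intro T hT
        rw [Finset.mem_filter] at hT
        omega
    | succ m ih =>
      obtain ⟨g, hginj, hgP⟩ := ih
      by_cases hm : ∃ hmn : m < n, (⟨m, hmn⟩ : Fin n) ∈ R
      · obtain ⟨hmn, hTR⟩ := hm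
        have hfeq : R.filter (fun j : Fin n => (j : ℕ) < m + 1) =
            insert (⟨m, hmn⟩ : Fin n) (R.filter (fun j : Fin n => (j : ℕ) < m)) := by
          have hval : ((⟨m, hmn⟩ : Fin n) : ℕ) = m := rfl
          ext j
          rw [Finset.mem_insert, Finset.mem_filter, Finset.mem_filter]
          constructor
          · rintro ⟨hjR, hjlt⟩
            rcases Nat.lt_or_ge (j : ℕ) m with h | h
            · exact Or.inr ⟨hjR, h⟩
            · exact Or.inl (Fin.ext (show (j : ℕ) = m by omega))
          · rintro (rfl | ⟨hjR, hjlt⟩)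
            · exact ⟨hTR, by omega⟩
            · exact ⟨hjR, by omega⟩
        set T : Fin n := ⟨m, hmn⟩ with hTdef
        have hvalT : (T : ℕ) = m := rfl
        have hTO : T ∈ OPT := (Finset.mem_sdiff.mp hTR).1
        have hTA : T ∉ ALG := (Finset.mem_sdiff.mp hTR).2
        obtain ⟨⟨hCo, hko⟩, homin⟩ := hoSel T hTA
        set o := oSel T with ho
        set Ao := ALG.filter (fun j => ContainsObj G (S j) o) with hAo
        set A := Ao \ OPT with hA2
        set Pairs := A.image
          (fun j => (j, Stmt1.descendLeaf G r (S j) (Stmt1.obot G r o))) with hPairs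
        set Oo := OPT.filter (fun j => ContainsObj G (S j) o) with hOo
        have hcAo : Ao.card = k o := by
          refine le_antisymm (hALGfeas o) ?_
          calc k o ≤ load G S (greedy G S k (T : ℕ)) o := hko
            _ ≤ load G S ALG o := Stmt1.load_mono (Stmt1.greedy_mono (le_of_lt T.isLt)) o
        have hcP : Pairs.card = A.card := by
          rw [hPairs]
          apply Finset.card_image_of_injOn
          intro a _ b _ hab
          exact (Prod.mk.injEq _ _ _ _).mp hab |>.1
        have hOoK : Oo.card ≤ k o := hOPTfeas o
        have hTOo : T ∈ Oo \ ALG := by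
          rw [Finset.mem_sdiff, hOo, Finset.mem_filter]
          exact ⟨⟨hTO, hCo⟩, hTA⟩
        have hfree : ∃ p ∈ Pairs, ∀ T'' ∈ R.filter (fun j : Fin n => (j : ℕ) < m), g T'' ≠ p := by
          by_contra hcon
          push_neg at hcon
          have hmapsto : ∀ p ∈ Pairs, ∃ T'', T'' ∈ (Oo \ ALG).erase T ∧ g T'' = p := by
            intro p hp
            obtain ⟨T'', hT''mem, hgT''⟩ := hcon p hp
            have hT''R : T'' ∈ R := (Finset.mem_filter.mp hT''mem).1
            have hT''lt : (T'' : ℕ) < m := (Finset.mem_filter.mp hT''mem).2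
            obtain ⟨hT''O, hT''A⟩ := Finset.mem_sdiff.mp hT''R
            obtain ⟨⟨hCo'', hko''⟩, homin''⟩ := hoSel T'' hT''A
            obtain ⟨j, hjA2, hpj⟩ := Finset.mem_image.mp hp
            obtain ⟨hjAo, hjO⟩ := Finset.mem_sdiff.mp hjA2
            obtain ⟨hjALG, hjo⟩ := Finset.mem_filter.mp hjAo
            have hPgT'' := hgP T'' hT''mem
            rw [hgT'', ← hpj] at hPgT''
            obtain ⟨_, _, hjo'', hleaf''⟩ := hPgT''
            have hcontain : ContainsObj G (S T'') o := by
              by_cases hoo : o = oSel T''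
              · rw [hoo]; exact hCo''
              · exact Stmt1.collision k hTree rt hsub hrtmem hrtmin pos hposinj hpost hord
                  hCo hko homin hCo'' hko'' homin'' (by omega) hoo hjALG hjo hjo''
                  (by rw [← hleaf''])
            refine ⟨T'', ?_, hgT''⟩
            rw [Finset.mem_erase, Finset.mem_sdiff, hOo, Finset.mem_filter]
            refine ⟨?_, ⟨hT''O, hcontain⟩, hT''A⟩
            intro hEq
            rw [hEq] at hT''lt
            omega
          -- injectivity: card Pairs ≤ card ((Oo \ ALG).erase T)
          have hinj : Pairs.card ≤ ((Oo \ ALG).erase T).card := by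
            apply Finset.card_le_card_of_injOn
              (fun p => if hp : p ∈ Pairs then Classical.choose (hmapsto p hp) else T)
            · intro p hp
              rw [Finset.mem_coe] at hp ⊢
              simp only [dif_pos hp]
              exact (Classical.choose_spec (hmapsto p hp)).1
            · intro p1 hp1 p2 hp2 heq
              rw [Finset.mem_coe] at hp1 hp2
              simp only [dif_pos hp1, dif_pos hp2] at heq
              have e1 := (Classical.choose_spec (hmapsto p1 hp1)).2
              have e2 := (Classical.choose_spec (hmapsto p2 hp2)).2
              rw [← e1, ← e2, heq]
          -- cardinality contradiction
          have hsdc : (Oo \ ALG).card + (Oo ∩ ALG).card = Oo.card :=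
            Finset.card_sdiff_add_card_inter _ _
          have hAc : A.card + (Ao ∩ OPT).card = Ao.card :=
            Finset.card_sdiff_add_card_inter _ _
          have hseteq : Oo ∩ ALG = Ao ∩ OPT := by
            ext j
            rw [Finset.mem_inter, Finset.mem_inter, hOo, hAo, Finset.mem_filter,
              Finset.mem_filter]
            tauto
          have herase : ((Oo \ ALG).erase T).card + 1 = (Oo \ ALG).card :=
            Finset.card_erase_add_one hTOo
          rw [hseteq] at hsdc
          omega
        obtain ⟨p, hpP, hpfree⟩ := hfree
        refine ⟨Function.update g T p, ?_, ?_⟩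
        · intro a ha b hb hab
          rw [Finset.mem_coe, hfeq, Finset.mem_insert] at ha hb
          rcases ha with rfl | ha <;> rcases hb with rfl | hb
          · rfl
          · exfalso
            rw [Function.update_self] at hab
            have hbne : b ≠ T := by
              intro hEq
              rw [hEq] at hb
              have := (Finset.mem_filter.mp hb).2
              omega
            rw [Function.update_of_ne hbne] at hab
            exact hpfree b hb hab.symm
          · exfalso
            rw [Function.update_self] at hab
            have hane : a ≠ T := by
              intro hEq
              rw [hEq] at ha
              have := (Finset.mem_filter.mp ha).2
              omega
            rw [Function.update_of_ne hane] at hab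
            exact hpfree a ha hab
          · have hane : a ≠ T := by
              intro hEq
              rw [hEq] at ha
              have := (Finset.mem_filter.mp ha).2
              omega
            have hbne : b ≠ T := by
              intro hEq
              rw [hEq] at hb
              have := (Finset.mem_filter.mp hb).2
              omega
            rw [Function.update_of_ne hane, Function.update_of_ne hbne] at hab
            exact hginj (Finset.mem_coe.mpr ha) (Finset.mem_coe.mpr hb) hab
        · intro T' hT'
          rw [hfeq, Finset.mem_insert] at hT'
          rcases hT' with rfl | hT'
          · rw [Function.update_self]
            obtain ⟨j, hjA2, hpj⟩ := Finset.mem_image.mp hpP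
            obtain ⟨hjAo, hjO⟩ := Finset.mem_sdiff.mp hjA2
            obtain ⟨hjALG, hjo⟩ := Finset.mem_filter.mp hjAo
            rw [← hpj]
            exact ⟨hjALG, hjO, hjo, rfl⟩
          · have hne' : T' ≠ T := by
              intro hEq
              rw [hEq] at hT'
              have := (Finset.mem_filter.mp hT').2
              omega
            rw [Function.update_of_ne hne']
            exact hgP T' hT'
      · -- no new rejected tree at index m
        have hfeq : R.filter (fun j : Fin n => (j : ℕ) < m + 1) = R.filter (fun j : Fin n => (j : ℕ) < m) := by
          ext j
          rw [Finset.mem_filter, Finset.mem_filter]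
          constructor
          · rintro ⟨hjR, hjlt⟩
            refine ⟨hjR, ?_⟩
            rcases Nat.lt_or_ge (j : ℕ) m with h | h
            · exact h
            · exfalso
              have hje : j = ⟨m, by omega⟩ := Fin.ext (show (j : ℕ) = m by omega)
              exact hm ⟨by omega, hje ▸ hjR⟩
          · rintro ⟨hjR, hjlt⟩
            exact ⟨hjR, by omega⟩
        rw [hfeq]
        exact ⟨g, hginj, hgP⟩
  -- conclude
  obtain ⟨g, hginj, hgP⟩ := main n
  have hRfil : R.filter (fun j : Fin n => (j : ℕ) < n) = R :=
    Finset.filter_true_of_mem (fun j _ => j.isLt)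
  rw [hRfil] at hginj hgP
  set B := (ALG \ OPT).biUnion (fun j =>
    ((S j).filter (fun v => v ≠ rt j ∧ ((S j).filter (fun u => G.Adj v u)).card ≤ 1)).image
      (fun l => (j, l))) with hB
  have himg : ∀ T ∈ R, g T ∈ B := by
    intro T hT
    obtain ⟨hj1, hj2, hj3, hj4⟩ := hgP T hT
    rw [hB, Finset.mem_biUnion]
    refine ⟨(g T).1, Finset.mem_sdiff.mpr ⟨hj1, hj2⟩, ?_⟩
    rw [Finset.mem_image]
    refine ⟨(g T).2, ?_, rfl⟩
    rw [hj4]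
    have hex : ∃ x ∈ S (g T).1, x ≠ rt (g T).1 := by
      have h1 := hM1 (g T).1
      unfold leavesCnt at h1
      obtain ⟨x, hx⟩ := Finset.card_pos.mp h1
      rw [Finset.mem_filter] at hx
      exact ⟨x, hx.1, hx.2.1⟩
    obtain ⟨h1, h2⟩ := Stmt1.descendLeaf_leaf hTree (hsub _) (hrtmem _) (hrtmin _)
      (Stmt1.containsObj_bot_mem hj3) hex
    rw [Finset.mem_filter]
    exact ⟨(Stmt1.descendLeaf_spec G r _ (Stmt1.containsObj_bot_mem hj3)).1, h1, h2⟩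
  have hcard1 : R.card ≤ B.card := Finset.card_le_card_of_injOn g himg hginj
  have hcard2 : B.card ≤ M * (ALG \ OPT).card := by
    rw [hB]
    refine le_trans Finset.card_biUnion_le ?_
    calc ∑ j ∈ ALG \ OPT, (((S j).filter
          (fun v => v ≠ rt j ∧ ((S j).filter (fun u => G.Adj v u)).card ≤ 1)).image
            (fun l => (j, l))).card
        ≤ ∑ _j ∈ ALG \ OPT, M := by
          refine Finset.sum_le_sum (fun j _ => ?_)
          refine le_trans Finset.card_image_le ?_
          exact hM j
      _ = M * (ALG \ OPT).card := by
          rw [Finset.sum_const, smul_eq_mul, Nat.mul_comm]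
  have e1 : (OPT ∩ ALG).card + (OPT \ ALG).card = OPT.card :=
    Finset.card_inter_add_card_sdiff _ _
  have e2 : (ALG ∩ OPT).card + (ALG \ OPT).card = ALG.card :=
    Finset.card_inter_add_card_sdiff _ _
  have e3 : (OPT ∩ ALG).card = (ALG ∩ OPT).card := by rw [Finset.inter_comm]
  have e4 : (ALG ∩ OPT).card ≤ M * (ALG ∩ OPT).card := Nat.le_mul_of_pos_left _ hM0
  have e5 : M * ALG.card = M * (ALG ∩ OPT).card + M * (ALG \ OPT).card := by
    rw [← Nat.mul_add, e2]
  have hRcard : R.card = (OPT \ ALG).card := rfl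
  omega
end

section
/- If every subtree T_i ∈ 𝒯 is a path of T containing at least one edge (so that leaves(T_i) ∈ {1, 2} for every i, hence M ≤ 2), then the greedy solution satisfies |OPT| ≤ 2·|ALG|; that is, the bottom-up greedy algorithm is a 2-approximation for instances consisting of paths, and in particular for the maximum integral multi-commodity flow problem on trees. -/
/-!
Setting: `G` is a finite tree rooted at `r`. A family `S : Fin n → Finset V` of
vertex sets of subtrees (connected subgraphs) of `G` is given; since connected
subgraphs of a tree are induced, a subtree is faithfully represented by its
vertex set. An *object* of the tree is a vertex or an edge. Capacities are
given by `k`, loads count the subtrees containing an object, feasibility means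
no object is overloaded. The subtrees are indexed so that their roots appear
in nondecreasing order along some post-order (bottom-up) traversal of the tree,
which is encoded by an injective numbering `pos` of the vertices such that
descendants of any vertex `v` appear (contiguously) before `v`.
-/

open Finset

attribute [local instance] Classical.propDecidable

namespace Aux
open SimpleGraph Walk
attribute [local instance] Classical.propDecidable
set_option linter.unusedSectionVars false

variable {V : Type} [DecidableEq V] {G : SimpleGraph V} {u v x y z : V}

/-- Walks of minimal length are paths. -/
lemma isPath_of_length_eq_dist (p : G.Walk u v) (h : p.length = G.dist u v) : p.IsPath := by
  have h1 : G.dist u v ≤ p.bypass.length := dist_le _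
  have h2 := p.bypass_eq_self_of_length_le (by rw [h]; exact h1)
  rw [← h2]; exact p.bypass_isPath

/-- The unique path between two vertices of a tree. -/
noncomputable def tpath (hT : G.IsTree) (u v : V) : G.Walk u v :=
  (hT.existsUnique_path u v).choose

lemma tpath_isPath (hT : G.IsTree) : (tpath hT u v).IsPath :=
  (hT.existsUnique_path u v).choose_spec.1

lemma tpath_unique (hT : G.IsTree) (p : G.Walk u v) (hp : p.IsPath) : p = tpath hT u v :=
  (hT.existsUnique_path u v).choose_spec.2 p hp

/-- In a tree, any path realizes the distance. -/
lemma length_eq_dist_of_isPath (hT : G.IsTree) (p : G.Walk u v) (hp : p.IsPath) :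
    p.length = G.dist u v := by
  obtain ⟨w, hw⟩ := (hT.isConnected u v).exists_walk_length_eq_dist
  have h2 : w.bypass = p := ((tpath_unique hT _ w.bypass_isPath).trans (tpath_unique hT p hp).symm)
  have h3 : p.length ≤ w.length := h2 ▸ w.length_bypass_le
  exact le_antisymm (hw ▸ h3) (dist_le p)

lemma tpath_length (hT : G.IsTree) : (tpath hT u v).length = G.dist u v :=
  length_eq_dist_of_isPath hT _ (tpath_isPath hT)
set_option linter.unusedSectionVars false

lemma btw_of_mem_path (hT : G.IsTree) (p : G.Walk x z) (hp : p.IsPath) (hy : y ∈ p.support) :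
    G.dist x y + G.dist y z = G.dist x z := by
  have h1 : (p.takeUntil y hy).length = G.dist x y :=
    length_eq_dist_of_isPath hT _ (hp.takeUntil hy)
  have h2 : (p.dropUntil y hy).length = G.dist y z :=
    length_eq_dist_of_isPath hT _ (hp.dropUntil hy)
  have h3 := congrArg Walk.length (p.take_spec hy)
  rw [Walk.length_append, h1, h2, length_eq_dist_of_isPath hT p hp] at h3
  exact h3

lemma mem_path_of_btw (hT : G.IsTree) (p : G.Walk x z) (hp : p.IsPath)
    (h : G.dist x y + G.dist y z = G.dist x z) : y ∈ p.support := by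
  have hw : ((tpath hT x y).append (tpath hT y z)).length = G.dist x z := by
    rw [Walk.length_append, tpath_length, tpath_length, h]
  have hwp : ((tpath hT x y).append (tpath hT y z)).IsPath :=
    isPath_of_length_eq_dist _ hw
  have he : (tpath hT x y).append (tpath hT y z) = p :=
    (tpath_unique hT _ hwp).trans (tpath_unique hT p hp).symm
  rw [← he, Walk.mem_support_append_iff]
  exact Or.inl (Walk.end_mem_support _)


variable {r a b c w : V}

/-- `anc` transitivity plus betweenness, numerically. -/
lemma anc_trans (hc : G.Connected)
    (h1 : G.dist r b = G.dist r a + G.dist a b)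
    (h2 : G.dist r c = G.dist r b + G.dist b c) :
    G.dist r c = G.dist r a + G.dist a c ∧ G.dist a c = G.dist a b + G.dist b c := by
  have t1 : G.dist a c ≤ G.dist a b + G.dist b c := hc.dist_triangle
  have t2 : G.dist r c ≤ G.dist r a + G.dist a c := hc.dist_triangle
  omega

/-- Two ancestors of a common vertex are comparable. -/
lemma anc_comparable (hT : G.IsTree)
    (h1 : G.dist r v = G.dist r u + G.dist u v)
    (h2 : G.dist r v = G.dist r w + G.dist w v) :
    G.dist r w = G.dist r u + G.dist u w ∨ G.dist r u = G.dist r w + G.dist w u := by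
  have hu : u ∈ (tpath hT r v).support :=
    mem_path_of_btw hT _ (tpath_isPath hT) h1.symm
  have hw : w ∈ (tpath hT r v).support :=
    mem_path_of_btw hT _ (tpath_isPath hT) h2.symm
  rw [← (tpath hT r v).take_spec hu, Walk.mem_support_append_iff] at hw
  rcases hw with hw | hw
  · exact Or.inr (btw_of_mem_path hT _ ((tpath_isPath hT).takeUntil hu) hw).symm
  · have h3 := btw_of_mem_path hT _ ((tpath_isPath hT).dropUntil hu) hw
    left; omega

/-- For adjacent vertices, one is the parent of the other. -/
lemma anc_adj (hT : G.IsTree) (r : V) (h : G.Adj u v) :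
    G.dist r v = G.dist r u + G.dist u v ∨ G.dist r u = G.dist r v + G.dist v u := by
  by_cases hv : v ∈ (tpath hT r u).support
  · exact Or.inr (btw_of_mem_path hT _ (tpath_isPath hT) hv).symm
  · by_cases hq : (Walk.cons h.symm (tpath hT r u).reverse).IsPath
    · have hq2 : (Walk.cons h.symm (tpath hT r u).reverse).reverse.IsPath := by
        rwa [Walk.isPath_reverse_iff]
      have hu : u ∈ (Walk.cons h.symm (tpath hT r u).reverse).reverse.support := by
        rw [Walk.support_reverse, List.mem_reverse, Walk.support_cons]
        exact List.mem_cons_of_mem _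
          (by rw [Walk.support_reverse, List.mem_reverse]; exact Walk.end_mem_support _)
      exact Or.inl (btw_of_mem_path hT _ hq2 hu).symm
    · exfalso
      rw [Walk.cons_isPath_iff] at hq
      push_neg at hq
      have := hq (by rw [Walk.isPath_reverse_iff]; exact tpath_isPath hT)
      rw [Walk.support_reverse, List.mem_reverse] at this
      exact hv this

/-- Convexity: a connected induced subgraph of a tree contains every vertex
between two of its vertices. -/
lemma convex_mem (hT : G.IsTree) {S : Finset V} (hS : (G.induce (S : Set V)).Connected)
    (hx : x ∈ S) (hz : z ∈ S) (h : G.dist x y + G.dist y z = G.dist x z) : y ∈ S := by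
  obtain ⟨w⟩ := hS ⟨x, hx⟩ ⟨z, hz⟩
  have hy : y ∈ (w.map (SimpleGraph.Embedding.induce (S : Set V)).toHom).support := by
    apply Walk.support_bypass_subset
    exact mem_path_of_btw hT _ (Walk.bypass_isPath _) h
  rw [Walk.support_map, List.mem_map] at hy
  obtain ⟨s, _, rfl⟩ := hy
  exact s.2

/-- Step from `u` one vertex towards a strict descendant `w`: the child. -/
lemma exists_child (hT : G.IsTree) (r : V) (hne : u ≠ w)
    (h : G.dist r w = G.dist r u + G.dist u w) :
    ∃ c, G.Adj u c ∧ G.dist u c = 1 ∧ G.dist u w = 1 + G.dist c w ∧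
      G.dist r c = G.dist r u + 1 ∧ G.dist r w = G.dist r c + G.dist c w := by
  have hc : G.Connected := hT.isConnected
  have hlen : 0 < (tpath hT u w).length := by
    rw [tpath_length]; exact hc.pos_dist_of_ne hne
  set p := tpath hT u w with hp
  have hadj : G.Adj u (p.getVert 1) := by
    have := p.adj_getVert_succ (i := 0) hlen
    simpa using this
  set c := p.getVert 1 with hcdef
  have hmem : c ∈ p.support :=
    Walk.mem_support_iff_exists_getVert.2 ⟨1, rfl, hlen⟩
  have hb : G.dist u c + G.dist c w = G.dist u w :=
    btw_of_mem_path hT p (tpath_isPath hT) hmem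
  have hd1 : G.dist u c = 1 := dist_eq_one_iff_adj.2 hadj
  have t1 : G.dist r c ≤ G.dist r u + G.dist u c := hc.dist_triangle
  have t2 : G.dist r w ≤ G.dist r c + G.dist c w := hc.dist_triangle
  exact ⟨c, hadj, hd1, by omega, by omega, by omega⟩

/-- Step from a strict descendant `w` one vertex up towards `u`: the parent. -/
lemma exists_parent (hT : G.IsTree) (r : V) (hne : u ≠ w)
    (h : G.dist r w = G.dist r u + G.dist u w) :
    ∃ q, G.Adj q w ∧ G.dist q w = 1 ∧ G.dist u w = G.dist u q + 1 ∧
      G.dist r w = G.dist r q + 1 ∧ G.dist r q = G.dist r u + G.dist u q := by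
  have hc : G.Connected := hT.isConnected
  have hlen : 0 < (tpath hT u w).length := by
    rw [tpath_length]; exact hc.pos_dist_of_ne hne
  set p := tpath hT u w with hp
  set q := p.getVert (p.length - 1) with hqdef
  have hadj : G.Adj q w := by
    have := p.adj_getVert_succ (i := p.length - 1) (by omega)
    have h2 : p.length - 1 + 1 = p.length := by omega
    rw [h2, Walk.getVert_length] at this
    exact this
  have hmem : q ∈ p.support :=
    Walk.mem_support_iff_exists_getVert.2 ⟨p.length - 1, rfl, by omega⟩
  have hb : G.dist u q + G.dist q w = G.dist u w :=
    btw_of_mem_path hT p (tpath_isPath hT) hmem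
  have hd1 : G.dist q w = 1 := dist_eq_one_iff_adj.2 hadj
  have t1 : G.dist r w ≤ G.dist r q + G.dist q w := hc.dist_triangle
  have t2 : G.dist r q ≤ G.dist r u + G.dist u q := hc.dist_triangle
  exact ⟨q, hadj, hd1, by omega, by omega, by omega⟩

lemma root_anc_walk (hT : G.IsTree) (r : V) {S : Finset V} {rt : V}
    (hmin : ∀ x ∈ S, G.dist r rt ≤ G.dist r x)
    (w : G.Walk v rt) (hsup : ∀ x ∈ w.support, x ∈ S) :
    G.dist r v = G.dist r rt + G.dist rt v := by
  have hc := hT.isConnected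
  induction w with
  | nil => simp
  | @cons v u rtE hadj w' ih =>
    have hsup' : ∀ x ∈ w'.support, x ∈ S := fun x hx =>
      hsup x (by rw [Walk.support_cons]; exact List.mem_cons_of_mem _ hx)
    have ihu := ih hmin hsup'
    rcases anc_adj hT r hadj with hA | hB
    · rcases anc_comparable hT ihu hA with h1 | h2
      · exact h1
      · have hv : v ∈ S := hsup v (Walk.start_mem_support _)
        have hm := hmin v hv
        have h0 : G.dist v rtE = 0 := by omega
        have hvrt : v = rtE := (hc.dist_eq_zero_iff).1 h0
        subst hvrt
        simp
    · exact (anc_trans hc ihu hB).1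

/-- The root of a subtree is an ancestor of each of its vertices. -/
lemma root_anc (hT : G.IsTree) (r : V) {S : Finset V}
    (hS : (G.induce (S : Set V)).Connected) {rt : V} (hrt : rt ∈ S)
    (hmin : ∀ x ∈ S, G.dist r rt ≤ G.dist r x)
    (hv : v ∈ S) : G.dist r v = G.dist r rt + G.dist rt v := by
  obtain ⟨w0⟩ := hS ⟨v, hv⟩ ⟨rt, hrt⟩
  refine root_anc_walk hT r hmin (w0.map (SimpleGraph.Embedding.induce (S : Set V)).toHom) ?_
  intro x hx
  have hx' : x ∈ (w0.map (SimpleGraph.Embedding.induce (S : Set V)).toHom).support := hx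
  rw [Walk.support_map, List.mem_map] at hx'
  obtain ⟨s, _, rfl⟩ := hx'
  exact s.2

section Struct

variable {S : Finset V} {rt m x' y' z' : V}

/-- Auxiliary: convexity in terms of dist sums. -/
lemma convex_mem' (hT : G.IsTree) (hS : (G.induce (S : Set V)).Connected)
    (hx : x ∈ S) (hz : z ∈ S) (h : G.dist x z = G.dist x y + G.dist y z) : y ∈ S :=
  convex_mem hT hS hx hz h.symm

lemma degree_three_aux (hT : G.IsTree) (r : V)
    (hS : (G.induce (S : Set V)).Connected)
    (hdeg : ∀ v ∈ S, (S.filter fun u => G.Adj v u).card ≤ 2)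
    (hrt : rt ∈ S) (hmin : ∀ v ∈ S, G.dist r rt ≤ G.dist r v)
    (hx : x' ∈ S) (hy : y' ∈ S) (hz : z' ∈ S)
    (hxy : ¬ G.dist r y' = G.dist r x' + G.dist x' y')
    (hyx : ¬ G.dist r x' = G.dist r y' + G.dist y' x')
    (hxz : ¬ G.dist r z' = G.dist r x' + G.dist x' z')
    (hzx : ¬ G.dist r x' = G.dist r z' + G.dist z' x')
    (hyz : ¬ G.dist r z' = G.dist r y' + G.dist y' z')
    (hzy : ¬ G.dist r y' = G.dist r z' + G.dist z' y')
    (hmS : m ∈ S)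
    (hmx : G.dist r x' = G.dist r m + G.dist m x')
    (hmy : G.dist r y' = G.dist r m + G.dist m y')
    (hmax : ∀ v ∈ S, G.dist r x' = G.dist r v + G.dist v x' →
      G.dist r y' = G.dist r v + G.dist v y' → G.dist r v ≤ G.dist r m)
    (hbxz : ∀ v ∈ S, G.dist r x' = G.dist r v + G.dist v x' →
      G.dist r z' = G.dist r v + G.dist v z' → G.dist r v ≤ G.dist r m)
    (hbyz : ∀ v ∈ S, G.dist r y' = G.dist r v + G.dist v y' →
      G.dist r z' = G.dist r v + G.dist v z' → G.dist r v ≤ G.dist r m) :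
    False := by
  have hc := hT.isConnected
  -- m differs from x', y'
  have hmnx : m ≠ x' := by rintro rfl; exact hxy hmy
  have hmny : m ≠ y' := by rintro rfl; exact hyx hmx
  -- children towards x' and y'
  obtain ⟨cx, hcxadj, hcxd1, hcxbtw, hcxdep, hcxanc⟩ := exists_child hT r hmnx hmx
  obtain ⟨cy, hcyadj, hcyd1, hcybtw, hcydep, hcyanc⟩ := exists_child hT r hmny hmy
  have hcxS : cx ∈ S := convex_mem' hT hS hmS hx (by omega)
  have hcyS : cy ∈ S := convex_mem' hT hS hmS hy (by omega)
  have hcxy : cx ≠ cy := by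
    rintro rfl
    have := hmax cx hcxS hcxanc hcyanc
    omega
  by_cases hmz : G.dist r z' = G.dist r m + G.dist m z'
  · -- m is an ancestor of z' as well: three children
    have hmnz : m ≠ z' := by rintro rfl; exact hzx hmx
    obtain ⟨cz, hczadj, hczd1, hczbtw, hczdep, hczanc⟩ := exists_child hT r hmnz hmz
    have hczS : cz ∈ S := convex_mem' hT hS hmS hz (by omega)
    have hcxz : cx ≠ cz := by
      rintro rfl
      have := hbxz cx hcxS hcxanc hczanc
      omega
    have hcyz : cy ≠ cz := by
      rintro rfl
      have := hbyz cy hcyS hcyanc hczanc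
      omega
    have hsub : ({cx, cy, cz} : Finset V) ⊆ S.filter fun u => G.Adj m u := by
      intro t ht
      simp only [Finset.mem_insert, Finset.mem_singleton] at ht
      rcases ht with rfl | rfl | rfl <;> simp [Finset.mem_filter, *]
    have hcard : ({cx, cy, cz} : Finset V).card = 3 := by
      rw [Finset.card_insert_of_notMem (by simp [hcxy, hcxz]),
        Finset.card_insert_of_notMem (by simp [hcyz]), Finset.card_singleton]
    have := Finset.card_le_card hsub
    have := hdeg m hmS
    omega
  · -- m is not an ancestor of z'
    -- take the deepest common S-ancestor m' of x' and z'
    obtain ⟨m', hm'A, hm'max⟩ := Finset.exists_max_image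
      (S.filter fun v => G.dist r x' = G.dist r v + G.dist v x' ∧
        G.dist r z' = G.dist r v + G.dist v z') (G.dist r)
      ⟨rt, by
        simp only [Finset.mem_filter]
        exact ⟨hrt, root_anc hT r hS hrt hmin hx, root_anc hT r hS hrt hmin hz⟩⟩
    simp only [Finset.mem_filter] at hm'A
    obtain ⟨hm'S, hm'x, hm'z⟩ := hm'A
    -- m' is a strict ancestor of m
    have hm'm : G.dist r m = G.dist r m' + G.dist m' m := by
      rcases anc_comparable hT hmx hm'x with h1 | h2
      · exfalso
        exact hmz (anc_trans hc h1 hm'z).1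
      · exact h2
    have hm'ne : m' ≠ m := by rintro rfl; exact hmz hm'z
    obtain ⟨q, hqadj, hqd1, hqbtw, hqdep, hqanc⟩ := exists_parent hT r hm'ne hm'm
    have hqS : q ∈ S := convex_mem' hT hS hm'S hmS (by omega)
    have hqcx : q ≠ cx := by intro h; rw [h] at hqdep; omega
    have hqcy : q ≠ cy := by intro h; rw [h] at hqdep; omega
    have hsub : ({cx, cy, q} : Finset V) ⊆ S.filter fun u => G.Adj m u := by
      intro t ht
      simp only [Finset.mem_insert, Finset.mem_singleton] at ht
      rcases ht with rfl | rfl | rfl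
      · simp [Finset.mem_filter, hcxS, hcxadj]
      · simp [Finset.mem_filter, hcyS, hcyadj]
      · simp [Finset.mem_filter, hqS, hqadj.symm]
    have hcard : ({cx, cy, q} : Finset V).card = 3 := by
      rw [Finset.card_insert_of_notMem (by simp [hcxy, Ne.symm hqcx]),
        Finset.card_insert_of_notMem (by simp [Ne.symm hqcy]), Finset.card_singleton]
    have := Finset.card_le_card hsub
    have := hdeg m hmS
    omega


/-- In a connected subgraph of max degree two of a tree there are no three
pairwise incomparable vertices. -/
lemma no_three_incomparable (hT : G.IsTree) (r : V)
    (hS : (G.induce (S : Set V)).Connected)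
    (hdeg : ∀ v ∈ S, (S.filter fun u => G.Adj v u).card ≤ 2)
    (hrt : rt ∈ S) (hmin : ∀ v ∈ S, G.dist r rt ≤ G.dist r v)
    (hx : x' ∈ S) (hy : y' ∈ S) (hz : z' ∈ S)
    (hxy : ¬ G.dist r y' = G.dist r x' + G.dist x' y')
    (hyx : ¬ G.dist r x' = G.dist r y' + G.dist y' x')
    (hxz : ¬ G.dist r z' = G.dist r x' + G.dist x' z')
    (hzx : ¬ G.dist r x' = G.dist r z' + G.dist z' x')
    (hyz : ¬ G.dist r z' = G.dist r y' + G.dist y' z')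
    (hzy : ¬ G.dist r y' = G.dist r z' + G.dist z' y') :
    False := by
  have hroot : ∀ {w : V}, w ∈ S → G.dist r w = G.dist r rt + G.dist rt w :=
    fun hw => root_anc hT r hS hrt hmin hw
  obtain ⟨m1, hm1A, hm1max⟩ := Finset.exists_max_image
    (S.filter fun v => G.dist r x' = G.dist r v + G.dist v x' ∧
      G.dist r y' = G.dist r v + G.dist v y') (G.dist r)
    ⟨rt, by simp only [Finset.mem_filter]; exact ⟨hrt, hroot hx, hroot hy⟩⟩
  obtain ⟨m2, hm2A, hm2max⟩ := Finset.exists_max_image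
    (S.filter fun v => G.dist r x' = G.dist r v + G.dist v x' ∧
      G.dist r z' = G.dist r v + G.dist v z') (G.dist r)
    ⟨rt, by simp only [Finset.mem_filter]; exact ⟨hrt, hroot hx, hroot hz⟩⟩
  obtain ⟨m3, hm3A, hm3max⟩ := Finset.exists_max_image
    (S.filter fun v => G.dist r y' = G.dist r v + G.dist v y' ∧
      G.dist r z' = G.dist r v + G.dist v z') (G.dist r)
    ⟨rt, by simp only [Finset.mem_filter]; exact ⟨hrt, hroot hy, hroot hz⟩⟩
  simp only [Finset.mem_filter] at hm1A hm2A hm3A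
  obtain ⟨hm1S, hm1x, hm1y⟩ := hm1A
  obtain ⟨hm2S, hm2x, hm2z⟩ := hm2A
  obtain ⟨hm3S, hm3y, hm3z⟩ := hm3A
  have H1 : ∀ v ∈ S, G.dist r x' = G.dist r v + G.dist v x' →
      G.dist r y' = G.dist r v + G.dist v y' → G.dist r v ≤ G.dist r m1 :=
    fun v hv h1 h2 => hm1max v (by simp only [Finset.mem_filter]; exact ⟨hv, h1, h2⟩)
  have H2 : ∀ v ∈ S, G.dist r x' = G.dist r v + G.dist v x' →
      G.dist r z' = G.dist r v + G.dist v z' → G.dist r v ≤ G.dist r m2 :=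
    fun v hv h1 h2 => hm2max v (by simp only [Finset.mem_filter]; exact ⟨hv, h1, h2⟩)
  have H3 : ∀ v ∈ S, G.dist r y' = G.dist r v + G.dist v y' →
      G.dist r z' = G.dist r v + G.dist v z' → G.dist r v ≤ G.dist r m3 :=
    fun v hv h1 h2 => hm3max v (by simp only [Finset.mem_filter]; exact ⟨hv, h1, h2⟩)
  rcases le_total (G.dist r m1) (G.dist r m2) with h12 | h12
  · rcases le_total (G.dist r m2) (G.dist r m3) with h23 | h23
    · -- m3 deepest : pair (y', z'), third x'
      exact degree_three_aux hT r hS hdeg hrt hmin hy hz hx hyz hzy hyx hxy hzx hxz hm3S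
        hm3y hm3z H3 (fun v hv a b => le_trans (H1 v hv b a) (le_trans h12 h23))
        (fun v hv a b => le_trans (H2 v hv b a) h23)
    · -- m2 deepest : pair (x', z'), third y'
      exact degree_three_aux hT r hS hdeg hrt hmin hx hz hy hxz hzx hxy hyx hzy hyz hm2S
        hm2x hm2z H2 (fun v hv a b => le_trans (H1 v hv a b) h12)
        (fun v hv a b => le_trans (H3 v hv b a) h23)
  · rcases le_total (G.dist r m1) (G.dist r m3) with h13 | h13
    · -- m3 deepest
      exact degree_three_aux hT r hS hdeg hrt hmin hy hz hx hyz hzy hyx hxy hzx hxz hm3S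
        hm3y hm3z H3 (fun v hv a b => le_trans (H1 v hv b a) h13)
        (fun v hv a b => le_trans (H2 v hv b a) (le_trans h12 h13))
    · -- m1 deepest
      exact degree_three_aux hT r hS hdeg hrt hmin hx hy hz hxy hyx hxz hzx hyz hzy hm1S
        hm1x hm1y H1 (fun v hv a b => le_trans (H2 v hv a b) h12)
        (fun v hv a b => le_trans (H3 v hv a b) h13)

end Struct
end Aux

namespace Aux2
open Aux
set_option linter.unusedSectionVars false

variable {V : Type} [Fintype V] [DecidableEq V] {G : SimpleGraph V} {n : ℕ}
variable {S : Fin n → Finset V} {k : Object V → ℕ}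

lemma load_mono {U W : Finset (Fin n)} (h : U ⊆ W) (o : Object V) :
    load G S U o ≤ load G S W o :=
  Finset.card_le_card (Finset.filter_subset_filter _ h)

lemma feasible_subset {U W : Finset (Fin n)} (h : U ⊆ W) (hW : Feasible G S k W) :
    Feasible G S k U :=
  fun o => le_trans (load_mono h o) (hW o)

lemma load_insert {U : Finset (Fin n)} {i : Fin n} (hi : i ∉ U) (o : Object V)
    (hc : ContainsObj G (S i) o) :
    load G S (insert i U) o = load G S U o + 1 := by
  unfold load
  rw [Finset.filter_insert, if_pos hc, Finset.card_insert_of_notMem (fun hmem => hi (Finset.mem_of_mem_filter _ hmem))]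

lemma load_insert_not {U : Finset (Fin n)} {i : Fin n} (o : Object V)
    (hc : ¬ ContainsObj G (S i) o) :
    load G S (insert i U) o = load G S U o := by
  unfold load
  rw [Finset.filter_insert, if_neg hc]

lemma load_split {U W : Finset (Fin n)} (h : U ⊆ W) (o : Object V) :
    load G S (W \ U) o + load G S U o = load G S W o := by
  unfold load
  rw [← Finset.card_union_of_disjoint, ← Finset.filter_union, Finset.sdiff_union_of_subset h]
  exact Finset.disjoint_filter_filter (Finset.sdiff_disjoint)

lemma load_pos_of_mem {U : Finset (Fin n)} {j : Fin n} (hj : j ∈ U)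
    {o : Object V} (hc : ContainsObj G (S j) o) : 1 ≤ load G S U o := by
  have : j ∈ U.filter fun i => ContainsObj G (S i) o := Finset.mem_filter.2 ⟨hj, hc⟩
  exact Finset.card_pos.2 ⟨j, this⟩

lemma mem_greedy_lt {m : ℕ} {j : Fin n} (hj : j ∈ greedy G S k m) : (j : ℕ) < m := by
  induction m with
  | zero => simp [greedy] at hj
  | succ m ih =>
    unfold greedy at hj
    split at hj
    · split at hj
      · rcases Finset.mem_insert.1 hj with rfl | hj
        · simp
        · exact Nat.lt_succ_of_lt (ih hj)
      · exact Nat.lt_succ_of_lt (ih hj)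
    · exact Nat.lt_succ_of_lt (ih hj)


def VertOf : Object V → V → Prop
  | Sum.inl v, x => x = v
  | Sum.inr e, x => x ∈ e

lemma contains_verts {s : Finset V} {o : Object V} (h : ContainsObj G s o) :
    ∀ x, VertOf o x → x ∈ s := by
  cases o with
  | inl v => intro x hx; cases hx; exact h
  | inr e => intro x hx; exact h.2 x hx

lemma contains_of_verts {s t : Finset V} {o : Object V} (h : ContainsObj G s o)
    (h2 : ∀ x, VertOf o x → x ∈ t) : ContainsObj G t o := by
  cases o with
  | inl v => exact h2 v rfl
  | inr e => exact ⟨h.1, fun x hx => h2 x hx⟩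

lemma obj_bot (hT : G.IsTree) (r : V) {s : Finset V} {o : Object V}
    (h : ContainsObj G s o) :
    ∃ b, VertOf o b ∧ ∀ x, VertOf o x → G.dist r b = G.dist r x + G.dist x b := by
  cases o with
  | inl v => exact ⟨v, rfl, by rintro x rfl; simp⟩
  | inr e =>
    induction e using Sym2.ind with
    | _ a b =>
      have hadj : G.Adj a b := (SimpleGraph.mem_edgeSet G).1 h.1
      rcases anc_adj hT r hadj with hA | hB
      · refine ⟨b, Sym2.mem_mk_right a b, ?_⟩
        intro x hx
        rcases Sym2.mem_iff.1 hx with rfl | rfl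
        · exact hA
        · simp
      · refine ⟨a, Sym2.mem_mk_left a b, ?_⟩
        intro x hx
        rcases Sym2.mem_iff.1 hx with rfl | rfl
        · simp
        · exact hB

lemma seg_contains (hTree : G.IsTree) (r : V)
    (hsub : ∀ i, (G.induce ((S i : Finset V) : Set V)).Connected)
    (rt : Fin n → V) (hrtmem : ∀ i, rt i ∈ S i)
    (hrtmin : ∀ i, ∀ v ∈ S i, G.dist r (rt i) ≤ G.dist r v)
    (pos : V → ℕ) (hposinj : Function.Injective pos)
    (hpost : ∀ u v : V, IsAnc G r v u → pos u ≤ pos v)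
    (hord : ∀ i j : Fin n, i ≤ j → pos (rt i) ≤ pos (rt j))
    {i j : Fin n} (hij : i ≤ j)
    {o o1 : Object V} (hoi : ContainsObj G (S i) o) (ho1i : ContainsObj G (S i) o1)
    (hjo1 : ContainsObj G (S j) o1)
    {b b1 : V} (hb1 : VertOf o1 b1)
    (hbprop : ∀ x, VertOf o x → G.dist r b = G.dist r x + G.dist x b)
    (hanc : G.dist r b1 = G.dist r b + G.dist b b1) :
    ContainsObj G (S j) o := by
  have hc := hTree.isConnected
  have hb1Si : b1 ∈ S i := contains_verts ho1i b1 hb1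
  have hb1Sj : b1 ∈ S j := contains_verts hjo1 b1 hb1
  have A1 : G.dist r b1 = G.dist r (rt i) + G.dist (rt i) b1 :=
    root_anc hTree r (hsub i) (hrtmem i) (hrtmin i) hb1Si
  have A2 : G.dist r b1 = G.dist r (rt j) + G.dist (rt j) b1 :=
    root_anc hTree r (hsub j) (hrtmem j) (hrtmin j) hb1Sj
  have hRji : G.dist r (rt i) = G.dist r (rt j) + G.dist (rt j) (rt i) := by
    rcases anc_comparable hTree A1 A2 with h | h
    · have h1 := hpost (rt j) (rt i) h
      have h2 := hord i j hij
      have he : rt i = rt j := hposinj (le_antisymm h2 h1)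
      rw [← he]
      simp
    · exact h
  refine contains_of_verts hoi ?_
  intro x hx
  have hxi : x ∈ S i := contains_verts hoi x hx
  have hAx : G.dist r b = G.dist r x + G.dist x b := hbprop x hx
  have hAxb1 : G.dist r b1 = G.dist r x + G.dist x b1 := (anc_trans hc hAx hanc).1
  have hArtix : G.dist r x = G.dist r (rt i) + G.dist (rt i) x :=
    root_anc hTree r (hsub i) (hrtmem i) (hrtmin i) hxi
  have hArtjx : G.dist r x = G.dist r (rt j) + G.dist (rt j) x :=
    (anc_trans hc hRji hArtix).1
  have hbtw : G.dist (rt j) b1 = G.dist (rt j) x + G.dist x b1 := by omega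
  exact convex_mem' hTree (hsub j) (hrtmem j) hb1Sj hbtw


lemma crux (hTree : G.IsTree) (r : V)
    (hsub : ∀ i : Fin n, (G.induce ((S i : Finset V) : Set V)).Connected)
    (hdeg : ∀ i : Fin n, ∀ v ∈ S i, ((S i).filter fun u => G.Adj v u).card ≤ 2)
    (rt : Fin n → V) (hrtmem : ∀ i, rt i ∈ S i)
    (hrtmin : ∀ i, ∀ v ∈ S i, G.dist r (rt i) ≤ G.dist r v)
    (pos : V → ℕ) (hposinj : Function.Injective pos)
    (hpost : ∀ u v : V, IsAnc G r v u → pos u ≤ pos v)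
    (hord : ∀ i j : Fin n, i ≤ j → pos (rt i) ≤ pos (rt j))
    {i : Fin n} {W : Finset (Fin n)}
    (hWfeas : Feasible G S k W)
    (hWg : greedy G S k (i : ℕ) ⊆ W)
    (hWge : ∀ j ∈ W, j ∉ greedy G S k (i : ℕ) → (i : ℕ) ≤ (j : ℕ))
    (hiW : i ∉ W)
    (hacc : Feasible G S k (insert i (greedy G S k (i : ℕ)))) :
    ∃ D, D ⊆ W \ greedy G S k (i : ℕ) ∧ D.card ≤ 2 ∧
      Feasible G S k (insert i (W \ D)) := by
  classical
  have hc := hTree.isConnected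
  set Gr := greedy G S k (i : ℕ) with hGr
  have hiGr : i ∉ Gr := fun h => absurd (mem_greedy_lt h) (lt_irrefl _)
  have hblock : ∀ o : Object V, ContainsObj G (S i) o → k o ≤ load G S W o →
      ∃ j, j ∈ W \ Gr ∧ ContainsObj G (S j) o := by
    intro o hco hko
    have h1 : load G S Gr o + 1 ≤ k o := by
      have h2 := hacc o
      rwa [load_insert hiGr o hco] at h2
    have h2 := load_split (G := G) (S := S) hWg o
    have h3 : 1 ≤ load G S (W \ Gr) o := by omega
    unfold load at h3
    obtain ⟨j, hj⟩ := Finset.card_pos.1 (Nat.lt_of_lt_of_le Nat.zero_lt_one h3)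
    exact ⟨j, (Finset.mem_filter.1 hj).1, (Finset.mem_filter.1 hj).2⟩
  have hblockle : ∀ j, j ∈ W \ Gr → i ≤ j := by
    intro j hj
    rw [Finset.mem_sdiff] at hj
    have h1 := hWge j hj.1 hj.2
    exact Fin.le_def.2 h1
  set T : Finset (Object V) := Finset.univ.filter
    (fun o => ContainsObj G (S i) o ∧ k o ≤ load G S W o) with hTdef
  have hfinal : ∀ (D : Finset (Fin n)), D ⊆ W \ Gr →
      (∀ o ∈ T, ∃ j ∈ D, ContainsObj G (S j) o) →
      Feasible G S k (insert i (W \ D)) := by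
    intro D hD hcov o
    by_cases hco : ContainsObj G (S i) o
    · have hiWD : i ∉ W \ D := fun h => hiW (Finset.mem_sdiff.1 h).1
      rw [load_insert hiWD o hco]
      by_cases ht : k o ≤ load G S W o
      · have hoT : o ∈ T := Finset.mem_filter.2 ⟨Finset.mem_univ _, hco, ht⟩
        obtain ⟨j, hjD, hjc⟩ := hcov o hoT
        have hDW : D ⊆ W := hD.trans Finset.sdiff_subset
        have hsplit := load_split (G := G) (S := S) hDW o
        have hDpos : 1 ≤ load G S D o := load_pos_of_mem hjD hjc
        have hWf := hWfeas o
        omega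
      · have h1 : load G S (W \ D) o ≤ load G S W o := load_mono Finset.sdiff_subset o
        omega
    · rw [load_insert_not o hco]
      exact le_trans (load_mono Finset.sdiff_subset _) (hWfeas o)
  by_cases hTne : T.Nonempty
  · have hbots : ∀ o : Object V, ∃ b, ContainsObj G (S i) o →
        (VertOf o b ∧ ∀ x, VertOf o x → G.dist r b = G.dist r x + G.dist x b) := by
      intro o
      by_cases h : ContainsObj G (S i) o
      · obtain ⟨b, hb1, hb2⟩ := obj_bot hTree r h
        exact ⟨b, fun _ => ⟨hb1, hb2⟩⟩
      · exact ⟨r, fun hco => absurd hco h⟩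
    choose f hf using hbots
    have hTprop : ∀ o ∈ T, ContainsObj G (S i) o ∧ k o ≤ load G S W o :=
      fun o hoT => (Finset.mem_filter.1 hoT).2
    have hfV : ∀ o ∈ T, VertOf o (f o) := fun o hoT => (hf o (hTprop o hoT).1).1
    have hfP : ∀ o ∈ T, ∀ x, VertOf o x → G.dist r (f o) = G.dist r x + G.dist x (f o) :=
      fun o hoT => (hf o (hTprop o hoT).1).2
    have hfS : ∀ o ∈ T, f o ∈ S i :=
      fun o hoT => contains_verts (hTprop o hoT).1 (f o) (hfV o hoT)
    have hkey : ∀ o o' : Object V, G.dist r (f o) ≤ G.dist r (f o') →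
        (G.dist r (f o') = G.dist r (f o) + G.dist (f o) (f o') ∨
          G.dist r (f o) = G.dist r (f o') + G.dist (f o') (f o)) →
        G.dist r (f o') = G.dist r (f o) + G.dist (f o) (f o') := by
      intro o o' hle hcomp
      rcases hcomp with h | h
      · exact h
      · have h0 : G.dist (f o') (f o) = 0 := by omega
        have he := (hc.dist_eq_zero_iff).1 h0
        rw [← he]
        simp
    obtain ⟨o1, ho1T, ho1max⟩ := Finset.exists_max_image T (fun o => G.dist r (f o)) hTne
    obtain ⟨j1, hj1, hj1c⟩ := hblock o1 (hTprop o1 ho1T).1 (hTprop o1 ho1T).2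
    have hseg : ∀ (o2 : Object V), o2 ∈ T → ∀ (j : Fin n), j ∈ W \ Gr →
        ContainsObj G (S j) o2 → ∀ o ∈ T,
        G.dist r (f o2) = G.dist r (f o) + G.dist (f o) (f o2) →
        ContainsObj G (S j) o := by
      intro o2 ho2T j hj hjc o hoT hanc
      exact seg_contains hTree r hsub rt hrtmem hrtmin pos hposinj hpost hord
        (hblockle j hj) (hTprop o hoT).1 (hTprop o2 ho2T).1 hjc (hfV o2 ho2T)
        (hfP o hoT) hanc
    set I : Finset (Object V) := T.filter (fun o =>
      ¬ G.dist r (f o1) = G.dist r (f o) + G.dist (f o) (f o1) ∧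
      ¬ G.dist r (f o) = G.dist r (f o1) + G.dist (f o1) (f o)) with hIdef
    by_cases hIne : I.Nonempty
    · obtain ⟨o2, ho2I, ho2max⟩ := Finset.exists_max_image I (fun o => G.dist r (f o)) hIne
      have ho2T : o2 ∈ T := Finset.mem_of_mem_filter _ ho2I
      obtain ⟨j2, hj2, hj2c⟩ := hblock o2 (hTprop o2 ho2T).1 (hTprop o2 ho2T).2
      refine ⟨{j1, j2}, ?_, ?_, ?_⟩
      · intro t ht
        rcases Finset.mem_insert.1 ht with rfl | ht
        · exact hj1
        · rw [Finset.mem_singleton.1 ht]; exact hj2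
      · exact le_trans (Finset.card_insert_le _ _) (by simp)
      · refine hfinal _ ?_ ?_
        · intro t ht
          rcases Finset.mem_insert.1 ht with rfl | ht
          · exact hj1
          · rw [Finset.mem_singleton.1 ht]; exact hj2
        · intro o hoT
          by_cases hcomp1 : G.dist r (f o1) = G.dist r (f o) + G.dist (f o) (f o1) ∨
              G.dist r (f o) = G.dist r (f o1) + G.dist (f o1) (f o)
          · refine ⟨j1, Finset.mem_insert_self _ _, ?_⟩
            exact hseg o1 ho1T j1 hj1 hj1c o hoT (hkey o o1 (ho1max o hoT) hcomp1)
          · push_neg at hcomp1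
            have hoI : o ∈ I := Finset.mem_filter.2 ⟨hoT, hcomp1.1, hcomp1.2⟩
            have ho2Ip := (Finset.mem_filter.1 ho2I).2
            have hcomp2 : G.dist r (f o2) = G.dist r (f o) + G.dist (f o) (f o2) ∨
                G.dist r (f o) = G.dist r (f o2) + G.dist (f o2) (f o) := by
              by_contra hcon
              push_neg at hcon
              exact no_three_incomparable hTree r (hsub i) (hdeg i) (hrtmem i)
                (hrtmin i) (hfS o1 ho1T) (hfS o hoT) (hfS o2 ho2T)
                hcomp1.2 hcomp1.1 ho2Ip.2 ho2Ip.1 hcon.1 hcon.2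
            refine ⟨j2, by simp, ?_⟩
            exact hseg o2 ho2T j2 hj2 hj2c o hoT
              (hkey o o2 (ho2max o hoI) hcomp2)
    · refine ⟨{j1}, Finset.singleton_subset_iff.2 hj1, by simp, ?_⟩
      refine hfinal _ (Finset.singleton_subset_iff.2 hj1) ?_
      intro o hoT
      refine ⟨j1, Finset.mem_singleton_self _, ?_⟩
      have hcomp1 : G.dist r (f o1) = G.dist r (f o) + G.dist (f o) (f o1) ∨
          G.dist r (f o) = G.dist r (f o1) + G.dist (f o1) (f o) := by
        by_contra hcon
        push_neg at hcon
        exact hIne ⟨o, Finset.mem_filter.2 ⟨hoT, hcon.1, hcon.2⟩⟩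
      exact hseg o1 ho1T j1 hj1 hj1c o hoT (hkey o o1 (ho1max o hoT) hcomp1)
  · refine ⟨∅, Finset.empty_subset _, by simp, ?_⟩
    intro o
    rw [Finset.sdiff_empty]
    by_cases hco : ContainsObj G (S i) o
    · have hnt : ¬ k o ≤ load G S W o := by
        intro h
        exact hTne ⟨o, Finset.mem_filter.2 ⟨Finset.mem_univ _, hco, h⟩⟩
      rw [load_insert hiW o hco]
      have := hWfeas o
      omega
    · rw [load_insert_not o hco]
      exact hWfeas o

end Aux2


/-- **Theorem (2-approximation for paths).** If every subtree is a path of the tree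
containing at least one edge (so it has at least two vertices and every vertex has
degree at most 2 within it), then the greedy solution satisfies `|OPT| ≤ 2·|ALG|`. -/
theorem statement4
    {V : Type} [Fintype V] [DecidableEq V] (G : SimpleGraph V)
    (hTree : G.IsTree) (r : V)
    {n : ℕ} (S : Fin n → Finset V)
    -- each `S i` is (the vertex set of) a subtree, i.e. a connected subgraph of `G`
    (hsub : ∀ i, (G.induce (S i : Set V)).Connected)
    -- every subtree is a path containing at least one edge:
    -- it has at least two vertices, and within it every vertex has degree at most two
    (hcard : ∀ i, 2 ≤ (S i).card)
    (hdeg : ∀ i, ∀ v ∈ S i, ((S i).filter fun u => G.Adj v u).card ≤ 2)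
    -- `rt i` is the vertex of the subtree `S i` closest to the root `r`
    (rt : Fin n → V) (hrtmem : ∀ i, rt i ∈ S i)
    (hrtmin : ∀ i, ∀ v ∈ S i, G.dist r (rt i) ≤ G.dist r v)
    -- `pos` is a post-order (bottom-up) traversal of the tree ...
    (pos : V → ℕ) (hposinj : Function.Injective pos)
    (hpost : ∀ u v : V, IsAnc G r v u → pos u ≤ pos v)
    (hcontig : ∀ u x v : V, IsAnc G r v u → pos u ≤ pos x → pos x ≤ pos v → IsAnc G r v x)
    -- ... along which the roots of the subtrees appear in nondecreasing order
    (hord : ∀ i j : Fin n, i ≤ j → pos (rt i) ≤ pos (rt j))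
    (k : Object V → ℕ)
    -- `OPT` is a feasible subset of maximum cardinality
    (OPT : Finset (Fin n)) (hOPTfeas : Feasible G S k OPT)
    (hOPTmax : ∀ U : Finset (Fin n), Feasible G S k U → U.card ≤ OPT.card) :
    OPT.card ≤ 2 * (greedy G S k n).card := by
  classical
  have key : ∀ m : ℕ, m ≤ n → ∃ W : Finset (Fin n), Feasible G S k W ∧
      greedy G S k m ⊆ W ∧ (∀ j ∈ W, j ∉ greedy G S k m → m ≤ (j : ℕ)) ∧
      OPT.card ≤ W.card + (greedy G S k m).card := by
    intro m
    induction m with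
    | zero =>
      exact fun _ => ⟨OPT, hOPTfeas, by simp [greedy], by simp, by simp [greedy]⟩
    | succ m ih =>
      intro hm
      obtain ⟨W, hWf, hWg, hWge, hWcard⟩ := ih (Nat.le_of_succ_le hm)
      have hmn : m < n := hm
      set ι : Fin n := ⟨m, hmn⟩ with hι
      have hιGr : ι ∉ greedy G S k m := fun h => absurd (Aux2.mem_greedy_lt h) (by simp [hι])
      have hgm : greedy G S k (m + 1) =
          if Feasible G S k (insert ι (greedy G S k m)) then insert ι (greedy G S k m)
          else greedy G S k m := by
        show greedy G S k (m + 1) = _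
        conv_lhs => unfold greedy
        rw [dif_pos hmn]
      by_cases hacc : Feasible G S k (insert ι (greedy G S k m))
      · rw [hgm, if_pos hacc]
        have hgcard : (insert ι (greedy G S k m)).card = (greedy G S k m).card + 1 :=
          Finset.card_insert_of_notMem hιGr
        by_cases hιW : ι ∈ W
        · refine ⟨W, hWf, ?_, ?_, by omega⟩
          · intro t ht
            rcases Finset.mem_insert.1 ht with rfl | ht
            · exact hιW
            · exact hWg ht
          · intro j hjW hj
            have h1 : j ∉ greedy G S k m := fun h => hj (Finset.mem_insert_of_mem h)
            have h2 : j ≠ ι := fun h => hj (h ▸ Finset.mem_insert_self _ _)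
            have h3 := hWge j hjW h1
            have h4 : (j : ℕ) ≠ m := fun h => h2 (Fin.ext h)
            omega
        · obtain ⟨D, hD, hDcard, hfeas⟩ := Aux2.crux hTree r hsub hdeg rt hrtmem hrtmin
            pos hposinj hpost hord (i := ι) (W := W) hWf hWg
            (fun j hjW hjg => hWge j hjW hjg) hιW hacc
          have hDW : D ⊆ W := hD.trans Finset.sdiff_subset
          have hgD : Disjoint D (greedy G S k m) := by
            refine Finset.disjoint_left.2 ?_
            intro t htD htg
            exact (Finset.mem_sdiff.1 (hD htD)).2 htg
          have hιWD : ι ∉ W \ D := fun h => hιW (Finset.mem_sdiff.1 h).1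
          refine ⟨insert ι (W \ D), hfeas, ?_, ?_, ?_⟩
          · intro t ht
            rcases Finset.mem_insert.1 ht with rfl | ht
            · exact Finset.mem_insert_self _ _
            · refine Finset.mem_insert_of_mem (Finset.mem_sdiff.2 ⟨hWg ht, ?_⟩)
              exact fun hd => Finset.disjoint_left.1 hgD hd ht
          · intro j hj hjn
            have h2 : j ≠ ι := fun h => hjn (h ▸ Finset.mem_insert_self _ _)
            rcases Finset.mem_insert.1 hj with rfl | hj
            · exact absurd rfl h2
            · have h1 : j ∉ greedy G S k m := fun h => hjn (Finset.mem_insert_of_mem h)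
              have h3 := hWge j (Finset.mem_sdiff.1 hj).1 h1
              have h4 : (j : ℕ) ≠ m := fun h => h2 (Fin.ext h)
              omega
          · have hc1 : (insert ι (W \ D)).card = (W \ D).card + 1 :=
              Finset.card_insert_of_notMem hιWD
            have hc2 : (W \ D).card = W.card - D.card := Finset.card_sdiff_of_subset hDW
            have hc3 : D.card ≤ W.card := Finset.card_le_card hDW
            omega
      · rw [hgm, if_neg hacc]
        have hιW : ι ∉ W := by
          intro hιW
          apply hacc
          refine Aux2.feasible_subset ?_ hWf
          intro t ht
          rcases Finset.mem_insert.1 ht with rfl | ht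
          · exact hιW
          · exact hWg ht
        refine ⟨W, hWf, hWg, ?_, hWcard⟩
        intro j hjW hjg
        have h3 := hWge j hjW hjg
        have h4 : (j : ℕ) ≠ m := fun h => hιW (by rwa [show j = ι from Fin.ext h] at hjW)
        omega
  obtain ⟨W, hWf, hWg, hWge, hWcard⟩ := key n le_rfl
  have hWsub : W ⊆ greedy G S k n := by
    intro j hj
    by_contra h
    have := hWge j hj h
    have := j.isLt
    omega
  have := Finset.card_le_card hWsub
  omega
end

section
/- For every subset S ⊆ V(G): S is an independent set of G if and only if, for every object o of T other than the center c (i.e., for every leaf of T and every edge of T), the number of vertices v ∈ S with o ∈ T_v is at most 1. Equivalently, S is independent in G if and only if the sub-stars T_v, v ∈ S, induce load at most 1 on every object of T except its center; in particular, G has an independent set of size s if and only if there are s vertices whose sub-stars form a feasible solution for the capacities k_c = ∞ and k_o = 1 for every other object o. -/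
/-!
Given a finite simple graph `G` with at least one edge, construct the star `T`
with center `c` and one leaf `ℓ_e` for every edge `e ∈ E(G)`. For every vertex
`v` of `G`, the sub-star `T_v` consists of the center together with the leaves
`ℓ_e` (and the edges `c ℓ_e`) for the edges `e` incident to `v`. Objects of `T`
are its vertices and edges; the load induced by a set `S ⊆ V(G)` on an object
`o` is the number of `v ∈ S` whose sub-star contains `o`.
-/

open Finset

attribute [local instance] Classical.propDecidable

variable {V : Type} [Fintype V] [DecidableEq V]

/-- Vertex type of the star `T`: the center (`Sum.inl ()`) and one leaf per edge of `G`. -/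
abbrev StarV (G : SimpleGraph V) := Unit ⊕ {e : Sym2 V // e ∈ G.edgeSet}

/-- The center of the star. -/
def starCenter (G : SimpleGraph V) : StarV G := Sum.inl ()

/-- The star `T`: the center is adjacent to every leaf. -/
def starT (G : SimpleGraph V) : SimpleGraph (StarV G) where
  Adj a b := a ≠ b ∧ (a = Sum.inl () ∨ b = Sum.inl ())
  symm := by
    constructor
    intro a b h
    exact ⟨h.1.symm, h.2.symm⟩
  loopless := by
    constructor
    intro a h
    exact h.1 rfl

/-- The vertex set of the sub-star `T_v`: the center together with the leaves `ℓ_e`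
for the edges `e` of `G` incident to `v`. -/
def substar (G : SimpleGraph V) (v : V) : Set (StarV G) :=
  {w | w = starCenter G ∨ ∃ e : {e : Sym2 V // e ∈ G.edgeSet}, w = Sum.inr e ∧ v ∈ e.val}

/-- The sub-star `T_v` contains the object `o` of the star `T` (a vertex or an edge). -/
def SubstarContains (G : SimpleGraph V) (v : V) : StarV G ⊕ Sym2 (StarV G) → Prop
  | Sum.inl w => w ∈ substar G v
  | Sum.inr f => f ∈ (starT G).edgeSet ∧ ∀ x ∈ f, x ∈ substar G v


lemma helper_edge (G : SimpleGraph V) (hE : ∃ u v : V, G.Adj u v)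
    (o : StarV G ⊕ Sym2 (StarV G)) (ho : o ≠ Sum.inl (starCenter G)) :
    ∃ e : {e : Sym2 V // e ∈ G.edgeSet}, ∀ v, SubstarContains G v o → v ∈ e.val := by
  obtain ⟨a, b, hab⟩ := hE
  match o with
  | Sum.inl (Sum.inl ()) => exact absurd rfl ho
  | Sum.inl (Sum.inr e) =>
    refine ⟨e, fun v hv => ?_⟩
    rcases hv with h | ⟨e', he', hve'⟩
    · simp [starCenter] at h
    · obtain rfl : e = e' := Sum.inr.inj he'
      exact hve'
  | Sum.inr f =>
    by_cases hf : ∃ e : {e : Sym2 V // e ∈ G.edgeSet}, (Sum.inr e : StarV G) ∈ f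
    · obtain ⟨e, he⟩ := hf
      refine ⟨e, fun v hv => ?_⟩
      rcases hv.2 _ he with h | ⟨e', he', hve'⟩
      · simp [starCenter] at h
      · obtain rfl : e = e' := Sum.inr.inj he'
        exact hve'
    · refine ⟨⟨s(a,b), hab⟩, fun v hv => ?_⟩
      exfalso
      induction f using Sym2.ind with
      | _ x y =>
        have hadj : (starT G).Adj x y := hv.1
        rcases x with _ | e
        · rcases y with _ | e
          · exact hadj.1 rfl
          · exact hf ⟨e, Sym2.mem_mk_right _ _⟩
        · exact hf ⟨e, Sym2.mem_mk_left _ _⟩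

lemma main_iff (G : SimpleGraph V) (hE : ∃ u v : V, G.Adj u v) (S : Finset V) :
    ((∀ u ∈ S, ∀ w ∈ S, ¬ G.Adj u w) ↔
      ∀ o : StarV G ⊕ Sym2 (StarV G), o ≠ Sum.inl (starCenter G) →
        (S.filter fun v => SubstarContains G v o).card ≤ 1) := by
  constructor
  · intro hind o ho
    obtain ⟨e, he⟩ := helper_edge G hE o ho
    rw [Finset.card_le_one]
    intro u hu w hw
    simp only [Finset.mem_filter] at hu hw
    by_contra huw
    have h1 := he u hu.2
    have h2 := he w hw.2
    have hev : e.val = s(u,w) := (Sym2.mem_and_mem_iff huw).mp ⟨h1, h2⟩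
    exact hind u hu.1 w hw.1 (by rw [← SimpleGraph.mem_edgeSet, ← hev]; exact e.2)
  · intro h u hu w hw hadj
    have huw := G.ne_of_adj hadj
    have he : s(u,w) ∈ G.edgeSet := hadj
    set o : StarV G ⊕ Sym2 (StarV G) := Sum.inl (Sum.inr ⟨s(u,w), he⟩) with ho_def
    have ho : o ≠ Sum.inl (starCenter G) := by simp [ho_def, starCenter]
    have hcard := h o ho
    have hu' : u ∈ S.filter (fun v => SubstarContains G v o) :=
      Finset.mem_filter.mpr ⟨hu, Or.inr ⟨⟨s(u,w), he⟩, rfl, Sym2.mem_mk_left _ _⟩⟩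
    have hw' : w ∈ S.filter (fun v => SubstarContains G v o) :=
      Finset.mem_filter.mpr ⟨hw, Or.inr ⟨⟨s(u,w), he⟩, rfl, Sym2.mem_mk_right _ _⟩⟩
    have := Finset.one_lt_card.mpr ⟨u, hu', w, hw', huw⟩
    omega

/-- **Independent sets and feasible sub-star families.** A set `S ⊆ V(G)` is
independent in `G` iff the sub-stars `T_v`, `v ∈ S`, induce load at most 1 on every
object of the star `T` other than its center. In particular `G` has an independent
set of size `s` iff there are `s` vertices whose sub-stars form a feasible solution
for the capacities `k_c = ∞` and `k_o = 1` for every other object `o`. -/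
theorem statement5 (G : SimpleGraph V) (hE : ∃ u v : V, G.Adj u v) :
    (∀ S : Finset V,
      ((∀ u ∈ S, ∀ w ∈ S, ¬ G.Adj u w) ↔
        ∀ o : StarV G ⊕ Sym2 (StarV G), o ≠ Sum.inl (starCenter G) →
          (S.filter fun v => SubstarContains G v o).card ≤ 1)) ∧
    (∀ s : ℕ,
      (∃ S : Finset V, S.card = s ∧ ∀ u ∈ S, ∀ w ∈ S, ¬ G.Adj u w) ↔
      (∃ S : Finset V, S.card = s ∧
        ∀ o : StarV G ⊕ Sym2 (StarV G), o ≠ Sum.inl (starCenter G) →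
          (S.filter fun v => SubstarContains G v o).card ≤ 1)) := by
  refine ⟨main_iff G hE, fun s => ?_⟩
  constructor
  · rintro ⟨S, hS, hind⟩
    exact ⟨S, hS, (main_iff G hE S).mp hind⟩
  · rintro ⟨S, hS, hload⟩
    exact ⟨S, hS, (main_iff G hE S).mpr hload⟩
end

section
/- Let i ∈ {0, 1, …, n} and suppose leaves(T_j) = 1 for every j ≤ i (the first i subtrees in the processing order are directed paths of the rooted tree T). Then there exists a feasible subset S ⊆ 𝒯 with |S| = |OPT| such that S ∩ 𝒯_i = ALG_i and S \ 𝒯_i ⊆ OPT; in other words, there is an optimal feasible solution that contains exactly the subtrees chosen by the greedy algorithm among the first i subtrees. -/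
/-!
Setting: `G` is a finite tree rooted at `r`. A family `S : Fin n → Finset V` of
vertex sets of subtrees (connected subgraphs) of `G` is given; since connected
subgraphs of a tree are induced, a subtree is faithfully represented by its
vertex set. An *object* of the tree is a vertex or an edge. Capacities are
given by `k`, loads count the subtrees containing an object, feasibility means
no object is overloaded. The subtrees are indexed so that their roots appear
in nondecreasing order along some post-order (bottom-up) traversal of the tree,
which is encoded by an injective numbering `pos` of the vertices such that
descendants of any vertex `v` appear (contiguously) before `v`.
-/

open Finset

attribute [local instance] Classical.propDecidable

/-! ### Auxiliary tree lemmas -/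

section TreeLemmas
variable {V : Type} {G : SimpleGraph V}

lemma isAnc_self (r v : V) : IsAnc G r v v := by
  simp [IsAnc, SimpleGraph.dist_self]

lemma isAnc_trans (hc : G.Connected) {r u v w : V}
    (h1 : IsAnc G r v u) (h2 : IsAnc G r w v) : IsAnc G r w u := by
  have t1 : G.dist r u ≤ G.dist r w + G.dist w u := hc.dist_triangle
  have t2 : G.dist w u ≤ G.dist w v + G.dist v u := hc.dist_triangle
  unfold IsAnc at *
  omega

lemma isAnc_antisymm (hc : G.Connected) {r u v : V}
    (h1 : IsAnc G r v u) (h2 : IsAnc G r u v) : u = v := by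
  have hcomm : G.dist u v = G.dist v u := SimpleGraph.dist_comm
  have : G.dist u v = 0 := by unfold IsAnc at *; omega
  exact (hc.dist_eq_zero_iff).mp this

lemma path_length_eq_dist (hT : G.IsTree) {a b : V} (p : G.Walk a b) (hp : p.IsPath) :
    p.length = G.dist a b := by
  obtain ⟨q, hq, hlen⟩ := hT.isConnected.exists_path_of_dist a b
  have h2 : (⟨p, hp⟩ : G.Path a b) = ⟨q, hq⟩ := hT.IsAcyclic.path_unique _ _
  have hpq : p = q := congrArg Subtype.val h2
  rw [hpq]; exact hlen

lemma mem_path_of_dist [DecidableEq V] (hT : G.IsTree) {a b v : V}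
    (h : G.dist a v + G.dist v b = G.dist a b) (p : G.Walk a b) (hp : p.IsPath) :
    v ∈ p.support := by
  obtain ⟨p1, hp1, hl1⟩ := hT.isConnected.exists_path_of_dist a v
  obtain ⟨p2, hp2, hl2⟩ := hT.isConnected.exists_path_of_dist v b
  have hWpath : (p1.append p2).IsPath := by
    rw [SimpleGraph.Walk.isPath_def, SimpleGraph.Walk.support_append]
    refine List.Nodup.append hp1.support_nodup (hp2.support_nodup.tail) ?_
    intro x hx1 hx2
    have hx2' : x ∈ p2.support := List.mem_of_mem_tail hx2
    have hxv : v = x := by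
      have hs1 := congrArg SimpleGraph.Walk.length (p1.take_spec hx1)
      have hs2 := congrArg SimpleGraph.Walk.length (p2.take_spec hx2')
      rw [SimpleGraph.Walk.length_append] at hs1 hs2
      have d1 : G.dist a x ≤ (p1.takeUntil x hx1).length := SimpleGraph.dist_le _
      have d2 : G.dist x b ≤ (p2.dropUntil x hx2').length := SimpleGraph.dist_le _
      have tri : G.dist a b ≤ G.dist a x + G.dist x b := hT.isConnected.dist_triangle
      have ht2 : (p2.takeUntil x hx2').length = 0 := by omega
      exact SimpleGraph.Walk.eq_of_length_eq_zero ht2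
    subst hxv
    have := hp2.support_nodup
    rw [p2.support_eq_cons] at this
    exact (List.nodup_cons.mp this).1 hx2
  have hvW : v ∈ (p1.append p2).support := by
    rw [SimpleGraph.Walk.mem_support_append_iff]
    exact Or.inl p1.end_mem_support
  have h2 : (⟨p, hp⟩ : G.Path a b) = ⟨p1.append p2, hWpath⟩ := hT.IsAcyclic.path_unique _ _
  have hpq : p = p1.append p2 := congrArg Subtype.val h2
  rw [hpq]; exact hvW

lemma isAnc_of_isAnc_le [DecidableEq V] (hT : G.IsTree) {r a b u : V}
    (ha : IsAnc G r a u) (hb : IsAnc G r b u)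
    (hle : G.dist r a ≤ G.dist r b) : IsAnc G r a b := by
  obtain ⟨P, hP, hPl⟩ := hT.isConnected.exists_path_of_dist r u
  have hamem : a ∈ P.support := mem_path_of_dist hT (by unfold IsAnc at ha; omega) P hP
  have hbmem : b ∈ P.support := mem_path_of_dist hT (by unfold IsAnc at hb; omega) P hP
  have hQ1 : (P.takeUntil a hamem).IsPath := hP.takeUntil hamem
  have hQ2 : (P.dropUntil a hamem).IsPath := hP.dropUntil hamem
  have hbmem' : b ∈ (P.takeUntil a hamem).support ∨ b ∈ (P.dropUntil a hamem).support := by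
    rw [← SimpleGraph.Walk.mem_support_append_iff, P.take_spec hamem]; exact hbmem
  rcases hbmem' with hb1 | hb2
  · have ht : ((P.takeUntil a hamem).takeUntil b hb1).length = G.dist r b :=
      path_length_eq_dist hT _ (hQ1.takeUntil hb1)
    have hd : ((P.takeUntil a hamem).dropUntil b hb1).length = G.dist b a :=
      path_length_eq_dist hT _ (hQ1.dropUntil hb1)
    have hsum := congrArg SimpleGraph.Walk.length ((P.takeUntil a hamem).take_spec hb1)
    rw [SimpleGraph.Walk.length_append] at hsum
    have hQ1l : (P.takeUntil a hamem).length = G.dist r a := path_length_eq_dist hT _ hQ1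
    have hba : G.dist b a = 0 := by omega
    have : b = a := (hT.isConnected.dist_eq_zero_iff).mp hba
    subst this
    exact isAnc_self r b
  · have ht : ((P.dropUntil a hamem).takeUntil b hb2).length = G.dist a b :=
      path_length_eq_dist hT _ (hQ2.takeUntil hb2)
    have hd : ((P.dropUntil a hamem).dropUntil b hb2).length = G.dist b u :=
      path_length_eq_dist hT _ (hQ2.dropUntil hb2)
    have hsum := congrArg SimpleGraph.Walk.length ((P.dropUntil a hamem).take_spec hb2)
    rw [SimpleGraph.Walk.length_append] at hsum
    have hQ2l : (P.dropUntil a hamem).length = G.dist a u := path_length_eq_dist hT _ hQ2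
    have tri : G.dist r b ≤ G.dist r a + G.dist a b := hT.isConnected.dist_triangle
    unfold IsAnc at *
    omega

lemma adj_dist_ne [DecidableEq V] (hT : G.IsTree) {r x y : V} (h : G.Adj x y) :
    G.dist r x ≠ G.dist r y := by
  intro he
  obtain ⟨P, hP, hPl⟩ := hT.isConnected.exists_path_of_dist r x
  by_cases hy : y ∈ P.support
  · have h1 : (P.takeUntil y hy).length = G.dist r y := path_length_eq_dist hT _ (hP.takeUntil hy)
    have h2 : (P.dropUntil y hy).length = G.dist y x := path_length_eq_dist hT _ (hP.dropUntil hy)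
    have hsum := congrArg SimpleGraph.Walk.length (P.take_spec hy)
    rw [SimpleGraph.Walk.length_append] at hsum
    have hyx : G.dist y x = 0 := by omega
    exact h.ne' ((hT.isConnected.dist_eq_zero_iff).mp hyx)
  · have hpath : (P.concat h).IsPath := by
      rw [SimpleGraph.Walk.isPath_def, SimpleGraph.Walk.support_concat]
      refine List.Nodup.append hP.support_nodup (List.nodup_singleton y) ?_
      intro z hz1 hz2
      rw [List.mem_singleton] at hz2
      subst hz2; exact hy hz1
    have := path_length_eq_dist hT _ hpath
    rw [SimpleGraph.Walk.length_concat] at this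
    omega

lemma walk_anc [DecidableEq V] (hT : G.IsTree) {r rt : V} :
    ∀ {x y : V} (W : G.Walk x y),
    (∀ w ∈ W.support, G.dist r rt ≤ G.dist r w) → IsAnc G r rt x → IsAnc G r rt y := by
  intro x y W
  induction W with
  | nil => exact fun _ hx => hx
  | @cons u v w h W ih =>
    intro hmin hx
    have hne := adj_dist_ne hT (r := r) h
    have hd : G.dist u v = 1 := (SimpleGraph.dist_eq_one_iff_adj).mpr h
    have hd' : G.dist v u = 1 := by rw [SimpleGraph.dist_comm]; exact hd
    have t1 : G.dist r v ≤ G.dist r u + G.dist u v := hT.isConnected.dist_triangle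
    have t2 : G.dist r u ≤ G.dist r v + G.dist v u := hT.isConnected.dist_triangle
    have hv : IsAnc G r rt v := by
      rcases (show G.dist r v = G.dist r u + 1 ∨ G.dist r u = G.dist r v + 1 by omega) with hc | hc
      · exact isAnc_trans hT.isConnected (show IsAnc G r u v by unfold IsAnc; omega) hx
      · exact isAnc_of_isAnc_le hT hx (show IsAnc G r v u by unfold IsAnc; omega)
          (hmin v (by simp))
    exact ih (fun z hz => hmin z (by simp [hz])) hv

lemma exists_path_in (s : Finset V) (hs : (G.induce (s : Set V)).Connected) {a b : V}
    (ha : a ∈ s) (hb : b ∈ s) :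
    ∃ p : G.Walk a b, p.IsPath ∧ ∀ x ∈ p.support, x ∈ s := by
  obtain ⟨w⟩ := hs.preconnected ⟨a, by exact_mod_cast ha⟩ ⟨b, by exact_mod_cast hb⟩
  let w' := w.map (SimpleGraph.Embedding.induce (s : Set V)).toHom
  refine ⟨w'.bypass, w'.bypass_isPath, fun x hx => ?_⟩
  have hx' := w'.support_bypass_subset hx
  rw [SimpleGraph.Walk.support_map] at hx'
  obtain ⟨⟨x', hx''⟩, _, rfl⟩ := List.mem_map.mp hx'
  exact_mod_cast hx''

lemma root_anc [DecidableEq V] (hT : G.IsTree) {s : Finset V}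
    (hs : (G.induce (s : Set V)).Connected) {r rt : V}
    (hmem : rt ∈ s) (hmin : ∀ v ∈ s, G.dist r rt ≤ G.dist r v) :
    ∀ v ∈ s, IsAnc G r rt v := by
  intro v hv
  obtain ⟨p, hp, hsub⟩ := exists_path_in s hs hmem hv
  exact walk_anc hT p (fun w hw => hmin w (hsub w hw)) (isAnc_self r rt)

lemma mem_of_between [DecidableEq V] (hT : G.IsTree) {s : Finset V}
    (hs : (G.induce (s : Set V)).Connected) {r a b v : V}
    (ha : a ∈ s) (hb : b ∈ s) (hav : IsAnc G r a v) (hvb : IsAnc G r v b) :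
    v ∈ s := by
  obtain ⟨p, hp, hmem⟩ := exists_path_in s hs ha hb
  refine hmem v (mem_path_of_dist hT ?_ p hp)
  have t1 : G.dist r b ≤ G.dist r a + G.dist a b := hT.isConnected.dist_triangle
  have t2 : G.dist a b ≤ G.dist a v + G.dist v b := hT.isConnected.dist_triangle
  unfold IsAnc at hav hvb
  omega

lemma chain_of_one_leaf [DecidableEq V] (hT : G.IsTree) {s : Finset V}
    (hs : (G.induce (s : Set V)).Connected) {r rt : V}
    (hmem : rt ∈ s) (hmin : ∀ v ∈ s, G.dist r rt ≤ G.dist r v)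
    (hleaf : leavesCnt G s rt = 1) :
    ∀ u ∈ s, ∀ v ∈ s, IsAnc G r u v ∨ IsAnc G r v u := by
  intro u hu v hv
  by_contra hcon
  push_neg at hcon
  obtain ⟨h1, h2⟩ := hcon
  have hanc := root_anc hT hs hmem hmin
  have helper : ∀ w ∈ s, ∃ l ∈ s, IsAnc G r w l ∧
      (s.filter fun x => G.Adj l x).card ≤ 1 := by
    intro w hw
    have hne : (s.filter fun z => IsAnc G r w z).Nonempty :=
      ⟨w, Finset.mem_filter.mpr ⟨hw, isAnc_self r w⟩⟩
    obtain ⟨l, hl, hmax⟩ := Finset.exists_max_image _ (G.dist r) hne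
    obtain ⟨hls, hlanc⟩ := Finset.mem_filter.mp hl
    refine ⟨l, hls, hlanc, ?_⟩
    have hpar : ∀ y ∈ s.filter (fun x => G.Adj l x), IsAnc G r y l ∧
        G.dist r l = G.dist r y + 1 := by
      intro y hy
      obtain ⟨hys, hadj⟩ := Finset.mem_filter.mp hy
      have hne' := adj_dist_ne hT (r := r) hadj
      have hd : G.dist l y = 1 := (SimpleGraph.dist_eq_one_iff_adj).mpr hadj
      have hd' : G.dist y l = 1 := by rw [SimpleGraph.dist_comm]; exact hd
      have t1 : G.dist r y ≤ G.dist r l + G.dist l y := hT.isConnected.dist_triangle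
      have t2 : G.dist r l ≤ G.dist r y + G.dist y l := hT.isConnected.dist_triangle
      rcases (show G.dist r y = G.dist r l + 1 ∨ G.dist r l = G.dist r y + 1 by omega) with hc | hc
      · exfalso
        have hly : IsAnc G r l y := by unfold IsAnc; omega
        have hwy : IsAnc G r w y := isAnc_trans hT.isConnected hly hlanc
        have := hmax y (Finset.mem_filter.mpr ⟨hys, hwy⟩)
        omega
      · exact ⟨by unfold IsAnc; omega, hc⟩
    rw [Finset.card_le_one]
    intro y1 hy1 y2 hy2
    obtain ⟨ha1, he1⟩ := hpar y1 hy1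
    obtain ⟨ha2, he2⟩ := hpar y2 hy2
    have c1 : IsAnc G r y1 y2 := isAnc_of_isAnc_le hT ha1 ha2 (by omega)
    have c2 : IsAnc G r y2 y1 := isAnc_of_isAnc_le hT ha2 ha1 (by omega)
    exact (isAnc_antisymm hT.isConnected c1 c2).symm
  obtain ⟨lu, hlus, hluanc, hlucard⟩ := helper u hu
  obtain ⟨lv, hlvs, hlvanc, hlvcard⟩ := helper v hv
  have hlune : lu ≠ rt := by
    intro he
    have h3 : IsAnc G r rt u := hanc u hu
    have h4 : IsAnc G r u rt := he ▸ hluanc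
    have : rt = u := isAnc_antisymm hT.isConnected h4 h3
    exact h1 (this ▸ hanc v hv)
  have hlvne : lv ≠ rt := by
    intro he
    have h3 : IsAnc G r rt v := hanc v hv
    have h4 : IsAnc G r v rt := he ▸ hlvanc
    have : rt = v := isAnc_antisymm hT.isConnected h4 h3
    exact h2 (this ▸ hanc u hu)
  have hlulv : lu ≠ lv := by
    intro he
    subst he
    rcases le_total (G.dist r u) (G.dist r v) with hle | hle
    · exact h1 (isAnc_of_isAnc_le hT hluanc hlvanc hle)
    · exact h2 (isAnc_of_isAnc_le hT hlvanc hluanc hle)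
  have hmem1 : lu ∈ s.filter fun x => x ≠ rt ∧ (s.filter fun z => G.Adj x z).card ≤ 1 :=
    Finset.mem_filter.mpr ⟨hlus, hlune, hlucard⟩
  have hmem2 : lv ∈ s.filter fun x => x ≠ rt ∧ (s.filter fun z => G.Adj x z).card ≤ 1 :=
    Finset.mem_filter.mpr ⟨hlvs, hlvne, hlvcard⟩
  have : 1 < leavesCnt G s rt := by
    rw [leavesCnt]
    exact Finset.one_lt_card.mpr ⟨lu, hmem1, lv, hmem2, hlulv⟩
  omega

end TreeLemmas

/-! ### Objects and depth -/

/-- depth of an object -/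
noncomputable def odepth {V : Type} (G : SimpleGraph V) (r : V) : Object V → ℕ
  | Sum.inl v => 2 * G.dist r v
  | Sum.inr e => Sym2.lift ⟨fun x y => G.dist r x + G.dist r y, fun x y => add_comm _ _⟩ e

/-- `x` is a vertex of the object `o` -/
def OVert {V : Type} (o : Object V) (x : V) : Prop :=
  match o with
  | Sum.inl v => x = v
  | Sum.inr e => x ∈ e

section ObjLemmas
variable {V : Type} {G : SimpleGraph V}

lemma overt_mem {s : Finset V} {o : Object V} {x : V}
    (hc : ContainsObj G s o) (hx : OVert o x) : x ∈ s := by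
  cases o with
  | inl v => cases hx; exact hc
  | inr e => exact hc.2 x hx

lemma exists_bot (r : V) (o : Object V) :
    ∃ b, OVert o b ∧ odepth G r o ≤ 2 * G.dist r b := by
  cases o with
  | inl v => exact ⟨v, rfl, le_of_eq rfl⟩
  | inr e =>
    induction e using Sym2.ind with
    | _ x y =>
      rcases le_total (G.dist r x) (G.dist r y) with h | h
      · exact ⟨y, Sym2.mem_mk_right x y, by simp [odepth]; omega⟩
      · exact ⟨x, Sym2.mem_mk_left x y, by simp [odepth]; omega⟩

lemma overt_depth (hT : G.IsTree) (r : V) {s : Finset V} {p : Object V} {x : V}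
    (hc : ContainsObj G s p) (hx : OVert p x) : 2 * G.dist r x ≤ odepth G r p + 1 := by
  cases p with
  | inl v => cases hx; simp [odepth]
  | inr e =>
    induction e using Sym2.ind with
    | _ a b =>
      have hadj : G.Adj a b := hc.1
      rcases Sym2.mem_iff.mp hx with rfl | rfl
      · have hd : G.dist b x = 1 := (SimpleGraph.dist_eq_one_iff_adj).mpr hadj.symm
        have t : G.dist r x ≤ G.dist r b + G.dist b x := hT.isConnected.dist_triangle
        simp [odepth]; omega
      · have hd : G.dist a x = 1 := (SimpleGraph.dist_eq_one_iff_adj).mpr hadj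
        have t : G.dist r x ≤ G.dist r a + G.dist a x := hT.isConnected.dist_triangle
        simp [odepth]; omega

lemma roots_anc [DecidableEq V] (hT : G.IsTree) {sa sj : Finset V}
    (hca : (G.induce (sa : Set V)).Connected) (hcj : (G.induce (sj : Set V)).Connected)
    {r ra rj : V} (hra : ra ∈ sa) (hrj : rj ∈ sj)
    (hmina : ∀ v ∈ sa, G.dist r ra ≤ G.dist r v) (hminj : ∀ v ∈ sj, G.dist r rj ≤ G.dist r v)
    {x : V} (hxa : x ∈ sa) (hxj : x ∈ sj)
    {pos : V → ℕ} (hposinj : Function.Injective pos)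
    (hpost : ∀ u v, IsAnc G r v u → pos u ≤ pos v)
    (hple : pos ra ≤ pos rj) : IsAnc G r rj ra := by
  have h1 : IsAnc G r ra x := root_anc hT hca hra hmina x hxa
  have h2 : IsAnc G r rj x := root_anc hT hcj hrj hminj x hxj
  rcases le_total (G.dist r ra) (G.dist r rj) with h | h
  · have hanc : IsAnc G r ra rj := isAnc_of_isAnc_le hT h1 h2 h
    have heq : ra = rj := hposinj (le_antisymm hple (hpost rj ra hanc))
    subst heq; exact isAnc_self r ra
  · exact isAnc_of_isAnc_le hT h2 h1 h

lemma key_exchange [DecidableEq V] (hT : G.IsTree) (r : V)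
    {sa sj : Finset V}
    (hca : (G.induce (sa : Set V)).Connected) (hcj : (G.induce (sj : Set V)).Connected)
    {ra rj : V} (hra : ra ∈ sa) (hrj : rj ∈ sj)
    (hmina : ∀ v ∈ sa, G.dist r ra ≤ G.dist r v) (hminj : ∀ v ∈ sj, G.dist r rj ≤ G.dist r v)
    (hanc : IsAnc G r rj ra)
    (hleaf : leavesCnt G sa ra = 1)
    {o p : Object V} (hoa : ContainsObj G sa o) (hoj : ContainsObj G sj o)
    (hpa : ContainsObj G sa p) (hdep : odepth G r p ≤ odepth G r o) :
    ContainsObj G sj p := by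
  obtain ⟨b, hbo, hbd⟩ := exists_bot (G := G) r o
  have hbsa : b ∈ sa := overt_mem hoa hbo
  have hbsj : b ∈ sj := overt_mem hoj hbo
  have chain := chain_of_one_leaf hT hca hra hmina hleaf
  have hstep : ∀ x, OVert p x → x ∈ sj := by
    intro x hx
    have hxsa : x ∈ sa := overt_mem hpa hx
    have hxd : 2 * G.dist r x ≤ odepth G r p + 1 := overt_depth hT r hpa hx
    have hxb : IsAnc G r x b := by
      rcases chain x hxsa b hbsa with h | h
      · exact h
      · by_cases hbx : b = x
        · subst hbx; exact isAnc_self r b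
        · exfalso
          have hh : G.dist r x = G.dist r b + G.dist b x := h
          have hpos : 0 < G.dist b x := hT.isConnected.pos_dist_of_ne hbx
          omega
    have hrjx : IsAnc G r rj x :=
      isAnc_trans hT.isConnected (root_anc hT hca hra hmina x hxsa) hanc
    exact mem_of_between hT hcj hrj hbsj hrjx hxb
  cases p with
  | inl v => exact hstep v rfl
  | inr e => exact ⟨hpa.1, fun x hx => hstep x hx⟩

end ObjLemmas

/-! ### Load and greedy lemmas -/

section LoadLemmas
variable {V : Type} {n : ℕ} {G : SimpleGraph V} {S : Fin n → Finset V} {k : Object V → ℕ}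

lemma load_mono {U U' : Finset (Fin n)} (h : U ⊆ U') (o : Object V) :
    load G S U o ≤ load G S U' o :=
  Finset.card_le_card (Finset.filter_subset_filter _ h)

lemma Feasible.subset' {U U' : Finset (Fin n)} (hU' : Feasible G S k U') (h : U ⊆ U') :
    Feasible G S k U :=
  fun o => le_trans (load_mono h o) (hU' o)

lemma load_insert {a : Fin n} {U : Finset (Fin n)} (ha : a ∉ U) (o : Object V) :
    load G S (insert a U) o =
      load G S U o + if ContainsObj G (S a) o then 1 else 0 := by
  unfold load
  rw [Finset.filter_insert]
  split_ifs with h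
  · rw [Finset.card_insert_of_notMem (fun hc => ha (Finset.mem_of_mem_filter _ hc))]
  · simp

lemma load_erase {a : Fin n} {U : Finset (Fin n)} {o : Object V} (ha : a ∈ U)
    (hc : ContainsObj G (S a) o) :
    load G S (U.erase a) o + 1 = load G S U o := by
  unfold load
  rw [Finset.filter_erase]
  exact Finset.card_erase_add_one (Finset.mem_filter.mpr ⟨ha, hc⟩)

lemma greedy_lt : ∀ m (j : Fin n), j ∈ greedy G S k m → (j : ℕ) < m := by
  intro m
  induction m with
  | zero => intro j hj; simp [greedy] at hj
  | succ m ih =>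
    intro j hj
    rw [greedy] at hj
    split_ifs at hj with h1 h2
    · rcases Finset.mem_insert.mp hj with rfl | hj'
      · simp
      · exact Nat.lt_succ_of_lt (ih j hj')
    · exact Nat.lt_succ_of_lt (ih j hj)
    · exact Nat.lt_succ_of_lt (ih j hj)

end LoadLemmas

/-- **Lemma.** If the first `i` subtrees in the processing order are directed paths
(each has exactly one leaf other than its root), then there is an optimal feasible
solution `Sq` with `Sq ∩ 𝒯_i = ALG_i` and `Sq \ 𝒯_i ⊆ OPT`; in particular there is an
optimal feasible solution containing exactly the subtrees chosen by the greedy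
algorithm among the first `i` subtrees. -/
theorem statement7
    {V : Type} [Fintype V] [DecidableEq V] (G : SimpleGraph V)
    (hTree : G.IsTree) (r : V)
    {n : ℕ} (S : Fin n → Finset V)
    -- each `S i` is (the vertex set of) a subtree, i.e. a connected subgraph of `G`
    (hsub : ∀ i, (G.induce (S i : Set V)).Connected)
    -- `rt i` is the vertex of the subtree `S i` closest to the root `r`
    (rt : Fin n → V) (hrtmem : ∀ i, rt i ∈ S i)
    (hrtmin : ∀ i, ∀ v ∈ S i, G.dist r (rt i) ≤ G.dist r v)
    -- `pos` is a post-order (bottom-up) traversal of the tree ...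
    (pos : V → ℕ) (hposinj : Function.Injective pos)
    (hpost : ∀ u v : V, IsAnc G r v u → pos u ≤ pos v)
    (hcontig : ∀ u x v : V, IsAnc G r v u → pos u ≤ pos x → pos x ≤ pos v → IsAnc G r v x)
    -- ... along which the roots of the subtrees appear in nondecreasing order
    (hord : ∀ i j : Fin n, i ≤ j → pos (rt i) ≤ pos (rt j))
    (k : Object V → ℕ)
    -- `OPT` is a feasible subset of maximum cardinality
    (OPT : Finset (Fin n)) (hOPTfeas : Feasible G S k OPT)
    (hOPTmax : ∀ U : Finset (Fin n), Feasible G S k U → U.card ≤ OPT.card)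
    -- `i ∈ {0, …, n}` and the first `i` subtrees are directed paths
    (i : ℕ) (hi : i ≤ n)
    (hpaths : ∀ j : Fin n, (j : ℕ) < i → leavesCnt G (S j) (rt j) = 1) :
    ∃ Sq : Finset (Fin n),
      Feasible G S k Sq ∧
      Sq.card = OPT.card ∧
      Sq ∩ firstIdx n i = greedy G S k i ∧
      Sq \ firstIdx n i ⊆ OPT := by
  revert hpaths
  revert hi
  induction i with
  | zero =>
    intro hi hpaths
    refine ⟨OPT, hOPTfeas, rfl, ?_, ?_⟩
    · have h0 : firstIdx n 0 = ∅ := by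
        ext j; simp [firstIdx]
      rw [h0]
      simp [greedy]
    · intro j hj; exact (Finset.mem_sdiff.mp hj).1
  | succ m ih =>
    intro hi hpaths
    have hm : m < n := lt_of_lt_of_le (Nat.lt_succ_self m) hi
    obtain ⟨Sq, hfeas, hcard, hint, hdiff⟩ :=
      ih (le_of_lt hm) (fun j hj => hpaths j (Nat.lt_succ_of_lt hj))
    set mf : Fin n := ⟨m, hm⟩ with hmf
    have hgm_sub : greedy G S k m ⊆ Sq := by
      rw [← hint]; exact Finset.inter_subset_left
    have hmg : mf ∉ greedy G S k m := fun hc => absurd (greedy_lt m mf hc) (by simp [hmf])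
    have hf1 : firstIdx n (m + 1) = insert mf (firstIdx n m) := by
      ext j
      simp only [firstIdx, Finset.mem_filter, Finset.mem_univ, true_and, Finset.mem_insert,
        Fin.ext_iff]
      constructor
      · intro hj
        rcases Nat.lt_succ_iff_lt_or_eq.mp hj with h | h
        · exact Or.inr h
        · exact Or.inl h
      · rintro (h | h)
        · simp only [hmf, Fin.ext_iff, Fin.val_mk] at h; omega
        · omega
    by_cases hfg : Feasible G S k (insert mf (greedy G S k m))
    · -- greedy takes mf
      have hgeq : greedy G S k (m + 1) = insert mf (greedy G S k m) := by
        rw [greedy, dif_pos hm, if_pos hfg]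
      by_cases hmS : mf ∈ Sq
      · -- mf already in Sq
        refine ⟨Sq, hfeas, hcard, ?_, ?_⟩
        · rw [hgeq, hf1, ← hint]
          ext q
          simp only [Finset.mem_inter, Finset.mem_insert]
          constructor
          · rintro ⟨h1, rfl | h2⟩
            · exact Or.inl rfl
            · exact Or.inr ⟨h1, h2⟩
          · rintro (rfl | ⟨h1, h2⟩)
            · exact ⟨hmS, Or.inl rfl⟩
            · exact ⟨h1, Or.inr h2⟩
        · intro j hj
          obtain ⟨hjS, hjn⟩ := Finset.mem_sdiff.mp hj
          refine hdiff (Finset.mem_sdiff.mpr ⟨hjS, fun hc => hjn ?_⟩)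
          rw [hf1]; exact Finset.mem_insert_of_mem hc
      · -- exchange argument
        have hinfeas : ¬ Feasible G S k (insert mf Sq) := by
          intro hfe
          have := hOPTmax _ hfe
          rw [Finset.card_insert_of_notMem hmS, hcard] at this
          omega
        set O : Finset (Object V) := Finset.univ.filter
          (fun q => ContainsObj G (S mf) q ∧ k q < load G S Sq q + 1) with hO
        have hOne : O.Nonempty := by
          rw [Feasible] at hinfeas; push_neg at hinfeas
          obtain ⟨q, hq⟩ := hinfeas
          rw [load_insert hmS] at hq
          by_cases hcq : ContainsObj G (S mf) q
          · exact ⟨q, Finset.mem_filter.mpr ⟨Finset.mem_univ _, hcq, by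
              rw [if_pos hcq] at hq; omega⟩⟩
          · rw [if_neg hcq] at hq
            exact absurd (hfeas q) (by omega)
        obtain ⟨o, hoO, homax⟩ := Finset.exists_max_image O (odepth G r) hOne
        obtain ⟨-, hco, hkl⟩ := Finset.mem_filter.mp hoO
        have hcardlt : ((greedy G S k m).filter fun j => ContainsObj G (S j) o).card <
            (Sq.filter fun j => ContainsObj G (S j) o).card := by
          have h1 : load G S (insert mf (greedy G S k m)) o ≤ k o := hfg o
          rw [load_insert hmg, if_pos hco] at h1
          unfold load at h1 hkl
          omega
        obtain ⟨j, hjA, hjB⟩ := Finset.not_subset.mp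
          (fun hsub => absurd (Finset.card_le_card hsub) (not_le.mpr hcardlt))
        obtain ⟨hjSq, hjo⟩ := Finset.mem_filter.mp hjA
        have hjg : j ∉ greedy G S k m := fun hc => hjB (Finset.mem_filter.mpr ⟨hc, hjo⟩)
        have hjmf : j ≠ mf := fun hc => hmS (hc ▸ hjSq)
        have hjfi : j ∉ firstIdx n m := fun hc => hjg (by
          rw [← hint]; exact Finset.mem_inter.mpr ⟨hjSq, hc⟩)
        have hjval : m ≤ (j : ℕ) := by
          by_contra hc
          exact hjfi (by simp only [firstIdx, Finset.mem_filter, Finset.mem_univ, true_and]; omega)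
        have hKEY : ∀ q ∈ O, ContainsObj G (S j) q := by
          intro q hq
          obtain ⟨-, hq1, hq2⟩ := Finset.mem_filter.mp hq
          obtain ⟨x, hxo, -⟩ := exists_bot (G := G) r o
          have hanc : IsAnc G r (rt j) (rt mf) :=
            roots_anc hTree (hsub mf) (hsub j) (hrtmem mf) (hrtmem j) (hrtmin mf) (hrtmin j)
              (overt_mem hco hxo) (overt_mem hjo hxo) hposinj hpost
              (hord mf j (by exact hjval))
          exact key_exchange hTree r (hsub mf) (hsub j) (hrtmem mf) (hrtmem j)
            (hrtmin mf) (hrtmin j) hanc (hpaths mf (by simp [hmf])) hco hjo hq1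
            (homax q hq)
        have hmfe : mf ∉ Sq.erase j := fun hc => hmS (Finset.mem_of_mem_erase hc)
        refine ⟨insert mf (Sq.erase j), ?_, ?_, ?_, ?_⟩
        · -- Feasible
          intro q
          rw [load_insert hmfe]
          by_cases hcq : ContainsObj G (S mf) q
          · rw [if_pos hcq]
            by_cases hover : k q < load G S Sq q + 1
            · have hqO : q ∈ O := Finset.mem_filter.mpr ⟨Finset.mem_univ _, hcq, hover⟩
              have hcj : ContainsObj G (S j) q := hKEY q hqO
              have he := load_erase hjSq hcj
              have := hfeas q
              omega
            · have : load G S (Sq.erase j) q ≤ load G S Sq q :=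
                load_mono (Finset.erase_subset _ _) q
              omega
          · rw [if_neg hcq]
            have : load G S (Sq.erase j) q ≤ load G S Sq q :=
              load_mono (Finset.erase_subset _ _) q
            have := hfeas q
            omega
        · -- cardinality
          rw [Finset.card_insert_of_notMem hmfe, Finset.card_erase_of_mem hjSq, ← hcard]
          have : 1 ≤ Sq.card := Finset.card_pos.mpr ⟨j, hjSq⟩
          omega
        · -- intersection
          rw [hgeq, hf1]
          ext q
          simp only [Finset.mem_inter, Finset.mem_insert, Finset.mem_erase]
          constructor
          · rintro ⟨h1, h2⟩
            rcases h1 with rfl | ⟨hne, hSq⟩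
            · exact Or.inl rfl
            · rcases h2 with rfl | h2
              · exact Or.inl rfl
              · right; rw [← hint]; exact Finset.mem_inter.mpr ⟨hSq, h2⟩
          · rintro (rfl | hq)
            · exact ⟨Or.inl rfl, Or.inl rfl⟩
            · have hq' : q ∈ Sq ∩ firstIdx n m := by rw [hint]; exact hq
              obtain ⟨hqs, hqf⟩ := Finset.mem_inter.mp hq'
              have hqj : q ≠ j := fun hc => hjfi (hc ▸ hqf)
              exact ⟨Or.inr ⟨hqj, hqs⟩, Or.inr hqf⟩
        · -- difference
          intro q hq
          obtain ⟨hq1, hq2⟩ := Finset.mem_sdiff.mp hq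
          rw [hf1] at hq2
          rcases Finset.mem_insert.mp hq1 with rfl | hq1'
          · exact absurd (Finset.mem_insert_self _ _) hq2
          · exact hdiff (Finset.mem_sdiff.mpr ⟨Finset.mem_of_mem_erase hq1',
              fun hc => hq2 (Finset.mem_insert_of_mem hc)⟩)
    · -- greedy rejects mf
      have hgeq : greedy G S k (m + 1) = greedy G S k m := by
        rw [greedy, dif_pos hm, if_neg hfg]
      have hmS : mf ∉ Sq := by
        intro hmem
        apply hfg
        apply hfeas.subset'
        intro j hj
        rcases Finset.mem_insert.mp hj with rfl | hj'
        · exact hmem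
        · exact hgm_sub hj'
      refine ⟨Sq, hfeas, hcard, ?_, ?_⟩
      · rw [hgeq, hf1, ← hint]
        ext q
        simp only [Finset.mem_inter, Finset.mem_insert]
        constructor
        · rintro ⟨h1, rfl | h2⟩
          · exact absurd h1 hmS
          · exact ⟨h1, h2⟩
        · rintro ⟨h1, h2⟩
          exact ⟨h1, Or.inr h2⟩
      · intro j hj
        obtain ⟨hjS, hjn⟩ := Finset.mem_sdiff.mp hj
        refine hdiff (Finset.mem_sdiff.mpr ⟨hjS, fun hc => hjn ?_⟩)
        rw [hf1]; exact Finset.mem_insert_of_mem hc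
end

section
/- Let P be a path of T with both endpoints at leaves of T that contains r as an internal vertex, and let v ≠ r be a vertex of T. Then the following are equivalent: (1) P contains the vertex v; (2) P contains the edge e_v; (3) P has exactly one endpoint in L_v. In particular, P cannot have both endpoints in L_v. -/
/-!
`G` is a finite tree rooted at `r`. For `v ≠ r`, the parent of `v` is its unique
neighbour on the path towards `r`, and `e_v` is the edge between `v` and its parent.
`L_v` is the set of leaves of the tree that are descendants of `v`, where "`v` is an
ancestor of `u`" is expressed by `dist r u = dist r v + dist v u` (i.e. `v` lies on
the unique `r`–`u` path). A vertex is an internal vertex of a path if it lies on the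
path and is not one of its endpoints.
-/

open Finset

attribute [local instance] Classical.propDecidable

/-- `L_v`: the set of leaves of the tree `G` that are descendants of `v`. -/
def leafDesc {V : Type} [Fintype V] [DecidableEq V] (G : SimpleGraph V) (r v : V) :
    Set V :=
  {ℓ | G.degree ℓ = 1 ∧ IsAnc G r v ℓ}

open SimpleGraph in
private lemma tree_len {V : Type} {G : SimpleGraph V} (hT : G.IsTree)
    {x y : V} (Q : G.Walk x y) (hQ : Q.IsPath) : Q.length = G.dist x y := by
  obtain ⟨Q', hQ', hlen⟩ := hT.isConnected.exists_path_of_dist x y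
  have h := hT.IsAcyclic.path_unique ⟨Q, hQ⟩ ⟨Q', hQ'⟩
  have hv : Q = Q' := congrArg Subtype.val h
  rw [hv, hlen]

open SimpleGraph in
private lemma tree_mem_support {V : Type} {G : SimpleGraph V} (hT : G.IsTree)
    {x y : V} (Q : G.Walk x y) (hQ : Q.IsPath) (v : V) :
    v ∈ Q.support ↔ G.dist x y = G.dist x v + G.dist v y := by
  constructor
  · intro h
    have h1 : G.dist x v ≤ (Q.takeUntil v h).length := G.dist_le _
    have h2 : G.dist v y ≤ (Q.dropUntil v h).length := G.dist_le _
    have hsum : (Q.takeUntil v h).length + (Q.dropUntil v h).length = Q.length := by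
      rw [← Walk.length_append, Q.take_spec h]
    have htri := hT.isConnected.dist_triangle (u := x) (v := v) (w := y)
    have hlen := tree_len hT Q hQ
    omega
  · intro h
    obtain ⟨W1, h1, l1⟩ := hT.isConnected.exists_path_of_dist x v
    obtain ⟨W2, h2, l2⟩ := hT.isConnected.exists_path_of_dist v y
    have hl : (W1.append W2).length = G.dist x y := by
      rw [Walk.length_append, l1, l2, h]
    have hpath := (W1.append W2).isPath_of_length_eq_dist hl
    have hQ' : Q = W1.append W2 :=
      congrArg Subtype.val (hT.IsAcyclic.path_unique ⟨Q, hQ⟩ ⟨W1.append W2, hpath⟩)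
    rw [hQ', Walk.mem_support_append_iff]
    exact Or.inl W1.end_mem_support

open SimpleGraph in
private lemma parent_unique {V : Type} {G : SimpleGraph V} (hT : G.IsTree) {r v p w : V}
    (hadj : G.Adj v p) (hp : G.dist r p + 1 = G.dist r v)
    (hadj' : G.Adj v w) (hw : G.dist r w + 1 = G.dist r v) : w = p := by
  obtain ⟨R1, h1, l1⟩ := hT.isConnected.exists_path_of_dist r p
  obtain ⟨R2, h2, l2⟩ := hT.isConnected.exists_path_of_dist r w
  have hl1 : (R1.concat hadj.symm).length = G.dist r v := by
    rw [Walk.length_concat, l1, hp]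
  have hl2 : (R2.concat hadj'.symm).length = G.dist r v := by
    rw [Walk.length_concat, l2, hw]
  have hp1 := (R1.concat hadj.symm).isPath_of_length_eq_dist hl1
  have hp2 := (R2.concat hadj'.symm).isPath_of_length_eq_dist hl2
  have heq : R1.concat hadj.symm = R2.concat hadj'.symm :=
    congrArg Subtype.val (hT.IsAcyclic.path_unique ⟨_, hp1⟩ ⟨_, hp2⟩)
  have hwv : s(w, v) ∈ (R1.concat hadj.symm).edges := by
    rw [heq, Walk.edges_concat, List.concat_eq_append, List.mem_append]
    exact Or.inr (by rw [List.mem_singleton, Sym2.eq_swap])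
  rw [Walk.edges_concat, List.concat_eq_append, List.mem_append] at hwv
  rcases hwv with hmem | hsing
  · exfalso
    have hvR1 : v ∈ R1.support := R1.snd_mem_support_of_mem_edges hmem
    have hnd := hp1.support_nodup
    rw [Walk.support_concat] at hnd
    have : (R1.support ++ [v]).Nodup := List.concat_eq_append (as := R1.support) (a := v) ▸ hnd
    rcases List.nodup_append.1 this with ⟨-, -, hdisj⟩
    exact hdisj v hvR1 v (List.mem_singleton.2 rfl) rfl
  · rw [List.mem_singleton, Sym2.eq_iff] at hsing
    rcases hsing with ⟨hwp, -⟩ | ⟨hwv', -⟩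
    · exact hwp
    · exact absurd hwv'.symm hadj'.ne

open SimpleGraph in
private lemma edge_mem {V : Type} {G : SimpleGraph V} (hT : G.IsTree) {r v p x : V}
    (hadj : G.Adj v p) (hp : G.dist r p + 1 = G.dist r v)
    (Q : G.Walk r x) (hQ : Q.IsPath) (hvQ : v ∈ Q.support) (hvr : v ≠ r) :
    s(v, p) ∈ Q.edges := by
  have hQ1path : (Q.takeUntil v hvQ).IsPath := hQ.takeUntil hvQ
  have hlen : (Q.takeUntil v hvQ).length = G.dist r v := tree_len hT _ hQ1path
  obtain ⟨w, hadj', R', hR⟩ := Walk.exists_eq_cons_of_ne hvr (Q.takeUntil v hvQ).reverse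
  have hRpath : (Q.takeUntil v hvQ).reverse.IsPath := hQ1path.reverse
  rw [hR] at hRpath
  have hR'path : R'.IsPath := hRpath.of_cons
  have hR'len : R'.length = G.dist w r := tree_len hT R' hR'path
  have hRlen : (Q.takeUntil v hvQ).reverse.length = G.dist r v := by
    rw [Walk.length_reverse, hlen]
  rw [hR, Walk.length_cons] at hRlen
  have hwdist : G.dist r w + 1 = G.dist r v := by
    have hcomm : G.dist r w = G.dist w r := SimpleGraph.dist_comm
    omega
  have hwp : w = p := parent_unique hT hadj hp hadj' hwdist
  subst hwp
  have hedge : s(v, w) ∈ (Q.takeUntil v hvQ).reverse.edges := by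
    rw [hR, Walk.edges_cons]
    exact List.mem_cons_self
  rw [Walk.edges_reverse, List.mem_reverse] at hedge
  exact Q.edges_takeUntil_subset hvQ hedge

/-- **Lemma.** Let `P` be a path of the tree with both endpoints at leaves that
contains the root `r` as an internal vertex, and let `v ≠ r`. Then the following are
equivalent: (1) `P` contains `v`; (2) `P` contains the edge `e_v` between `v` and its
parent; (3) `P` has exactly one endpoint in `L_v`. In particular `P` cannot have both
endpoints in `L_v`. -/
theorem statement9
    {V : Type} [Fintype V] [DecidableEq V]
    (G : SimpleGraph V) (hTree : G.IsTree) (r : V)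
    -- `P` is a path between the leaves `a` and `b` ...
    {a b : V} (P : G.Walk a b) (hP : P.IsPath)
    (ha : G.degree a = 1) (hb : G.degree b = 1)
    -- ... containing `r` as an internal vertex
    (hr : r ∈ P.support) (hra : r ≠ a) (hrb : r ≠ b)
    -- `v ≠ r`, and `p` is the parent of `v` (its neighbour closer to the root)
    (v : V) (hv : v ≠ r)
    (p : V) (hadj : G.Adj v p) (hp : G.dist r p + 1 = G.dist r v) :
    ((v ∈ P.support) ↔ s(v, p) ∈ P.edges) ∧
    ((v ∈ P.support) ↔
      ((a ∈ leafDesc G r v ∧ b ∉ leafDesc G r v) ∨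
       (b ∈ leafDesc G r v ∧ a ∉ leafDesc G r v))) ∧
    ¬(a ∈ leafDesc G r v ∧ b ∈ leafDesc G r v) := by
  classical
  set P1 := P.takeUntil r hr with hP1def
  set P2 := P.dropUntil r hr with hP2def
  have hP1p : P1.IsPath := hP.takeUntil hr
  have hP2p : P2.IsPath := hP.dropUntil hr
  have hspec : P1.append P2 = P := P.take_spec hr
  have hmem : ∀ u, u ∈ P.support ↔ u ∈ P1.support ∨ u ∈ P2.support := by
    intro u; rw [← hspec, SimpleGraph.Walk.mem_support_append_iff]
  have hint : ∀ u, u ∈ P1.support → u ∈ P2.support → u = r := by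
    intro u h1 h2
    by_contra hne
    have hnd : P.support.Nodup := hP.support_nodup
    rw [← hspec, SimpleGraph.Walk.support_append] at hnd
    have h2' : u ∈ P2.support.tail := by
      have := P2.support_eq_cons ▸ h2
      rcases List.mem_cons.1 this with h | h
      · exact absurd h hne
      · exact h
    rcases List.nodup_append.1 hnd with ⟨-, -, hdisj⟩
    exact hdisj u h1 u h2' rfl
  have key1 : (v ∈ P1.support) ↔ IsAnc G r v a := by
    have := tree_mem_support hTree P1.reverse hP1p.reverse v
    rw [SimpleGraph.Walk.support_reverse, List.mem_reverse] at this
    exact this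
  have key2 : (v ∈ P2.support) ↔ IsAnc G r v b := tree_mem_support hTree P2 hP2p v
  have la : a ∈ leafDesc G r v ↔ IsAnc G r v a := by
    simp [leafDesc, ha]
  have lb : b ∈ leafDesc G r v ↔ IsAnc G r v b := by
    simp [leafDesc, hb]
  have notboth : ¬(v ∈ P1.support ∧ v ∈ P2.support) := fun ⟨h1, h2⟩ => hv (hint v h1 h2)
  refine ⟨?_, ?_, ?_⟩
  · constructor
    · intro hvP
      rcases (hmem v).1 hvP with h1 | h2
      · have h1' : v ∈ P1.reverse.support := by
          rw [SimpleGraph.Walk.support_reverse, List.mem_reverse]; exact h1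
        have := edge_mem hTree hadj hp P1.reverse hP1p.reverse h1' hv
        rw [SimpleGraph.Walk.edges_reverse, List.mem_reverse] at this
        exact P.edges_takeUntil_subset hr this
      · exact P.edges_dropUntil_subset hr (edge_mem hTree hadj hp P2 hP2p h2 hv)
    · intro he
      exact P.fst_mem_support_of_mem_edges he
  · constructor
    · intro hvP
      rcases (hmem v).1 hvP with h1 | h2
      · exact Or.inl ⟨la.2 (key1.1 h1), fun hbL => notboth ⟨h1, key2.2 (lb.1 hbL)⟩⟩
      · exact Or.inr ⟨lb.2 (key2.1 h2), fun haL => notboth ⟨key1.2 (la.1 haL), h2⟩⟩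
    · rintro (⟨haL, -⟩ | ⟨hbL, -⟩)
      · exact (hmem v).2 (Or.inl (key1.2 (la.1 haL)))
      · exact (hmem v).2 (Or.inr (key2.2 (lb.1 hbL)))
  · rintro ⟨haL, hbL⟩
    exact notboth ⟨key1.2 (la.1 haL), key2.2 (lb.1 hbL)⟩
end
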